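/- arXiv:1204.3842 — 4 statements merged into one kernel-verified Lean document; each statement's English description precedes it below -/
import Mathlib

section
/- The number of assembly trees of the star graph $S_n = K_{1,n}$ (using the edge gluing rule) is $n!$. -/
/-- The family of labels of an assembly tree (edge gluing rule) for a graph `G`:
all singletons, the full vertex set, laminar, with each non-singleton member
split into two disjoint members joined by an edge of `G`; the cardinality
`2|V| - 1` forces the family to be exactly the node labels of a rooted binary
tree with `|V|` leaves. Two assembly trees are equal iff there is a
label-preserving isomorphism, iff they have the same label family. -/
def IsAssemblyFamily {V : Type*} [Fintype V] [DecidableEq V]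
    (G : SimpleGraph V) (F : Finset (Finset V)) : Prop :=
  (∀ v : V, {v} ∈ F) ∧
  (Finset.univ ∈ F) ∧
  (∀ U ∈ F, U.Nonempty) ∧
  (∀ U₁ ∈ F, ∀ U₂ ∈ F, U₁ ⊆ U₂ ∨ U₂ ⊆ U₁ ∨ Disjoint U₁ U₂) ∧
  (∀ U ∈ F, 2 ≤ U.card → ∃ U₁ ∈ F, ∃ U₂ ∈ F, Disjoint U₁ U₂ ∧ U₁ ∪ U₂ = U ∧
      ∃ v₁ ∈ U₁, ∃ v₂ ∈ U₂, G.Adj v₁ v₂) ∧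
  F.card = 2 * Fintype.card V - 1

/-- The number of assembly trees of `G` using the edge gluing rule. -/
noncomputable def assemblyTreeCount {V : Type*} [Fintype V] [DecidableEq V]
    (G : SimpleGraph V) : ℕ :=
  Nat.card {F : Finset (Finset V) // IsAssemblyFamily G F}


namespace AsmStar
open Finset

variable {n : ℕ}

/-- The chain set: center plus the first `k` leaves in the order `σ`. -/
def chainSet (σ : Equiv.Perm (Fin n)) (k : ℕ) : Finset (Fin 1 ⊕ Fin n) :=
  insert (Sum.inl 0) ((Finset.univ.filter (fun i : Fin n => (i : ℕ) < k)).image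
    (fun i => Sum.inr (σ i)))

lemma inl_mem_chainSet (σ : Equiv.Perm (Fin n)) (k : ℕ) :
    Sum.inl 0 ∈ chainSet σ k := mem_insert_self _ _

lemma mem_chainSet_iff {σ : Equiv.Perm (Fin n)} {k : ℕ} {v : Fin 1 ⊕ Fin n} :
    v ∈ chainSet σ k ↔ v = Sum.inl 0 ∨ ∃ x : Fin n, ((σ.symm x : Fin n) : ℕ) < k ∧ v = Sum.inr x := by
  simp only [chainSet, mem_insert, mem_image, mem_filter, mem_univ, true_and]
  constructor
  · rintro (h | ⟨i, hi, rfl⟩)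
    · exact Or.inl h
    · exact Or.inr ⟨σ i, by simpa using hi, rfl⟩
  · rintro (h | ⟨x, hx, rfl⟩)
    · exact Or.inl h
    · exact Or.inr ⟨σ.symm x, hx, by simp⟩

lemma chainSet_zero (σ : Equiv.Perm (Fin n)) : chainSet σ 0 = {Sum.inl 0} := by
  ext v; simp [mem_chainSet_iff]

lemma chainSet_succ (σ : Equiv.Perm (Fin n)) {k : ℕ} (hk : k < n) :
    chainSet σ (k + 1) = insert (Sum.inr (σ ⟨k, hk⟩)) (chainSet σ k) := by
  ext v
  simp only [mem_chainSet_iff, mem_insert]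
  constructor
  · rintro (h | ⟨x, hx, rfl⟩)
    · exact Or.inr (Or.inl h)
    · rcases Nat.lt_succ_iff_lt_or_eq.1 hx with h | h
      · exact Or.inr (Or.inr ⟨x, h, rfl⟩)
      · left
        congr 1
        have : σ.symm x = ⟨k, hk⟩ := Fin.ext h
        rw [← this]; simp
  · rintro (rfl | h | ⟨x, hx, rfl⟩)
    · exact Or.inr ⟨σ ⟨k, hk⟩, by simp [Nat.lt_succ_iff], rfl⟩
    · exact Or.inl h
    · exact Or.inr ⟨x, Nat.lt_succ_of_lt hx, rfl⟩

lemma chainSet_mono (σ : Equiv.Perm (Fin n)) {k l : ℕ} (h : k ≤ l) :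
    chainSet σ k ⊆ chainSet σ l := by
  intro v hv
  rw [mem_chainSet_iff] at hv ⊢
  rcases hv with h' | ⟨x, hx, rfl⟩
  · exact Or.inl h'
  · exact Or.inr ⟨x, hx.trans_le h, rfl⟩

lemma card_chainSet (σ : Equiv.Perm (Fin n)) {k : ℕ} (hk : k ≤ n) :
    (chainSet σ k).card = k + 1 := by
  induction k with
  | zero => simp [chainSet_zero]
  | succ m ih =>
    rw [chainSet_succ σ hk, card_insert_of_notMem, ih (le_of_lt hk)]
    rw [mem_chainSet_iff]
    rintro (h | ⟨x, hx, hx'⟩)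
    · exact absurd h (by simp)
    · have : σ ⟨m, hk⟩ = x := by exact Sum.inr.inj hx'
      rw [← this] at hx
      simp at hx

lemma chainSet_top (σ : Equiv.Perm (Fin n)) : chainSet σ n = Finset.univ := by
  apply Finset.eq_univ_of_card
  rw [card_chainSet σ le_rfl]
  simp [Fintype.card_sum]
  omega


/-- The assembly family associated to an ordering of the leaves. -/
def fam (σ : Equiv.Perm (Fin n)) : Finset (Finset (Fin 1 ⊕ Fin n)) :=
  (Finset.univ.image fun v : Fin 1 ⊕ Fin n => ({v} : Finset _)) ∪
    ((Finset.range n).image fun k => chainSet σ (k + 1))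

lemma mem_fam_iff {σ : Equiv.Perm (Fin n)} {U : Finset (Fin 1 ⊕ Fin n)} :
    U ∈ fam σ ↔ (∃ v, U = {v}) ∨ ∃ k < n, U = chainSet σ (k + 1) := by
  simp [fam, eq_comm]

lemma singleton_mem_fam (σ : Equiv.Perm (Fin n)) (v : Fin 1 ⊕ Fin n) :
    ({v} : Finset _) ∈ fam σ := mem_fam_iff.2 (Or.inl ⟨v, rfl⟩)

lemma chainSet_mem_fam (σ : Equiv.Perm (Fin n)) {k : ℕ} (hk : k ≤ n) :
    chainSet σ k ∈ fam σ := by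
  rcases Nat.eq_zero_or_pos k with rfl | hpos
  · rw [chainSet_zero]; exact singleton_mem_fam σ _
  · exact mem_fam_iff.2 (Or.inr ⟨k - 1, by omega, by rw [Nat.sub_add_cancel hpos]⟩)

lemma univ_mem_fam (σ : Equiv.Perm (Fin n)) : (Finset.univ : Finset (Fin 1 ⊕ Fin n)) ∈ fam σ := by
  rw [← chainSet_top σ]; exact chainSet_mem_fam σ le_rfl

lemma card_fam (σ : Equiv.Perm (Fin n)) : (fam σ).card = 2 * (n + 1) - 1 := by
  rw [fam, card_union_of_disjoint, card_image_of_injective _ (fun a b h => by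
      simpa using h),
    card_image_of_injOn]
  · simp [Fintype.card_sum]; omega
  · intro a ha b hb hab
    have := congrArg Finset.card hab
    rw [card_chainSet σ (by simpa using ha), card_chainSet σ (by simpa using hb)] at this
    omega
  · rw [disjoint_left]
    intro U hU hU'
    simp only [mem_image, mem_univ, true_and] at hU
    simp only [mem_image, mem_range] at hU'
    obtain ⟨v, rfl⟩ := hU
    obtain ⟨k, hk, hk'⟩ := hU'
    have := congrArg Finset.card hk'
    rw [card_chainSet σ (by omega)] at this
    simp at this

lemma fam_isAssembly (σ : Equiv.Perm (Fin n)) :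
    IsAssemblyFamily (completeBipartiteGraph (Fin 1) (Fin n)) (fam σ) := by
  refine ⟨singleton_mem_fam σ, univ_mem_fam σ, ?_, ?_, ?_, ?_⟩
  · intro U hU
    rcases mem_fam_iff.1 hU with ⟨v, rfl⟩ | ⟨k, hk, rfl⟩
    · exact ⟨v, mem_singleton_self v⟩
    · exact ⟨Sum.inl 0, inl_mem_chainSet σ _⟩
  · intro U₁ h₁ U₂ h₂
    rcases mem_fam_iff.1 h₁ with ⟨v, rfl⟩ | ⟨k, hk, rfl⟩ <;>
      rcases mem_fam_iff.1 h₂ with ⟨w, rfl⟩ | ⟨l, hl, rfl⟩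
    · by_cases h : v = w
      · subst h; exact Or.inl le_rfl
      · exact Or.inr (Or.inr (by simp [h, Ne.symm h]))
    · by_cases h : v ∈ chainSet σ (l + 1)
      · exact Or.inl (by simpa using h)
      · exact Or.inr (Or.inr (by simpa using h))
    · by_cases h : w ∈ chainSet σ (k + 1)
      · exact Or.inr (Or.inl (by simpa using h))
      · exact Or.inr (Or.inr (disjoint_singleton_right.2 h))
    · rcases le_total k l with h | h
      · exact Or.inl (chainSet_mono σ (by omega))
      · exact Or.inr (Or.inl (chainSet_mono σ (by omega)))
  · intro U hU hcard
    rcases mem_fam_iff.1 hU with ⟨v, rfl⟩ | ⟨k, hk, rfl⟩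
    · simp at hcard
    · refine ⟨chainSet σ k, chainSet_mem_fam σ (by omega),
        {Sum.inr (σ ⟨k, hk⟩)}, singleton_mem_fam σ _, ?_, ?_,
        Sum.inl 0, inl_mem_chainSet σ k, Sum.inr (σ ⟨k, hk⟩), mem_singleton_self _, ?_⟩
      · rw [disjoint_singleton_right, mem_chainSet_iff]
        rintro (h | ⟨x, hx, hx'⟩)
        · simp at h
        · have : σ ⟨k, hk⟩ = x := Sum.inr.inj hx'
          rw [← this] at hx; simp at hx
      · rw [chainSet_succ σ hk, union_comm]
        rw [insert_eq]
      · simp [completeBipartiteGraph]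
  · rw [card_fam]
    simp [Fintype.card_sum]
    omega


lemma inr_not_mem_chainSet (σ : Equiv.Perm (Fin n)) {k : ℕ} (hk : k < n) :
    Sum.inr (σ ⟨k, hk⟩) ∉ chainSet σ k := by
  rw [mem_chainSet_iff]
  rintro (h | ⟨x, hx, hx'⟩)
  · simp at h
  · have : σ ⟨k, hk⟩ = x := Sum.inr.inj hx'
    rw [← this] at hx; simp at hx

lemma fam_injective : Function.Injective (fam (n := n)) := by
  intro σ σ' h
  have key : ∀ k : ℕ, k ≤ n → chainSet σ k = chainSet σ' k := by
    intro k hk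
    rcases Nat.eq_zero_or_pos k with rfl | hpos
    · rw [chainSet_zero, chainSet_zero]
    · obtain ⟨j, rfl⟩ := Nat.exists_eq_add_of_lt hpos
      rw [zero_add] at *
      have hmem : chainSet σ (j + 1) ∈ fam σ' := h ▸ chainSet_mem_fam σ hk
      rcases mem_fam_iff.1 hmem with ⟨v, hv⟩ | ⟨l, hl, hl'⟩
      · have := congrArg Finset.card hv
        rw [card_chainSet σ hk] at this; simp at this
      · have := congrArg Finset.card hl'
        rw [card_chainSet σ hk, card_chainSet σ' (by omega)] at this
        have : l = j := by omega
        subst this; exact hl'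
  ext i
  have hi : (i : ℕ) < n := i.isLt
  have h1 := chainSet_succ σ hi
  have h2 := chainSet_succ σ' hi
  rw [key _ (by omega), key _ (le_of_lt hi)] at h1
  rw [h2] at h1
  have : Sum.inr (σ ⟨i, hi⟩) ∈ insert (Sum.inr (σ' ⟨i, hi⟩)) (chainSet σ' i) := by
    rw [h1]; exact mem_insert_self _ _
  rcases mem_insert.1 this with h' | h'
  · have : σ ⟨i, hi⟩ = σ' ⟨i, hi⟩ := Sum.inr.inj h'
    exact congrArg Fin.val (by simpa using this)
  · exact absurd h' (by rw [← key _ (le_of_lt hi)]; exact inr_not_mem_chainSet σ hi)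


lemma fam_surj (F : Finset (Finset (Fin 1 ⊕ Fin n)))
    (hF : IsAssemblyFamily (completeBipartiteGraph (Fin 1) (Fin n)) F) :
    ∃ σ : Equiv.Perm (Fin n), fam σ = F := by
  obtain ⟨hsing, huniv, hne, hlam, hsplit, hcard⟩ := hF
  have hcardV : Fintype.card (Fin 1 ⊕ Fin n) = n + 1 := by
    simp [Fintype.card_sum]; omega
  have hF2 : F.card = 2 * n + 1 := by rw [hcard, hcardV]; omega
  -- every member of card ≥ 2 contains the center
  have hc_mem : ∀ U ∈ F, 2 ≤ U.card → Sum.inl 0 ∈ U := by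
    intro U hU h2
    obtain ⟨U₁, h₁, U₂, h₂, hdisj, huni, v₁, hv₁, v₂, hv₂, hadj⟩ := hsplit U hU h2
    rcases v₁ with a | a
    · have ha : (Sum.inl 0 : Fin 1 ⊕ Fin n) = Sum.inl a := by
        congr 1; exact Subsingleton.elim _ _
      rw [← huni]; exact mem_union_left _ (ha ▸ hv₁)
    · rcases v₂ with b | b
      · have hb : (Sum.inl 0 : Fin 1 ⊕ Fin n) = Sum.inl b := by
          congr 1; exact Subsingleton.elim _ _
        rw [← huni]; exact mem_union_right _ (hb ▸ hv₂)
      · simp [completeBipartiteGraph] at hadj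
  have hsingleton_cases : ∀ U ∈ F, Sum.inl 0 ∉ U → ∃ x : Fin n, U = {Sum.inr x} := by
    intro U hU hc
    have h1 : U.card = 1 := by
      obtain ⟨v, hv⟩ := hne U hU
      have hpos := card_pos.2 ⟨v, hv⟩
      by_contra hne1
      exact hc (hc_mem U hU (by omega))
    obtain ⟨v, rfl⟩ := card_eq_one.1 h1
    rcases v with a | x
    · have : a = 0 := Subsingleton.elim _ _
      subst this; simp at hc
    · exact ⟨x, rfl⟩
  set C := F.filter (fun U => Sum.inl 0 ∈ U) with hC
  have hchain : ∀ U₁ ∈ C, ∀ U₂ ∈ C, U₁ ⊆ U₂ ∨ U₂ ⊆ U₁ := by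
    intro U₁ h₁ U₂ h₂
    rw [hC, mem_filter] at h₁ h₂
    rcases hlam U₁ h₁.1 U₂ h₂.1 with h | h | h
    · exact Or.inl h
    · exact Or.inr h
    · exact absurd h₂.2 (disjoint_left.1 h h₁.2)
  have hinj : Set.InjOn Finset.card (C : Set (Finset (Fin 1 ⊕ Fin n))) := by
    intro U₁ h₁ U₂ h₂ hcardeq
    rcases hchain U₁ h₁ U₂ h₂ with h | h
    · exact eq_of_subset_of_card_le h (le_of_eq hcardeq.symm)
    · exact (eq_of_subset_of_card_le h (le_of_eq hcardeq)).symm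
  have hmaps : ∀ U ∈ C, U.card ∈ Finset.Icc 1 (n + 1) := by
    intro U hU
    rw [hC, mem_filter] at hU
    rw [mem_Icc]
    constructor
    · exact card_pos.2 ⟨_, hU.2⟩
    · calc U.card ≤ Fintype.card (Fin 1 ⊕ Fin n) := card_le_univ U
        _ = n + 1 := hcardV
  have hCle : C.card ≤ n + 1 := by
    calc C.card ≤ (Finset.Icc 1 (n + 1)).card :=
          card_le_card_of_injOn Finset.card hmaps hinj
      _ = n + 1 := by rw [Nat.card_Icc]; omega
  have hcompl : F.filter (fun U => Sum.inl 0 ∉ U) ⊆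
      (Finset.univ : Finset (Fin n)).image (fun x => ({Sum.inr x} : Finset _)) := by
    intro U hU
    rw [mem_filter] at hU
    obtain ⟨x, rfl⟩ := hsingleton_cases U hU.1 hU.2
    simp
  have hcompl_card : (F.filter (fun U => Sum.inl 0 ∉ U)).card ≤ n := by
    refine le_trans (card_le_card hcompl) (le_trans card_image_le (by simp))
  have hsplitcard : C.card + (F.filter (fun U => Sum.inl 0 ∉ U)).card = F.card :=
    card_filter_add_card_filter_not (fun U => Sum.inl 0 ∈ U)
  have hCcard : C.card = n + 1 := by omega
  have hsurj : ∀ k ∈ Finset.Icc 1 (n + 1), ∃ U ∈ C, U.card = k := by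
    have := Finset.surj_on_of_inj_on_of_card_le (fun U (_ : U ∈ C) => U.card)
      hmaps (fun a₁ a₂ ha₁ ha₂ h => hinj ha₁ ha₂ h)
      (by rw [hCcard, Nat.card_Icc]; omega)
    intro k hk
    obtain ⟨U, hU, hUk⟩ := this k hk
    exact ⟨U, hU, hUk.symm⟩
  have hexB : ∀ k : ℕ, k ≤ n → ∃ U, U ∈ C ∧ U.card = k + 1 := by
    intro k hk
    obtain ⟨U, hU, h⟩ := hsurj (k + 1) (by rw [mem_Icc]; omega)
    exact ⟨U, hU, h⟩
  choose B hBmem hBcard using hexB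
  have hBc : ∀ k (hk : k ≤ n), Sum.inl 0 ∈ B k hk ∧ B k hk ∈ F := by
    intro k hk
    have := hBmem k hk
    rw [hC, mem_filter] at this
    exact ⟨this.2, this.1⟩
  have hBmono : ∀ k l (hk : k ≤ n) (hl : l ≤ n), k ≤ l → B k hk ⊆ B l hl := by
    intro k l hk hl hkl
    rcases hchain _ (hBmem k hk) _ (hBmem l hl) with h | h
    · exact h
    · have heq := eq_of_subset_of_card_le h
        (by rw [hBcard, hBcard]; omega)
      rw [heq]
  have hB0 : ∀ (hk : (0:ℕ) ≤ n), B 0 hk = {Sum.inl 0} := by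
    intro hk
    obtain ⟨a, ha⟩ := card_eq_one.1 (hBcard 0 hk)
    have hc := (hBc 0 hk).1
    rw [ha] at hc ⊢
    rw [mem_singleton] at hc
    rw [← hc]
  have hBn : B n le_rfl = Finset.univ := by
    apply eq_univ_of_card
    rw [hBcard, hcardV]
  have hstep : ∀ k (hk : k < n), ∃ x : Fin n,
      Sum.inr x ∉ B k hk.le ∧ B (k + 1) hk = insert (Sum.inr x) (B k hk.le) := by
    intro k hk
    have hsub := hBmono k (k + 1) hk.le hk (by omega)
    have hdiffcard : (B (k + 1) hk \ B k hk.le).card = 1 := by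
      rw [card_sdiff_of_subset hsub, hBcard, hBcard]; omega
    obtain ⟨v, hv⟩ := card_eq_one.1 hdiffcard
    have hvmem := mem_sdiff.1 (hv ▸ mem_singleton_self v)
    rcases v with a | x
    · exfalso
      have : a = 0 := Subsingleton.elim _ _
      subst this
      exact hvmem.2 (hBc k hk.le).1
    · refine ⟨x, hvmem.2, ?_⟩
      have hu := Finset.union_sdiff_of_subset hsub
      rw [hv] at hu
      rw [insert_eq, union_comm]
      exact hu.symm
  have hg : ∀ i : Fin n, ∃ x : Fin n, Sum.inr x ∉ B i i.isLt.le ∧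
      B ((i : ℕ) + 1) i.isLt = insert (Sum.inr x) (B i i.isLt.le) :=
    fun i => hstep i i.isLt
  choose g hg1 hg2 using hg
  have key : ∀ i j : Fin n, (i : ℕ) < (j : ℕ) → g i ≠ g j := by
    intro i j hij heq
    have h1 : Sum.inr (g i) ∈ B ((i : ℕ) + 1) i.isLt := by
      rw [hg2]; exact mem_insert_self _ _
    have h2 : B ((i : ℕ) + 1) i.isLt ⊆ B j j.isLt.le :=
      hBmono _ _ _ _ (by omega)
    rw [heq] at h1
    exact hg1 j (h2 h1)
  have ginj : Function.Injective g := by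
    intro i j hij
    rcases lt_trichotomy (i : ℕ) (j : ℕ) with h | h | h
    · exact absurd hij (key i j h)
    · exact Fin.ext h
    · exact absurd hij.symm (key j i h)
  let σ : Equiv.Perm (Fin n) :=
    Equiv.ofBijective g ((Fintype.bijective_iff_injective_and_card g).2 ⟨ginj, rfl⟩)
  have hσ : ∀ i, σ i = g i := fun i => rfl
  have hchainB : ∀ k (hk : k ≤ n), chainSet σ k = B k hk := by
    intro k
    induction k with
    | zero => intro hk; rw [chainSet_zero, hB0]
    | succ m ih =>
      intro hk
      have hm : m < n := hk
      rw [chainSet_succ σ hm, ih hm.le, hσ]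
      exact (hg2 ⟨m, hm⟩).symm
  refine ⟨σ, ?_⟩
  apply eq_of_subset_of_card_le
  · intro U hU
    rcases mem_fam_iff.1 hU with ⟨v, rfl⟩ | ⟨k, hk, rfl⟩
    · exact hsing v
    · rw [hchainB (k + 1) (by omega)]
      exact (hBc (k + 1) (by omega)).2
  · rw [card_fam, hF2]; omega


end AsmStar

/-- The number of assembly trees of the star `Sₙ = K_{1,n}` is `n!`. -/
theorem assemblyTreeCount_star (n : ℕ) :
    assemblyTreeCount (completeBipartiteGraph (Fin 1) (Fin n)) = n.factorial := by
  rw [assemblyTreeCount]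
  have hb : Function.Bijective (fun σ : Equiv.Perm (Fin n) =>
      (⟨AsmStar.fam σ, AsmStar.fam_isAssembly σ⟩ :
        {F // IsAssemblyFamily (completeBipartiteGraph (Fin 1) (Fin n)) F})) := by
    constructor
    · intro a b h
      exact AsmStar.fam_injective (congrArg Subtype.val h)
    · rintro ⟨F, hF⟩
      obtain ⟨σ, hσ⟩ := AsmStar.fam_surj F hF
      exact ⟨σ, Subtype.ext hσ⟩
  rw [← Nat.card_eq_of_bijective _ hb, Nat.card_eq_fintype_card, Fintype.card_perm,
    Fintype.card_fin]
end

section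
/- The number of assembly trees of the spider graph $S^2_n$ with $n$ legs each of length $2$ (using the edge gluing rule) is $\sum_{k=0}^n \binom{n}{k} \frac{(2n-k)!}{2^{n-k}}$. -/
/-- The spider (star with `n` legs of length 2): a center `none`, and for each
`i : Fin n` a path `none — some (i, 0) — some (i, 1)`. -/
def spiderGraph (n : ℕ) : SimpleGraph (Option (Fin n × Fin 2)) :=
  SimpleGraph.fromRel (fun u v =>
    (u = none ∧ ∃ i, v = some (i, 0)) ∨ (∃ i, u = some (i, 0) ∧ v = some (i, 1)))

section AuxSpider

variable {n : ℕ}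

lemma adj_none_a (i : Fin n) : (spiderGraph n).Adj none (some (i,0)) := by
  simp [spiderGraph, SimpleGraph.fromRel_adj]

lemma adj_a_b (i : Fin n) : (spiderGraph n).Adj (some (i,0)) (some (i,1)) := by
  refine ⟨by simp, Or.inl (Or.inr ⟨i, rfl, rfl⟩)⟩

lemma adj_cases {u v : Option (Fin n × Fin 2)} (h : (spiderGraph n).Adj u v) :
    (∃ i, u = none ∧ v = some (i,0)) ∨ (∃ i, v = none ∧ u = some (i,0)) ∨
    (∃ i, u = some (i,0) ∧ v = some (i,1)) ∨ (∃ i, v = some (i,0) ∧ u = some (i,1)) := by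
  rw [spiderGraph, SimpleGraph.fromRel_adj] at h
  obtain ⟨-, h | h⟩ := h
  · rcases h with ⟨h1, i, h2⟩ | ⟨i, h1, h2⟩
    · exact Or.inl ⟨i, h1, h2⟩
    · exact Or.inr (Or.inr (Or.inl ⟨i, h1, h2⟩))
  · rcases h with ⟨h1, i, h2⟩ | ⟨i, h1, h2⟩
    · exact Or.inr (Or.inl ⟨i, h1, h2⟩)
    · exact Or.inr (Or.inr (Or.inr ⟨i, h1, h2⟩))



/-- The validity condition on a datum `(K, t)`. -/
def Good (K : Finset (Fin n)) (t : Fin n × Fin 2 → ℕ) : Prop :=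
  (∀ i ∈ K, t (i,0) = t (i,1)) ∧ (∀ i ∉ K, t (i,0) < t (i,1)) ∧
  (∀ (i j : Fin n) (x y : Fin 2), i ≠ j → t (i,x) ≠ t (j,y)) ∧
  (∀ w, t w ∈ Finset.Icc 1 (2*n - K.card))

lemma card_le (K : Finset (Fin n)) : K.card ≤ n := by
  simpa using Finset.card_le_card (Finset.subset_univ K)

lemma good_surj {K : Finset (Fin n)} {t : Fin n × Fin 2 → ℕ} (h : Good K t) :
    ∀ s ∈ Finset.Icc 1 (2*n - K.card), ∃ w, t w = s := by
  obtain ⟨hK, hKc, hinj, hmem⟩ := h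
  set M := 2*n - K.card with hM
  have hkn : K.card ≤ n := card_le K
  set h' : (Fin n ⊕ {i : Fin n // i ∉ K}) → ℕ := fun z =>
    match z with
    | .inl i => t (i, 0)
    | .inr i => t (i.1, 1) with hh'
  have hinj' : Function.Injective h' := by
    rintro (i | i) (j | j) hij <;> simp only [hh'] at hij
    · by_contra hne
      exact hinj i j 0 0 (by simpa using hne) hij
    · by_cases hij' : i = j.1
      · exact absurd (hij' ▸ hij) (Nat.ne_of_lt (hKc j.1 j.2))
      · exact absurd hij (hinj i j.1 0 1 hij')
    · by_cases hij' : i.1 = j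
      · obtain ⟨i, hi⟩ := i
        subst hij'
        exact absurd hij.symm (Nat.ne_of_lt (hKc i hi))
      · exact absurd hij (hinj i.1 j 1 0 hij')
    · by_cases hij' : i.1 = j.1
      · simp [Subtype.ext hij']
      · exact absurd hij (hinj i.1 j.1 1 1 hij')
  have hcard : Fintype.card (Fin n ⊕ {i : Fin n // i ∉ K}) = M := by
    simp only [Fintype.card_sum, Fintype.card_fin]
    have : Fintype.card {i : Fin n // i ∉ K} = n - K.card := by
      simp [Fintype.card_subtype_compl, Fintype.card_fin]
    omega
  have hsub : Finset.univ.image h' ⊆ Finset.Icc 1 M := by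
    intro s hs
    simp only [Finset.mem_image] at hs
    obtain ⟨z, -, rfl⟩ := hs
    cases z <;> exact hmem _
  have heq : Finset.univ.image h' = Finset.Icc 1 M := by
    apply Finset.eq_of_subset_of_card_le hsub
    rw [Finset.card_image_of_injective _ hinj', Finset.card_univ, hcard, Nat.card_Icc]
    omega
  intro s hs
  rw [← heq] at hs
  simp only [Finset.mem_image] at hs
  obtain ⟨z, -, rfl⟩ := hs
  cases z with
  | inl i => exact ⟨(i, 0), rfl⟩
  | inr i => exact ⟨(i.1, 1), rfl⟩




def chainSet (t : Fin n × Fin 2 → ℕ) (s : ℕ) : Finset (Option (Fin n × Fin 2)) :=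
  insert none ((Finset.univ.filter (fun w => t w ≤ s)).image some)

@[simp] lemma none_mem_chainSet (t : Fin n × Fin 2 → ℕ) (s : ℕ) : none ∈ chainSet t s :=
  Finset.mem_insert_self _ _

@[simp] lemma some_mem_chainSet {t : Fin n × Fin 2 → ℕ} {s : ℕ} {w : Fin n × Fin 2} :
    some w ∈ chainSet t s ↔ t w ≤ s := by
  simp [chainSet]

lemma chainSet_mono {t : Fin n × Fin 2 → ℕ} {s s' : ℕ} (h : s ≤ s') :
    chainSet t s ⊆ chainSet t s' := by
  intro v hv
  match v with
  | none => simp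
  | some w => simp only [some_mem_chainSet] at hv ⊢; omega

lemma pair_injective : Function.Injective
    (fun i : Fin n => ({some (i,0), some (i,1)} : Finset (Option (Fin n × Fin 2)))) := by
  intro i j hij
  have : (some (i,0) : Option (Fin n × Fin 2)) ∈ ({some (j,0), some (j,1)} : Finset _) := by
    rw [show ({some (j,0), some (j,1)} : Finset (Option (Fin n × Fin 2))) = {some (i,0), some (i,1)} from hij.symm]; simp
  simp only [Finset.mem_insert, Finset.mem_singleton, Option.some_inj, Prod.mk.injEq] at this
  rcases this with ⟨h, -⟩ | ⟨-, h⟩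
  · exact h
  · exact absurd h (by decide)

/-- The assembly family associated to a datum. -/
def famOf (K : Finset (Fin n)) (t : Fin n × Fin 2 → ℕ) : Finset (Finset (Option (Fin n × Fin 2))) :=
  (Finset.univ.image fun v => {v}) ∪
  (K.image fun i => {some (i,0), some (i,1)}) ∪
  ((Finset.Icc 1 (2*n - K.card)).image (chainSet t))

lemma mem_famOf {K : Finset (Fin n)} {t : Fin n × Fin 2 → ℕ} {U : Finset (Option (Fin n × Fin 2))} :
    U ∈ famOf K t ↔ (∃ v, U = {v}) ∨ (∃ i ∈ K, U = {some (i,0), some (i,1)}) ∨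
      (∃ s ∈ Finset.Icc 1 (2*n - K.card), U = chainSet t s) := by
  simp [famOf, eq_comm]

section GoodFacts
variable {K : Finset (Fin n)} {t : Fin n × Fin 2 → ℕ} (hg : Good K t)
include hg

lemma t_pos (w : Fin n × Fin 2) : 1 ≤ t w := (Finset.mem_Icc.mp (hg.2.2.2 w)).1
lemma t_le (w : Fin n × Fin 2) : t w ≤ 2*n - K.card := (Finset.mem_Icc.mp (hg.2.2.2 w)).2

lemma chainSet_zero : chainSet t 0 = {none} := by
  ext v
  match v with
  | none => simp
  | some w =>
    simp only [some_mem_chainSet, Finset.mem_singleton]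
    have := t_pos hg w
    constructor
    · omega
    · intro h; exact absurd h (by simp)

lemma chainSet_top : chainSet t (2*n - K.card) = Finset.univ := by
  ext v
  simp only [Finset.mem_univ, iff_true]
  match v with
  | none => simp
  | some w => simpa using t_le hg w

lemma chainSet_strictmono {s s' : ℕ} (h : s < s') (h' : s' ≤ 2*n - K.card) :
    chainSet t s ≠ chainSet t s' := by
  obtain ⟨w, hw⟩ := good_surj hg s' (Finset.mem_Icc.mpr ⟨by omega, h'⟩)
  intro heq
  have h1 : some w ∈ chainSet t s' := by simp [hw]
  rw [← heq] at h1
  simp only [some_mem_chainSet] at h1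
  omega

lemma chainSet_injOn : Set.InjOn (chainSet t) (Finset.Icc 1 (2*n - K.card)) := by
  intro s hs s' hs' heq
  simp only [Finset.coe_Icc, Set.mem_Icc] at hs hs'
  by_contra hne
  rcases Nat.lt_or_ge s s' with h | h
  · exact chainSet_strictmono hg h hs'.2 heq
  · exact chainSet_strictmono hg (by omega) hs.2 heq.symm

lemma chainSet_card_ge {s : ℕ} (hs : s ∈ Finset.Icc 1 (2*n - K.card)) :
    2 ≤ (chainSet t s).card := by
  obtain ⟨w, hw⟩ := good_surj hg s hs
  have h1 : some w ∈ chainSet t s := by simp only [some_mem_chainSet]; omega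
  have : ({none, some w} : Finset (Option (Fin n × Fin 2))) ⊆ chainSet t s := by
    intro v hv
    simp only [Finset.mem_insert, Finset.mem_singleton] at hv
    rcases hv with rfl | rfl
    · simp
    · exact h1
  calc 2 = ({none, some w} : Finset (Option (Fin n × Fin 2))).card := by simp
    _ ≤ _ := Finset.card_le_card this

lemma famOf_card : (famOf K t).card = 4*n + 1 := by
  have hkn : K.card ≤ n := by simpa using Finset.card_le_card (Finset.subset_univ K)
  rw [famOf]
  rw [Finset.card_union_of_disjoint, Finset.card_union_of_disjoint]
  · rw [Finset.card_image_of_injective _ (fun a b h => Finset.singleton_injective h),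
      Finset.card_image_of_injective _ pair_injective,
      Finset.card_image_of_injOn (chainSet_injOn hg)]
    simp only [Finset.card_univ, Fintype.card_option, Fintype.card_prod, Fintype.card_fin,
      Nat.card_Icc]
    omega
  · -- singletons vs pairs
    simp only [Finset.disjoint_left, Finset.mem_image]
    rintro U ⟨v, -, rfl⟩ ⟨i, -, hU⟩
    have h2 := congrArg Finset.card hU
    rw [Finset.card_insert_of_notMem (by simp), Finset.card_singleton,
      Finset.card_singleton] at h2
    exact absurd h2 (by norm_num)
  · -- (singletons ∪ pairs) vs chains
    simp only [Finset.disjoint_left, Finset.mem_union, Finset.mem_image]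
    rintro U (⟨v, -, rfl⟩ | ⟨i, -, rfl⟩) ⟨s, hs, hU⟩
    · have h2 := chainSet_card_ge hg hs
      rw [hU] at h2
      simp at h2
    · have h0 : (none : Option (Fin n × Fin 2)) ∈ chainSet t s := by simp
      rw [hU] at h0
      simp at h0
end GoodFacts

section Assembly
variable {K : Finset (Fin n)} {t : Fin n × Fin 2 → ℕ} (hg : Good K t)
include hg

lemma pair_chain_laminar {i : Fin n} (hi : i ∈ K) (s : ℕ) :
    ({some (i,0), some (i,1)} : Finset (Option (Fin n × Fin 2))) ⊆ chainSet t s ∨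
      Disjoint ({some (i,0), some (i,1)} : Finset (Option (Fin n × Fin 2))) (chainSet t s) := by
  have heq := hg.1 i hi
  by_cases h : t (i,0) ≤ s
  · left
    intro a ha
    simp only [Finset.mem_insert, Finset.mem_singleton] at ha
    rcases ha with rfl | rfl
    · simpa using h
    · simp only [some_mem_chainSet]; omega
  · right
    rw [Finset.disjoint_left]
    intro a ha ha'
    simp only [Finset.mem_insert, Finset.mem_singleton] at ha
    rcases ha with rfl | rfl <;> simp only [some_mem_chainSet] at ha' <;> omega

lemma famOf_isAssembly : IsAssemblyFamily (spiderGraph n) (famOf K t) := by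
  have hkn : K.card ≤ n := by simpa using Finset.card_le_card (Finset.subset_univ K)
  set M := 2*n - K.card with hM
  refine ⟨?_, ?_, ?_, ?_, ?_, ?_⟩
  · exact fun v => mem_famOf.mpr (Or.inl ⟨v, rfl⟩)
  · rcases Nat.eq_zero_or_pos n with hn | hn
    · subst hn
      have : (Finset.univ : Finset (Option (Fin 0 × Fin 2))) = {none} := by
        ext v
        match v with
        | none => exact iff_of_true (Finset.mem_univ _) (Finset.mem_singleton_self _)
        | some w => exact absurd w.1.2 (by omega)
      rw [this]
      
      exact mem_famOf.mpr (Or.inl ⟨none, rfl⟩)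
    · refine mem_famOf.mpr (Or.inr (Or.inr ⟨M, Finset.mem_Icc.mpr ⟨by omega, le_rfl⟩,
        (chainSet_top hg).symm⟩))
  · intro U hU
    rcases mem_famOf.mp hU with ⟨v, rfl⟩ | ⟨i, -, rfl⟩ | ⟨s, -, rfl⟩
    · exact ⟨v, by simp⟩
    · exact ⟨some (i,0), by simp⟩
    · exact ⟨none, by simp⟩
  · intro U₁ h1 U₂ h2
    have sing : ∀ (v : Option (Fin n × Fin 2)) (U : Finset (Option (Fin n × Fin 2))),
        {v} ⊆ U ∨ Disjoint {v} U := by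
      intro v U
      by_cases h : v ∈ U
      · exact Or.inl (Finset.singleton_subset_iff.mpr h)
      · exact Or.inr (by simpa using h)
    rcases mem_famOf.mp h1 with ⟨v, rfl⟩ | ⟨i, hi, rfl⟩ | ⟨s, hs, rfl⟩
    · rcases sing v U₂ with h | h
      · exact Or.inl h
      · exact Or.inr (Or.inr h)
    · rcases mem_famOf.mp h2 with ⟨v, rfl⟩ | ⟨j, hj, rfl⟩ | ⟨s, hs, rfl⟩
      · rcases sing v _ with h | h
        · exact Or.inr (Or.inl h)
        · exact Or.inr (Or.inr h.symm)
      · by_cases hij : i = j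
        · subst hij; exact Or.inl le_rfl
        · refine Or.inr (Or.inr ?_)
          rw [Finset.disjoint_left]
          intro a ha ha'
          simp only [Finset.mem_insert, Finset.mem_singleton] at ha ha'
          rcases ha with rfl | rfl <;> rcases ha' with h | h <;>
            exact hij (congrArg (fun o => (Option.getD o (i,0)).1) h)
      · rcases pair_chain_laminar hg hi s with h | h
        · exact Or.inl h
        · exact Or.inr (Or.inr h)
    · rcases mem_famOf.mp h2 with ⟨v, rfl⟩ | ⟨j, hj, rfl⟩ | ⟨s', hs', rfl⟩
      · rcases sing v _ with h | h
        · exact Or.inr (Or.inl h)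
        · exact Or.inr (Or.inr h.symm)
      · rcases pair_chain_laminar hg hj s with h | h
        · exact Or.inr (Or.inl h)
        · exact Or.inr (Or.inr h.symm)
      · rcases le_total s s' with h | h
        · exact Or.inl (chainSet_mono h)
        · exact Or.inr (Or.inl (chainSet_mono h))
  · intro U hU hcard
    rcases mem_famOf.mp hU with ⟨v, rfl⟩ | ⟨i, hi, rfl⟩ | ⟨s, hs, rfl⟩
    · simp at hcard
    · refine ⟨{some (i,0)}, mem_famOf.mpr (Or.inl ⟨_, rfl⟩),
        {some (i,1)}, mem_famOf.mpr (Or.inl ⟨_, rfl⟩), by simp, by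
          rw [← Finset.insert_eq], some (i,0), by simp, some (i,1), by simp, adj_a_b i⟩
    · -- chain set splits
      rw [Finset.mem_Icc] at hs
      obtain ⟨w, hw⟩ := good_surj hg s (Finset.mem_Icc.mpr hs)
      obtain ⟨i, x⟩ := w
      have hfib : ∀ w' : Fin n × Fin 2, t w' = s → w'.1 = i := by
        intro w' hw'
        by_contra hne
        exact hg.2.2.1 w'.1 i w'.2 x hne (by rw [hw', hw])
      set U₂ : Finset (Option (Fin n × Fin 2)) :=
        (Finset.univ.filter (fun w' => t w' = s)).image some with hU₂
      have hmemU₂ : ∀ v : Option (Fin n × Fin 2), v ∈ U₂ ↔ ∃ w', v = some w' ∧ t w' = s := by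
        intro v
        simp only [hU₂, Finset.mem_image, Finset.mem_filter, Finset.mem_univ, true_and]
        constructor
        · rintro ⟨w', h1, rfl⟩; exact ⟨w', rfl, h1⟩
        · rintro ⟨w', rfl, h1⟩; exact ⟨w', h1, rfl⟩
      have hU₁mem : chainSet t (s-1) ∈ famOf K t := by
        rcases Nat.eq_zero_or_pos (s-1) with h0 | h0
        · rw [h0, chainSet_zero hg]
          exact mem_famOf.mpr (Or.inl ⟨none, rfl⟩)
        · exact mem_famOf.mpr (Or.inr (Or.inr ⟨s-1, Finset.mem_Icc.mpr ⟨h0, by omega⟩, rfl⟩))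
      have hU₂mem : U₂ ∈ famOf K t := by
        by_cases hiK : i ∈ K
        · refine mem_famOf.mpr (Or.inr (Or.inl ⟨i, hiK, ?_⟩))
          have hi0 : t (i,0) = s := by
            have := hg.1 i hiK
            fin_cases x
            · exact hw
            · rw [this]; exact hw
          ext v
          rw [hmemU₂]
          simp only [Finset.mem_insert, Finset.mem_singleton]
          constructor
          · rintro ⟨w', rfl, h1⟩
            have := hfib w' h1
            obtain ⟨j, y⟩ := w'
            simp only at this
            subst this
            fin_cases y
            · exact Or.inl rfl
            · exact Or.inr rfl
          · rintro (rfl | rfl)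
            · exact ⟨(i,0), rfl, hi0⟩
            · exact ⟨(i,1), rfl, by rw [← hg.1 i hiK]; exact hi0⟩
        · refine mem_famOf.mpr (Or.inl ⟨some (i,x), ?_⟩)
          ext v
          rw [hmemU₂]
          simp only [Finset.mem_singleton]
          constructor
          · rintro ⟨w', rfl, h1⟩
            have h2 := hfib w' h1
            obtain ⟨j, y⟩ := w'
            simp only at h2
            subst h2
            have hlt := hg.2.1 j hiK
            fin_cases x <;> fin_cases y <;> simp_all <;> omega
          · rintro rfl
            exact ⟨(i,x), rfl, hw⟩
      refine ⟨chainSet t (s-1), hU₁mem, U₂, hU₂mem, ?_, ?_, ?_⟩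
      · rw [Finset.disjoint_left]
        intro a ha ha'
        rw [hmemU₂] at ha'
        obtain ⟨w', rfl, h1⟩ := ha'
        simp only [some_mem_chainSet] at ha
        omega
      · ext v
        match v with
        | none =>
          simp only [Finset.mem_union]
          constructor
          · intro _; simp
          · intro _; exact Or.inl (by simp)
        | some w' =>
          simp only [Finset.mem_union, some_mem_chainSet, hmemU₂]
          constructor
          · rintro (h | ⟨w'', hww, h⟩)
            · omega
            · rw [Option.some_inj] at hww; subst hww; omega
          · intro h
            rcases Nat.lt_or_ge (t w') s with h' | h'
            · exact Or.inl (by omega)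
            · exact Or.inr ⟨w', rfl, by omega⟩
      · by_cases hc : t (i,0) = s
        · exact ⟨none, by simp, some (i,0), (hmemU₂ _).mpr ⟨(i,0), rfl, hc⟩, adj_none_a i⟩
        · have hx1 : t (i,1) = s := by
            fin_cases x
            · exact absurd hw hc
            · exact hw
          have hiK : i ∉ K := fun h => hc (by rw [hg.1 i h]; exact hx1)
          have hlt := hg.2.1 i hiK
          refine ⟨some (i,0), ?_, some (i,1), (hmemU₂ _).mpr ⟨(i,1), rfl, hx1⟩, adj_a_b i⟩
          simp only [some_mem_chainSet]
          omega
  · rw [famOf_card hg]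
    simp only [Fintype.card_option, Fintype.card_prod, Fintype.card_fin]
    omega

end Assembly

section Recover
variable {K : Finset (Fin n)} {t : Fin n × Fin 2 → ℕ} (hg : Good K t)
include hg

lemma pair_mem_famOf_iff {i : Fin n} :
    ({some (i,0), some (i,1)} : Finset (Option (Fin n × Fin 2))) ∈ famOf K t ↔ i ∈ K := by
  constructor
  · intro h
    rcases mem_famOf.mp h with ⟨v, hv⟩ | ⟨j, hj, hU⟩ | ⟨s, hs, hU⟩
    · have h2 := congrArg Finset.card hv
      rw [Finset.card_insert_of_notMem (by simp), Finset.card_singleton,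
        Finset.card_singleton] at h2
      exact absurd h2 (by norm_num)
    · rwa [pair_injective hU]
    · have h0 : (none : Option (Fin n × Fin 2)) ∈ chainSet t s := by simp
      rw [← hU] at h0
      simp at h0
  · intro h
    exact mem_famOf.mpr (Or.inr (Or.inl ⟨i, h, rfl⟩))

lemma t_recover (w : Fin n × Fin 2) :
    ((famOf K t).filter (fun U => none ∈ U ∧ some w ∉ U)).card = t w := by
  have hkn : K.card ≤ n := by simpa using Finset.card_le_card (Finset.subset_univ K)
  have htw1 := t_pos hg w
  have htwM := t_le hg w
  have hfe : (famOf K t).filter (fun U => none ∈ U ∧ some w ∉ U) =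
      insert {none} ((Finset.Icc 1 (t w - 1)).image (chainSet t)) := by
    ext U
    simp only [Finset.mem_filter, Finset.mem_insert, Finset.mem_image]
    constructor
    · rintro ⟨hU, hnone, hw⟩
      rcases mem_famOf.mp hU with ⟨v, rfl⟩ | ⟨j, hj, rfl⟩ | ⟨s, hs, rfl⟩
      · left
        rw [Finset.mem_singleton] at hnone
        rw [hnone]
      · simp at hnone
      · right
        rw [Finset.mem_Icc] at hs
        simp only [some_mem_chainSet] at hw
        exact ⟨s, Finset.mem_Icc.mpr ⟨hs.1, by omega⟩, rfl⟩
    · rintro (rfl | ⟨s, hs, rfl⟩)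
      · exact ⟨mem_famOf.mpr (Or.inl ⟨none, rfl⟩), by simp, by simp⟩
      · rw [Finset.mem_Icc] at hs
        refine ⟨mem_famOf.mpr (Or.inr (Or.inr ⟨s, Finset.mem_Icc.mpr ⟨hs.1, by omega⟩, rfl⟩)),
          by simp, ?_⟩
        simp only [some_mem_chainSet]
        omega
  rw [hfe, Finset.card_insert_of_notMem, Finset.card_image_of_injOn, Nat.card_Icc]
  · omega
  · intro s hs s' hs' heq
    simp only [Finset.coe_Icc, Set.mem_Icc] at hs hs'
    exact chainSet_injOn hg (by simp only [Finset.coe_Icc, Set.mem_Icc]; omega)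
      (by simp only [Finset.coe_Icc, Set.mem_Icc]; omega) heq
  · simp only [Finset.mem_image, not_exists]
    rintro s ⟨hs, heq⟩
    rw [Finset.mem_Icc] at hs
    have := chainSet_card_ge hg (Finset.mem_Icc.mpr (show 1 ≤ s ∧ s ≤ 2*n - K.card by omega))
    rw [heq] at this
    simp at this

end Recover

lemma famOf_inj {K K' : Finset (Fin n)} {t t' : Fin n × Fin 2 → ℕ}
    (hg : Good K t) (hg' : Good K' t') (h : famOf K t = famOf K' t') : K = K' ∧ t = t' := by
  constructor
  · ext i
    rw [← pair_mem_famOf_iff hg, ← pair_mem_famOf_iff hg', h]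
  · funext w
    rw [← t_recover hg w, ← t_recover hg' w, h]

/-- Possible shapes of members of an assembly family of the spider. -/
def Shape (U : Finset (Option (Fin n × Fin 2))) : Prop :=
  (∃ v, U = {v}) ∨ (∃ i : Fin n, U = {some (i,0), some (i,1)}) ∨
    (none ∈ U ∧ 2 ≤ U.card ∧ ∀ i : Fin n, some (i,1) ∈ U → some (i,0) ∈ U)

lemma shape_noneless {U : Finset (Option (Fin n × Fin 2))} (hs : Shape U)
    (hn : none ∉ U) : (∃ w : Fin n × Fin 2, U = {some w}) ∨
      (∃ i : Fin n, U = {some (i,0), some (i,1)}) := by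
  rcases hs with ⟨v, rfl⟩ | h | ⟨h, -⟩
  · match v with
    | none => simp at hn
    | some w => exact Or.inl ⟨w, rfl⟩
  · exact Or.inr h
  · exact absurd h hn

/-- The union of two disjoint shapes joined by an edge is a shape. -/
lemma shape_union_central {A B : Finset (Option (Fin n × Fin 2))}
    {a b : Option (Fin n × Fin 2)}
    (hsA : Shape A) (hsB : Shape B) (hdisj : Disjoint A B) (ha : a ∈ A) (hb : b ∈ B)
    (hadj : (spiderGraph n).Adj a b) (hnA : none ∈ A) : Shape (A ∪ B) := by
  have hnB : none ∉ B := fun h => (Finset.disjoint_left.mp hdisj hnA) h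
  have hAclos : ∀ i : Fin n, some (i,1) ∈ A → some (i,0) ∈ A := by
    rcases hsA with ⟨v, rfl⟩ | ⟨i, rfl⟩ | ⟨-, -, h⟩
    · intro i hi
      rw [Finset.mem_singleton] at hnA hi
      rw [← hnA] at hi
      exact nomatch hi
    · simp at hnA
    · exact h
  refine Or.inr (Or.inr ⟨Finset.mem_union_left _ hnA, ?_, ?_⟩)
  · have h1 : 1 ≤ A.card := Finset.card_pos.mpr ⟨a, ha⟩
    have h2 : 1 ≤ B.card := Finset.card_pos.mpr ⟨b, hb⟩
    rw [Finset.card_union_of_disjoint hdisj]; omega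
  · intro i hi
    rcases Finset.mem_union.mp hi with hi | hi
    · exact Finset.mem_union_left _ (hAclos i hi)
    · rcases shape_noneless hsB hnB with ⟨w, rfl⟩ | ⟨j, rfl⟩
      · -- B = {some w}; then w = (i,1) and by adjacency a = some (i,0) ∈ A
        rw [Finset.mem_singleton] at hi hb
        rw [← hi] at hb
        subst hb
        rcases adj_cases hadj with ⟨j, -, h⟩ | ⟨j, h, -⟩ | ⟨j, h1, h2⟩ | ⟨j, h1, -⟩
        · rw [Option.some_inj, Prod.mk.injEq] at h
          exact absurd h.2 (by decide)
        · exact nomatch h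
        · rw [Option.some_inj, Prod.mk.injEq] at h2
          obtain ⟨rfl, -⟩ := h2
          exact Finset.mem_union_left _ (h1 ▸ ha)
        · rw [Option.some_inj, Prod.mk.injEq] at h1
          exact absurd h1.2 (by decide)
      · -- B is a pair
        simp only [Finset.mem_insert, Finset.mem_singleton, Option.some_inj,
          Prod.mk.injEq] at hi
        rcases hi with ⟨-, h⟩ | ⟨rfl, -⟩
        · exact absurd h (by decide)
        · exact Finset.mem_union_right _ (by simp)

lemma shape_union {A B : Finset (Option (Fin n × Fin 2))}
    {a b : Option (Fin n × Fin 2)}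
    (hsA : Shape A) (hsB : Shape B) (hdisj : Disjoint A B) (ha : a ∈ A) (hb : b ∈ B)
    (hadj : (spiderGraph n).Adj a b) : Shape (A ∪ B) := by
  by_cases hnA : none ∈ A
  · exact shape_union_central hsA hsB hdisj ha hb hadj hnA
  · by_cases hnB : none ∈ B
    · rw [Finset.union_comm]
      exact shape_union_central hsB hsA hdisj.symm hb ha hadj.symm hnB
    · -- no center: both are leg-subsets; only singletons of the same leg can merge
      rcases shape_noneless hsA hnA with ⟨w, rfl⟩ | ⟨i, rfl⟩
      · rcases shape_noneless hsB hnB with ⟨w', rfl⟩ | ⟨j, rfl⟩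
        · -- two singletons
          rw [Finset.mem_singleton] at ha hb
          subst ha; subst hb
          rcases adj_cases hadj with ⟨j, h, -⟩ | ⟨j, h, -⟩ | ⟨j, h1, h2⟩ | ⟨j, h1, h2⟩
          · exact nomatch h
          · exact nomatch h
          · rw [h1, h2]
            exact Or.inr (Or.inl ⟨j, (Finset.insert_eq _ _).symm⟩)
          · rw [h1, h2]
            refine Or.inr (Or.inl ⟨j, ?_⟩)
            rw [← Finset.insert_eq, Finset.pair_comm]
        · -- singleton and pair: the pair's vertex adjacent to ours lies in both: absurd
          exfalso
          rw [Finset.mem_singleton] at ha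
          have haB : a ∈ ({some (j,0), some (j,1)} : Finset (Option (Fin n × Fin 2))) := by
            simp only [Finset.mem_insert, Finset.mem_singleton] at hb
            rcases adj_cases hadj with ⟨l, h, -⟩ | ⟨l, h, -⟩ | ⟨l, h1, h2⟩ | ⟨l, h1, h2⟩
            · rw [ha] at h; exact nomatch h
            · rcases hb with rfl | rfl <;> exact nomatch h
            · rcases hb with hb | hb <;> rw [hb, Option.some_inj, Prod.mk.injEq] at h2
              · exact absurd h2.2 (by decide)
              · obtain ⟨rfl, -⟩ := h2
                rw [h1]; simp
            · rcases hb with hb | hb <;> rw [hb, Option.some_inj, Prod.mk.injEq] at h1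
              · obtain ⟨rfl, -⟩ := h1
                rw [h2]; simp
              · exact absurd h1.2 (by decide)
          exact Finset.disjoint_left.mp hdisj (by rw [ha]; exact Finset.mem_singleton_self _) haB
      · -- A is a pair: its partner of any adjacent vertex lies in both: absurd
        exfalso
        have hbA : b ∈ ({some (i,0), some (i,1)} : Finset (Option (Fin n × Fin 2))) := by
          simp only [Finset.mem_insert, Finset.mem_singleton] at ha
          rcases adj_cases hadj with ⟨l, h, -⟩ | ⟨l, h, -⟩ | ⟨l, h1, h2⟩ | ⟨l, h1, h2⟩
          · rcases ha with rfl | rfl <;> exact nomatch h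
          · exact absurd (h ▸ hb) hnB
          · rcases ha with ha | ha <;> rw [ha, Option.some_inj, Prod.mk.injEq] at h1
            · obtain ⟨rfl, -⟩ := h1
              rw [h2]; simp
            · exact absurd h1.2 (by decide)
          · rcases ha with ha | ha <;> rw [ha, Option.some_inj, Prod.mk.injEq] at h2
            · exact absurd h2.2 (by decide)
            · obtain ⟨rfl, -⟩ := h2
              rw [h1]; simp
        exact Finset.disjoint_left.mp hdisj hbA hb

section Surj
variable {F : Finset (Finset (Option (Fin n × Fin 2)))}
  (hF : IsAssemblyFamily (spiderGraph n) F)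
include hF

lemma shape_of_mem : ∀ U ∈ F, Shape U := by
  obtain ⟨hsing, huniv, hne, hlam, hsplit, hcard⟩ := hF
  suffices h : ∀ m : ℕ, ∀ U ∈ F, U.card ≤ m → Shape U by
    intro U hU; exact h U.card U hU le_rfl
  intro m
  induction m with
  | zero =>
    intro U hU hc
    obtain ⟨v, hv⟩ := hne U hU
    have := Finset.card_pos.mpr ⟨v, hv⟩
    omega
  | succ m ih =>
    intro U hU hc
    rcases Nat.lt_or_ge U.card 2 with h2 | h2
    · obtain ⟨v, hv⟩ := hne U hU
      have h1 : U.card = 1 := by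
        have := Finset.card_pos.mpr ⟨v, hv⟩
        omega
      exact Or.inl (Finset.card_eq_one.mp h1)
    · obtain ⟨U₁, hU₁, U₂, hU₂, hdisj, huni, v₁, hv₁, v₂, hv₂, hadj⟩ := hsplit U hU h2
      have hcards : U₁.card + U₂.card = U.card := by
        rw [← huni, Finset.card_union_of_disjoint hdisj]
      have hc₁ : U₁.card ≤ m := by
        have := Finset.card_pos.mpr (hne U₂ hU₂); omega
      have hc₂ : U₂.card ≤ m := by
        have := Finset.card_pos.mpr (hne U₁ hU₁); omega
      rw [← huni]
      exact shape_union (ih U₁ hU₁ hc₁) (ih U₂ hU₂ hc₂) hdisj hv₁ hv₂ hadj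

end Surj

/-- The set of "pair" legs of an assembly family. -/
def KofF (F : Finset (Finset (Option (Fin n × Fin 2)))) : Finset (Fin n) :=
  Finset.univ.filter (fun i => ({some (i,0), some (i,1)} : Finset (Option (Fin n × Fin 2))) ∈ F)

/-- The step-time of each vertex in an assembly family. -/
def tofF (F : Finset (Finset (Option (Fin n × Fin 2)))) (w : Fin n × Fin 2) : ℕ :=
  (F.filter (fun U => none ∈ U ∧ some w ∉ U)).card

/-- The chain of central sets. -/
def chOf (F : Finset (Finset (Option (Fin n × Fin 2)))) : Finset (Finset (Option (Fin n × Fin 2))) :=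
  F.filter (fun U => none ∈ U)

def rankOf (F : Finset (Finset (Option (Fin n × Fin 2))))
    (U : Finset (Option (Fin n × Fin 2))) : ℕ :=
  ((chOf F).filter (fun U' => U' ⊂ U)).card

lemma mem_KofF {F : Finset (Finset (Option (Fin n × Fin 2)))} {i : Fin n} :
    i ∈ KofF F ↔ ({some (i,0), some (i,1)} : Finset (Option (Fin n × Fin 2))) ∈ F := by
  simp [KofF]

lemma tofF_eq (F : Finset (Finset (Option (Fin n × Fin 2)))) (w : Fin n × Fin 2) :
    tofF F w = ((chOf F).filter (fun U => some w ∉ U)).card := by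
  rw [tofF, chOf, Finset.filter_filter]

lemma mem_chOf {F : Finset (Finset (Option (Fin n × Fin 2)))}
    {U : Finset (Option (Fin n × Fin 2))} : U ∈ chOf F ↔ U ∈ F ∧ none ∈ U := by
  simp [chOf]

lemma card_V : Fintype.card (Option (Fin n × Fin 2)) = 2*n+1 := by
  simp only [Fintype.card_option, Fintype.card_prod, Fintype.card_fin]
  omega

section Surj2
variable {F : Finset (Finset (Option (Fin n × Fin 2)))}
  (hF : IsAssemblyFamily (spiderGraph n) F)
include hF

lemma chain_total {U U' : Finset (Option (Fin n × Fin 2))} (h : U ∈ chOf F)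
    (h' : U' ∈ chOf F) : U ⊆ U' ∨ U' ⊆ U := by
  rw [mem_chOf] at h h'
  rcases hF.2.2.2.1 U h.1 U' h'.1 with hs | hs | hs
  · exact Or.inl hs
  · exact Or.inr hs
  · exact absurd h'.2 (Finset.disjoint_left.mp hs h.2)

lemma central_closed {U : Finset (Option (Fin n × Fin 2))} (h : U ∈ chOf F) :
    ∀ i : Fin n, some (i,1) ∈ U → some (i,0) ∈ U := by
  rw [mem_chOf] at h
  rcases shape_of_mem hF U h.1 with ⟨v, rfl⟩ | ⟨i, rfl⟩ | ⟨-, -, hclos⟩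
  · intro i hi
    rw [Finset.mem_singleton] at hi
    rw [Finset.mem_singleton] at h
    rw [← h.2] at hi
    exact nomatch hi
  · have := h.2; simp at this
  · exact hclos

lemma card_F : F.card = 4*n+1 := by
  have h := hF.2.2.2.2.2
  rw [card_V] at h
  omega

lemma card_chOf : (chOf F).card = 2*n - (KofF F).card + 1 := by
  obtain ⟨hsing, huniv, hne, hlam, hsplit, hcard⟩ := hF
  have hkn : (KofF F).card ≤ n := by
    simpa using Finset.card_le_card (Finset.subset_univ (KofF F))
  -- singletons
  have hS1 : F.filter (fun U => U.card = 1) =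
      Finset.univ.image (fun v : Option (Fin n × Fin 2) => ({v} : Finset _)) := by
    ext U
    simp only [Finset.mem_filter, Finset.mem_image, Finset.mem_univ, true_and]
    constructor
    · rintro ⟨-, h1⟩
      obtain ⟨v, rfl⟩ := Finset.card_eq_one.mp h1
      exact ⟨v, rfl⟩
    · rintro ⟨v, rfl⟩
      exact ⟨hsing v, Finset.card_singleton v⟩
  have hS1card : (F.filter (fun U => U.card = 1)).card = 2*n+1 := by
    rw [hS1, Finset.card_image_of_injective _ (fun a b h => Finset.singleton_injective h),
      Finset.card_univ, card_V]
  -- pairs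
  have hS2 : (F.filter (fun U => ¬ U.card = 1)).filter (fun U => none ∉ U) =
      (KofF F).image (fun i => ({some (i,0), some (i,1)} : Finset (Option (Fin n × Fin 2)))) := by
    ext U
    simp only [Finset.mem_filter, Finset.mem_image]
    constructor
    · rintro ⟨⟨hU, h1⟩, h0⟩
      rcases shape_of_mem ⟨hsing, huniv, hne, hlam, hsplit, hcard⟩ U hU
        with ⟨v, rfl⟩ | ⟨i, rfl⟩ | ⟨hc, -, -⟩
      · exact absurd (Finset.card_singleton v) h1
      · exact ⟨i, mem_KofF.mpr hU, rfl⟩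
      · exact absurd hc h0
    · rintro ⟨i, hi, rfl⟩
      refine ⟨⟨mem_KofF.mp hi, ?_⟩, by simp⟩
      rw [Finset.card_insert_of_notMem (by simp), Finset.card_singleton]
      omega
  have hS2card : ((F.filter (fun U => ¬ U.card = 1)).filter (fun U => none ∉ U)).card
      = (KofF F).card := by
    rw [hS2, Finset.card_image_of_injective _ pair_injective]
  -- decompose
  have h1 := Finset.card_filter_add_card_filter_not (s := F)
    (p := fun U => U.card = 1)
  have h2 := Finset.card_filter_add_card_filter_not
    (s := F.filter (fun U => ¬ U.card = 1)) (p := fun U => none ∉ U)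
  -- identify chOf with the central part plus {none}
  have hCH : chOf F = insert {none}
      ((F.filter (fun U => ¬ U.card = 1)).filter (fun U => ¬ none ∉ U)) := by
    ext U
    simp only [mem_chOf, Finset.mem_insert, Finset.mem_filter, not_not]
    constructor
    · rintro ⟨hU, h0⟩
      by_cases h1 : U.card = 1
      · obtain ⟨v, rfl⟩ := Finset.card_eq_one.mp h1
        rw [Finset.mem_singleton] at h0
        rw [h0]
        exact Or.inl rfl
      · exact Or.inr ⟨⟨hU, h1⟩, h0⟩
    · rintro (rfl | ⟨⟨hU, -⟩, h0⟩)
      · exact ⟨hsing none, Finset.mem_singleton_self none⟩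
      · exact ⟨hU, h0⟩
  have hCHcard : (chOf F).card =
      ((F.filter (fun U => ¬ U.card = 1)).filter (fun U => ¬ none ∉ U)).card + 1 := by
    rw [hCH, Finset.card_insert_of_notMem]
    simp only [Finset.mem_filter, not_not]
    rintro ⟨⟨-, h1⟩, -⟩
    exact h1 (Finset.card_singleton _)
  have hF4 : F.card = 4*n+1 := by
    rw [hcard, card_V]; omega
  omega

lemma mem_iff_rank {U : Finset (Option (Fin n × Fin 2))} (hU : U ∈ chOf F)
    (w : Fin n × Fin 2) : some w ∈ U ↔ tofF F w ≤ rankOf F U := by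
  rw [tofF_eq, rankOf]
  constructor
  · intro hw
    apply Finset.card_le_card
    intro U' hU'
    simp only [Finset.mem_filter] at hU' ⊢
    obtain ⟨hU'1, hU'2⟩ := hU'
    refine ⟨hU'1, ?_⟩
    rcases chain_total hF hU'1 hU with hs | hs
    · exact (Finset.ssubset_iff_of_subset hs).mpr ⟨some w, hw, hU'2⟩
    · exact absurd (hs hw) hU'2
  · intro hle
    by_contra hw
    have hsub : insert U ((chOf F).filter (fun U' => U' ⊂ U)) ⊆
        (chOf F).filter (fun U' => some w ∉ U') := by
      intro U' hU'
      rcases Finset.mem_insert.mp hU' with rfl | hU'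
      · exact Finset.mem_filter.mpr ⟨hU, hw⟩
      · simp only [Finset.mem_filter] at hU' ⊢
        exact ⟨hU'.1, fun hmem => hw (hU'.2.subset hmem)⟩
    have hcard := Finset.card_le_card hsub
    rw [Finset.card_insert_of_notMem (by
      simp only [Finset.mem_filter]
      rintro ⟨-, h⟩
      exact h.ne rfl)] at hcard
    omega

lemma tofF_pos (w : Fin n × Fin 2) : 1 ≤ tofF F w := by
  rw [tofF_eq]
  refine Finset.card_pos.mpr ⟨{none}, ?_⟩
  simp only [Finset.mem_filter, mem_chOf]
  exact ⟨⟨hF.1 none, Finset.mem_singleton_self none⟩, by simp⟩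

lemma tofF_le (w : Fin n × Fin 2) : tofF F w ≤ 2*n - (KofF F).card := by
  have huniv : (Finset.univ : Finset (Option (Fin n × Fin 2))) ∈ chOf F :=
    mem_chOf.mpr ⟨hF.2.1, Finset.mem_univ none⟩
  have hsub : (chOf F).filter (fun U => some w ∉ U) ⊆ (chOf F).erase Finset.univ := by
    intro U hU
    simp only [Finset.mem_filter] at hU
    refine Finset.mem_erase.mpr ⟨?_, hU.1⟩
    rintro rfl
    exact hU.2 (Finset.mem_univ _)
  have := Finset.card_le_card hsub
  rw [Finset.card_erase_of_mem huniv, card_chOf hF] at this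
  rw [tofF_eq]
  omega

end Surj2

section Surj3
variable {F : Finset (Finset (Option (Fin n × Fin 2)))}
  (hF : IsAssemblyFamily (spiderGraph n) F)
include hF

lemma lemmaX {w w' : Fin n × Fin 2} (hne : w ≠ w') (ht : tofF F w = tofF F w') :
    ∃ i : Fin n, ({some (i,0), some (i,1)} : Finset (Option (Fin n × Fin 2))) ∈ F ∧
      ((w = (i,0) ∧ w' = (i,1)) ∨ (w = (i,1) ∧ w' = (i,0))) := by
  have hiff : ∀ U ∈ chOf F, (some w ∈ U ↔ some w' ∈ U) := by
    intro U hU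
    rw [mem_iff_rank hF hU, mem_iff_rank hF hU, ht]
  have hunivch : (Finset.univ : Finset (Option (Fin n × Fin 2))) ∈ chOf F :=
    mem_chOf.mpr ⟨hF.2.1, Finset.mem_univ none⟩
  obtain ⟨U, hUmem, hmin⟩ := Finset.exists_min_image
    ((chOf F).filter (fun U => some w ∈ U)) Finset.card
    ⟨Finset.univ, Finset.mem_filter.mpr ⟨hunivch, Finset.mem_univ _⟩⟩
  rw [Finset.mem_filter] at hUmem
  obtain ⟨hUch, hwU⟩ := hUmem
  have hnU : none ∈ U := (mem_chOf.mp hUch).2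
  have hUF : U ∈ F := (mem_chOf.mp hUch).1
  have hc2 : 2 ≤ U.card := by
    have : ({none, some w} : Finset (Option (Fin n × Fin 2))) ⊆ U := by
      intro v hv
      simp only [Finset.mem_insert, Finset.mem_singleton] at hv
      rcases hv with rfl | rfl
      · exact hnU
      · exact hwU
    calc 2 = ({none, some w} : Finset (Option (Fin n × Fin 2))).card := by simp
      _ ≤ _ := Finset.card_le_card this
  obtain ⟨U₁, hU₁, U₂, hU₂, hdisj, huni, -, -, -, -, -⟩ := hF.2.2.2.2.1 U hUF hc2
  have key : ∀ A B : Finset (Option (Fin n × Fin 2)), A ∈ F → B ∈ F → Disjoint A B →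
      A ∪ B = U → none ∈ A →
      ∃ i : Fin n, ({some (i,0), some (i,1)} : Finset (Option (Fin n × Fin 2))) ∈ F ∧
        ((w = (i,0) ∧ w' = (i,1)) ∨ (w = (i,1) ∧ w' = (i,0))) := by
    intro A B hA hB hdj hun hnA
    have hAch : A ∈ chOf F := mem_chOf.mpr ⟨hA, hnA⟩
    obtain ⟨b, hb⟩ := hF.2.2.1 B hB
    have hAU : A ⊂ U := by
      refine (Finset.ssubset_iff_of_subset (hun ▸ Finset.subset_union_left)).mpr
        ⟨b, ?_, Finset.disjoint_right.mp hdj hb⟩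
      rw [← hun]
      exact Finset.mem_union_right _ hb
    have hwA : some w ∉ A := by
      intro hwA
      have := hmin A (Finset.mem_filter.mpr ⟨hAch, hwA⟩)
      exact absurd (Finset.card_lt_card hAU) (by omega)
    have hw'A : some w' ∉ A := fun h => hwA ((hiff A hAch).mpr h)
    have hwB : some w ∈ B := by
      have : some w ∈ A ∪ B := hun ▸ hwU
      rcases Finset.mem_union.mp this with h | h
      · exact absurd h hwA
      · exact h
    have hw'B : some w' ∈ B := by
      have hw'U : some w' ∈ U := (hiff U hUch).mp hwU
      have : some w' ∈ A ∪ B := hun ▸ hw'U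
      rcases Finset.mem_union.mp this with h | h
      · exact absurd h hw'A
      · exact h
    have hnB : none ∉ B := Finset.disjoint_left.mp hdj hnA
    rcases shape_noneless (shape_of_mem hF B hB) hnB with ⟨u, rfl⟩ | ⟨i, rfl⟩
    · rw [Finset.mem_singleton, Option.some_inj] at hwB hw'B
      exact absurd (hwB.trans hw'B.symm) hne
    · refine ⟨i, hB, ?_⟩
      simp only [Finset.mem_insert, Finset.mem_singleton, Option.some_inj] at hwB hw'B
      rcases hwB with rfl | rfl <;> rcases hw'B with h | h
      · exact absurd h.symm hne
      · exact Or.inl ⟨rfl, h⟩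
      · exact Or.inr ⟨rfl, h⟩
      · exact absurd h.symm hne
  have hnU' : none ∈ U₁ ∪ U₂ := huni ▸ hnU
  rcases Finset.mem_union.mp hnU' with h | h
  · exact key U₁ U₂ hU₁ hU₂ hdisj huni h
  · exact key U₂ U₁ hU₂ hU₁ hdisj.symm (by rw [Finset.union_comm]; exact huni) h

lemma good_ofF : Good (KofF F) (tofF F) := by
  refine ⟨?_, ?_, ?_, ?_⟩
  · -- pair legs: equal times
    intro i hi
    have hpair := mem_KofF.mp hi
    rw [tofF_eq, tofF_eq]
    congr 1
    apply Finset.filter_congr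
    intro U hU
    have hUF := (mem_chOf.mp hU).1
    have hnU := (mem_chOf.mp hU).2
    simp only [eq_iff_iff, not_iff_not]
    rcases hF.2.2.2.1 _ hpair U hUF with hs | hs | hs
    · constructor
      · intro _; exact hs (by simp)
      · intro _; exact hs (by simp)
    · exact absurd (hs hnU) (by simp)
    · constructor
      · intro h; exact absurd h (Finset.disjoint_left.mp hs (by simp))
      · intro h; exact absurd h (Finset.disjoint_left.mp hs (by simp))
  · -- non-pair legs: strictly increasing times
    intro i hi
    have hne : tofF F (i,0) ≠ tofF F (i,1) := by
      intro heq
      obtain ⟨j, hjF, hj⟩ := lemmaX hF (show ((i:Fin n),(0:Fin 2)) ≠ (i,1) by simp) heq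
      rcases hj with ⟨h1, -⟩ | ⟨h1, -⟩
      · rw [Prod.mk.injEq] at h1
        obtain ⟨rfl, -⟩ := h1
        exact hi (mem_KofF.mpr hjF)
      · rw [Prod.mk.injEq] at h1
        exact absurd h1.2 (by decide)
    have hle : tofF F (i,0) ≤ tofF F (i,1) := by
      rw [tofF_eq, tofF_eq]
      apply Finset.card_le_card
      intro U hU
      rw [Finset.mem_filter] at hU ⊢
      exact ⟨hU.1, fun h => hU.2 (central_closed hF hU.1 i h)⟩
    omega
  · -- distinct legs: distinct times
    intro i j x y hij heq
    obtain ⟨l, -, hl⟩ := lemmaX hF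
      (show ((i : Fin n), x) ≠ (j, y) from fun h => hij (congrArg Prod.fst h)) heq
    rcases hl with ⟨h1, h2⟩ | ⟨h1, h2⟩ <;>
      exact hij ((congrArg Prod.fst h1).trans (congrArg Prod.fst h2).symm)
  · intro w
    rw [Finset.mem_Icc]
    exact ⟨tofF_pos hF w, tofF_le hF w⟩

lemma famOf_ofF : famOf (KofF F) (tofF F) = F := by
  have hgood : Good (KofF F) (tofF F) := good_ofF hF
  have hsub : F ⊆ famOf (KofF F) (tofF F) := by
    intro U hU
    rcases shape_of_mem hF U hU with ⟨v, rfl⟩ | ⟨i, rfl⟩ | ⟨hnU, hc2, -⟩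
    · exact mem_famOf.mpr (Or.inl ⟨v, rfl⟩)
    · exact mem_famOf.mpr (Or.inr (Or.inl ⟨i, mem_KofF.mpr hU, rfl⟩))
    · -- central: U is a chain set of its rank
      have hUch : U ∈ chOf F := mem_chOf.mpr ⟨hU, hnU⟩
      have hUeq : U = chainSet (tofF F) (rankOf F U) := by
        ext v
        match v with
        | none => simp [hnU]
        | some w =>
          rw [some_mem_chainSet]
          exact mem_iff_rank hF hUch w
      have hrank1 : 1 ≤ rankOf F U := by
        refine Finset.card_pos.mpr ⟨{none}, ?_⟩
        simp only [Finset.mem_filter]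
        refine ⟨mem_chOf.mpr ⟨hF.1 none, Finset.mem_singleton_self none⟩, ?_⟩
        refine (Finset.ssubset_iff_of_subset (Finset.singleton_subset_iff.mpr hnU)).mpr ?_
        obtain ⟨v, hv1, hv2⟩ := Finset.exists_of_ssubset
          (Finset.ssubset_iff_subset_ne.mpr ⟨Finset.singleton_subset_iff.mpr hnU, by
            intro h
            rw [← h] at hc2
            simp at hc2⟩)
        exact ⟨v, hv1, hv2⟩
      have hrankM : rankOf F U ≤ 2*n - (KofF F).card := by
        have hsub2 : (chOf F).filter (fun U' => U' ⊂ U) ⊆ (chOf F).erase U := by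
          intro U' hU'
          rw [Finset.mem_filter] at hU'
          exact Finset.mem_erase.mpr ⟨hU'.2.ne, hU'.1⟩
        have := Finset.card_le_card hsub2
        rw [Finset.card_erase_of_mem hUch, card_chOf hF] at this
        rw [rankOf]
        omega
      rw [hUeq]
      exact mem_famOf.mpr (Or.inr (Or.inr ⟨rankOf F U, Finset.mem_Icc.mpr
        ⟨hrank1, hrankM⟩, rfl⟩))
  exact ((Finset.eq_of_subset_of_card_le hsub (by rw [famOf_card hgood, card_F hF]))).symm

end Surj3

/-- Like `Good` but with no order constraint within free legs. -/
def UGood (K : Finset (Fin n)) (t : Fin n × Fin 2 → ℕ) : Prop :=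
  (∀ i ∈ K, t (i,0) = t (i,1)) ∧ (∀ i ∉ K, t (i,0) ≠ t (i,1)) ∧
  (∀ (i j : Fin n) (x y : Fin 2), i ≠ j → t (i,x) ≠ t (j,y)) ∧
  (∀ w, t w ∈ Finset.Icc 1 (2*n - K.card))

lemma ucard (K : Finset (Fin n)) :
    Nat.card {t : Fin n × Fin 2 → ℕ // UGood K t} = (2*n - K.card).factorial := by
  classical
  have hkn : K.card ≤ n := card_le K
  set A := (Fin n ⊕ {i : Fin n // i ∉ K}) with hA
  set B := {s : ℕ // s ∈ Finset.Icc 1 (2*n - K.card)} with hB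
  have hcA : Fintype.card A = 2*n - K.card := by
    simp only [hA, Fintype.card_sum, Fintype.card_fin]
    have : Fintype.card {i : Fin n // i ∉ K} = n - K.card := by
      simp [Fintype.card_subtype_compl, Fintype.card_fin]
    omega
  have hcB : Fintype.card B = 2*n - K.card := by
    rw [Fintype.card_of_subtype (Finset.Icc 1 (2*n - K.card)) (fun x => Iff.rfl), Nat.card_Icc]
    omega
  set G : {t : Fin n × Fin 2 → ℕ // UGood K t} → A → B := fun t =>
    Sum.elim (fun i => ⟨t.1 (i,0), t.2.2.2.2 (i,0)⟩)
      (fun i : {i : Fin n // i ∉ K} => ⟨t.1 (i.1,1), t.2.2.2.2 (i.1,1)⟩) with hG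
  have hGinj : ∀ t, Function.Injective (G t) := by
    rintro ⟨t, htK, htKc, hinj, hmem⟩ (i | i) (j | j) hij
    · have h : t (i,0) = t (j,0) := congrArg Subtype.val hij
      by_contra hne
      exact hinj i j 0 0 (fun hh => hne (by rw [hh])) h
    · have h : t (i,0) = t (j.1,1) := congrArg Subtype.val hij
      by_cases hij' : i = j.1
      · exact absurd (hij' ▸ h) (htKc j.1 j.2)
      · exact absurd h (hinj i j.1 0 1 hij')
    · have h : t (i.1,1) = t (j,0) := congrArg Subtype.val hij
      by_cases hij' : i.1 = j
      · obtain ⟨i, hi⟩ := i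
        subst hij'
        exact absurd h.symm (htKc i hi)
      · exact absurd h (hinj i.1 j 1 0 hij')
    · have h : t (i.1,1) = t (j.1,1) := congrArg Subtype.val hij
      by_cases hij' : i.1 = j.1
      · rw [Subtype.ext hij']
      · exact absurd h (hinj i.1 j.1 1 1 hij')
  have hGbij : ∀ t, Function.Bijective (G t) := fun t =>
    (Fintype.bijective_iff_injective_and_card (G t)).mpr ⟨hGinj t, by rw [hcA, hcB]⟩
  have hmain : Nat.card {t : Fin n × Fin 2 → ℕ // UGood K t} = Nat.card (A ≃ B) := by
    apply Nat.card_eq_of_bijective (fun t => Equiv.ofBijective (G t) (hGbij t))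
    constructor
    · intro t t' htt
      have hval : ∀ a, G t a = G t' a := by
        intro a
        have := congrArg (fun e : A ≃ B => e a) htt
        simpa using this
      apply Subtype.ext
      funext w
      obtain ⟨i, x⟩ := w
      fin_cases x
      · exact congrArg Subtype.val (hval (Sum.inl i))
      · by_cases hi : i ∈ K
        · have h0 : t.1 (i,0) = t'.1 (i,0) := congrArg Subtype.val (hval (Sum.inl i))
          show t.1 (i,1) = t'.1 (i,1)
          rw [← t.2.1 i hi, ← t'.2.1 i hi]
          exact h0
        · exact congrArg Subtype.val (hval (Sum.inr ⟨i, hi⟩))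
    · intro e
      set t : Fin n × Fin 2 → ℕ := fun w =>
        if w.2 = 0 then (e (Sum.inl w.1)).1
        else if h : w.1 ∈ K then (e (Sum.inl w.1)).1 else (e (Sum.inr ⟨w.1, h⟩)).1 with ht
      have ht0 : ∀ i, t (i, 0) = (e (Sum.inl i)).1 := by intro i; simp [ht]
      have ht1K : ∀ i ∈ K, t (i, 1) = (e (Sum.inl i)).1 := by
        intro i hi; simp [ht, hi]
      have ht1Kc : ∀ (i) (h : i ∉ K), t (i, 1) = (e (Sum.inr ⟨i, h⟩)).1 := by
        intro i hi; simp [ht, hi]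
      have hshape : ∀ (i : Fin n) (x : Fin 2), ∃ z : A,
          t (i,x) = (e z).1 ∧ (z = Sum.inl i ∨ ∃ h : i ∉ K, z = Sum.inr ⟨i, h⟩) := by
        intro i x
        fin_cases x
        · exact ⟨Sum.inl i, ht0 i, Or.inl rfl⟩
        · by_cases hi : i ∈ K
          · exact ⟨Sum.inl i, ht1K i hi, Or.inl rfl⟩
          · exact ⟨Sum.inr ⟨i, hi⟩, ht1Kc i hi, Or.inr ⟨hi, rfl⟩⟩
      have hug : UGood K t := by
        refine ⟨?_, ?_, ?_, ?_⟩
        · intro i hi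
          rw [ht0, ht1K i hi]
        · intro i hi heq
          rw [ht0, ht1Kc i hi] at heq
          have := e.injective (Subtype.ext heq)
          exact nomatch this
        · intro i j x y hij heq
          obtain ⟨z, hz, hzi⟩ := hshape i x
          obtain ⟨z', hz', hzj⟩ := hshape j y
          rw [hz, hz'] at heq
          have hzz := e.injective (Subtype.ext heq)
          subst hzz
          rcases hzi with rfl | ⟨h, rfl⟩ <;> rcases hzj with h' | ⟨h2, h'⟩
          · exact hij (Sum.inl_injective h')
          · exact nomatch h'
          · exact nomatch h'
          · exact hij (congrArg Subtype.val (Sum.inr_injective h'))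
        · intro w
          obtain ⟨z, hz, -⟩ := hshape w.1 w.2
          rw [show t w = t (w.1, w.2) from rfl, hz]
          exact (e z).2
      refine ⟨⟨t, hug⟩, ?_⟩
      apply Equiv.ext
      intro a
      apply Subtype.ext
      match a with
      | .inl i => exact ht0 i
      | .inr ⟨i, hi⟩ => exact ht1Kc i hi
  rw [hmain, Nat.card_eq_fintype_card, Fintype.card_equiv (Fintype.equivOfCardEq (by rw [hcA, hcB])), hcA]

lemma fin2_add : ∀ x : Fin 2, x + 1 + 1 = x := by decide
lemma fin2_01 : ((0:Fin 2) + 1 = 1) ∧ ((1:Fin 2) + 1 = 0) := by decide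

section Swap
variable {K : Finset (Fin n)}

lemma swap_good {t : Fin n × Fin 2 → ℕ} (hg : Good K t) (ε : {i : Fin n // i ∉ K} → Bool) :
    UGood K (fun w => if h : w.1 ∈ K then t w else if ε ⟨w.1, h⟩ then t (w.1, w.2+1) else t w) := by
  obtain ⟨hK, hKc, hinj, hmem⟩ := hg
  set t' : Fin n × Fin 2 → ℕ :=
    fun w => if h : w.1 ∈ K then t w else if ε ⟨w.1, h⟩ then t (w.1, w.2+1) else t w with ht'
  have hvals : ∀ (i : Fin n) (x : Fin 2), t' (i,x) = t (i,x) ∨ t' (i,x) = t (i,x+1) := by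
    intro i x
    by_cases hi : i ∈ K
    · left; simp [ht', hi]
    · by_cases hε : ε ⟨i, hi⟩
      · right; simp [ht', hi, hε]
      · left; simp [ht', hi, hε]
  refine ⟨?_, ?_, ?_, ?_⟩
  · intro i hi
    show t' (i,0) = t' (i,1)
    simp only [ht', hi, dif_pos]
    exact hK i hi
  · intro i hi
    show t' (i,0) ≠ t' (i,1)
    have hlt := hKc i hi
    simp only [ht', dif_neg hi]
    cases hε : ε ⟨i, hi⟩ <;>
      simp only [hε, if_true, if_false, fin2_01.1, fin2_01.2, Bool.false_eq_true] <;> omega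
  · intro i j x y hij
    show t' (i,x) ≠ t' (j,y)
    rcases hvals i x with h | h <;> rcases hvals j y with h' | h' <;> rw [h, h'] <;>
      exact hinj i j _ _ hij
  · intro w
    obtain ⟨i, x⟩ := w
    rcases hvals i x with h | h <;>
      (show t' (i,x) ∈ _) <;> rw [h] <;> exact hmem _

lemma unswap_good {u : Fin n × Fin 2 → ℕ} (hu : UGood K u) :
    Good K (fun w => if h : w.1 ∈ K then u w
      else if u (w.1,1) < u (w.1,0) then u (w.1, w.2+1) else u w) := by
  obtain ⟨hK, hKc, hinj, hmem⟩ := hu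
  set t : Fin n × Fin 2 → ℕ := fun w => if h : w.1 ∈ K then u w
      else if u (w.1,1) < u (w.1,0) then u (w.1, w.2+1) else u w with ht
  have hvals : ∀ (i : Fin n) (x : Fin 2), t (i,x) = u (i,x) ∨ t (i,x) = u (i,x+1) := by
    intro i x
    by_cases hi : i ∈ K
    · left; simp [ht, hi]
    · by_cases hc : u (i,1) < u (i,0)
      · right; simp [ht, hi, hc]
      · left; simp [ht, hi, hc]
  refine ⟨?_, ?_, ?_, ?_⟩
  · intro i hi
    show t (i,0) = t (i,1)
    simp only [ht, hi, dif_pos]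
    exact hK i hi
  · intro i hi
    show t (i,0) < t (i,1)
    have hne := hKc i hi
    simp only [ht, dif_neg hi]
    by_cases hc : u (i,1) < u (i,0) <;>
      simp only [hc, if_true, if_false, fin2_01.1, fin2_01.2, Bool.false_eq_true] <;> omega
  · intro i j x y hij
    show t (i,x) ≠ t (j,y)
    rcases hvals i x with h | h <;> rcases hvals j y with h' | h' <;> rw [h, h'] <;>
      exact hinj i j _ _ hij
  · intro w
    obtain ⟨i, x⟩ := w
    rcases hvals i x with h | h <;> (show t (i,x) ∈ _) <;> rw [h] <;> exact hmem _

lemma wcard (K : Finset (Fin n)) :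
    Nat.card {t : Fin n × Fin 2 → ℕ // Good K t} * 2 ^ (n - K.card)
      = (2*n - K.card).factorial := by
  classical
  rw [← ucard K]
  set β : {t : Fin n × Fin 2 → ℕ // Good K t} × ({i : Fin n // i ∉ K} → Bool) →
      {t : Fin n × Fin 2 → ℕ // UGood K t} :=
    fun p => ⟨_, swap_good p.1.2 p.2⟩ with hβ
  have hbij : Function.Bijective β := by
    constructor
    · rintro ⟨⟨t, hgt⟩, ε⟩ ⟨⟨s, hgs⟩, δ⟩ heq
      have hval : ∀ w, (if h : w.1 ∈ K then t w else if ε ⟨w.1, h⟩ then t (w.1, w.2+1) else t w)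
          = (if h : w.1 ∈ K then s w else if δ ⟨w.1, h⟩ then s (w.1, w.2+1) else s w) :=
        fun w => congrFun (congrArg Subtype.val heq) w
      have hts : ∀ w, t w = s w := by
        intro w
        obtain ⟨i, x⟩ := w
        by_cases hi : i ∈ K
        · have := hval (i, x); simpa [hi] using this
        · have h0 := hval (i, 0)
          have h1 := hval (i, 1)
          simp only [dif_neg hi, fin2_01.1, fin2_01.2] at h0 h1
          have hlt := hgt.2.1 i hi
          have hls := hgs.2.1 i hi
          have hpair : t (i,0) = s (i,0) ∧ t (i,1) = s (i,1) := by
            cases hε : ε ⟨i, hi⟩ <;> cases hδ : δ ⟨i, hi⟩ <;>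
              simp only [hε, hδ, if_true, if_false, Bool.false_eq_true] at h0 h1 <;>
              exact ⟨by omega, by omega⟩
          fin_cases x
          · exact hpair.1
          · exact hpair.2
      have htseq : t = s := funext hts
      subst htseq
      have hεδ : ε = δ := by
        funext ⟨i, hi⟩
        have h0 := hval (i, 0)
        simp only [dif_neg hi, fin2_01.1] at h0
        have hlt := hgt.2.1 i hi
        cases hε : ε ⟨i, hi⟩ <;> cases hδ : δ ⟨i, hi⟩ <;>
          simp only [hε, hδ, if_true, if_false, Bool.false_eq_true] at h0 <;> first | rfl | omega
      refine Prod.ext ?_ hεδ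
      exact Subtype.ext rfl
    · rintro ⟨u, hu⟩
      refine ⟨⟨⟨_, unswap_good hu⟩, fun i => decide (u (i.1,1) < u (i.1,0))⟩, ?_⟩
      apply Subtype.ext
      funext w
      obtain ⟨i, x⟩ := w
      by_cases hi : i ∈ K
      · simp [hβ, hi]
      · simp only [dif_neg hi]
        by_cases hc : u (i,1) < u (i,0)
        · simp [hβ, hi, hc, fin2_add, Bool.false_eq_true]
        · simp [hβ, hi, hc, Bool.false_eq_true]
  have hcb : Nat.card ({i : Fin n // i ∉ K} → Bool) = 2 ^ (n - K.card) := by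
    rw [Nat.card_fun]
    have h1 : Nat.card Bool = 2 := Nat.card_eq_fintype_card.trans Fintype.card_bool
    have h2 : Nat.card {i : Fin n // i ∉ K} = n - K.card := by
      rw [Nat.card_eq_fintype_card]
      simp [Fintype.card_subtype_compl]
    rw [h1, h2]
  rw [← Nat.card_eq_of_bijective β hbij, Nat.card_prod, hcb]

end Swap

instance goodFinite (K : Finset (Fin n)) : Finite {t : Fin n × Fin 2 → ℕ // Good K t} := by
  have hφ : Function.Injective (fun t : {t : Fin n × Fin 2 → ℕ // Good K t} =>
      (fun w => (⟨t.1 w, by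
        have h := Finset.mem_Icc.mp (t.2.2.2.2 w)
        have : K.card ≤ n := card_le K
        omega⟩ : Fin (2*n+1))) ) := by
    intro t t' h
    apply Subtype.ext
    funext w
    exact congrArg Fin.val (congrFun h w)
  exact Finite.of_injective _ hφ

lemma card_sigma_eq :
    Nat.card {F : Finset (Finset (Option (Fin n × Fin 2))) //
        IsAssemblyFamily (spiderGraph n) F} =
      Nat.card (Σ K : Finset (Fin n), {t : Fin n × Fin 2 → ℕ // Good K t}) := by
  apply (Nat.card_eq_of_bijective
    (fun q : Σ K : Finset (Fin n), {t : Fin n × Fin 2 → ℕ // Good K t} =>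
      (⟨famOf q.1 q.2.1, famOf_isAssembly q.2.2⟩ : {F : Finset (Finset (Option (Fin n × Fin 2))) //
        IsAssemblyFamily (spiderGraph n) F})) ?_).symm
  constructor
  · rintro ⟨K, t, ht⟩ ⟨K', t', ht'⟩ h
    simp only [Subtype.mk.injEq] at h
    obtain ⟨hK, hT⟩ := famOf_inj ht ht' h
    subst hK
    subst hT
    rfl
  · rintro ⟨F, hF⟩
    exact ⟨⟨KofF F, tofF F, good_ofF hF⟩, Subtype.ext (famOf_ofF hF)⟩

theorem assemblyTreeCount_spider' (n : ℕ) :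
    (assemblyTreeCount (spiderGraph n) : ℚ) =
      ∑ k ∈ Finset.range (n + 1),
        (n.choose k : ℚ) * (2 * n - k).factorial / 2 ^ (n - k) := by
  classical
  letI : ∀ K : Finset (Fin n), Fintype {t : Fin n × Fin 2 → ℕ // Good K t} :=
    fun K => Fintype.ofFinite _
  have h1 : assemblyTreeCount (spiderGraph n) =
      ∑ K : Finset (Fin n), Nat.card {t : Fin n × Fin 2 → ℕ // Good K t} := by
    rw [assemblyTreeCount, card_sigma_eq, Nat.card_eq_fintype_card, Fintype.card_sigma]
    exact Finset.sum_congr rfl (fun K _ => (Nat.card_eq_fintype_card).symm)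
  have h2 : ∀ K : Finset (Fin n), (Nat.card {t : Fin n × Fin 2 → ℕ // Good K t} : ℚ) =
      (2*n - K.card).factorial / 2 ^ (n - K.card) := by
    intro K
    rw [eq_div_iff (by positivity)]
    have := wcard K
    exact_mod_cast congrArg (Nat.cast : ℕ → ℚ) this
  rw [h1]
  push_cast
  rw [show (Finset.univ : Finset (Finset (Fin n))) = (Finset.univ : Finset (Fin n)).powerset
    from Finset.powerset_univ.symm]
  rw [Finset.sum_powerset]
  rw [Finset.card_univ, Fintype.card_fin]
  apply Finset.sum_congr rfl
  intro k hk
  have hconst : ∀ K ∈ Finset.powersetCard k (Finset.univ : Finset (Fin n)),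
      (Nat.card {t : Fin n × Fin 2 → ℕ // Good K t} : ℚ)
        = (2*n - k).factorial / 2 ^ (n - k) := by
    intro K hK
    have hc : K.card = k := (Finset.mem_powersetCard.mp hK).2
    rw [h2 K, hc]
  rw [Finset.sum_congr rfl hconst, Finset.sum_const, Finset.card_powersetCard,
    Finset.card_univ, Fintype.card_fin, nsmul_eq_mul, mul_div_assoc]

end AuxSpider

/-- The number of assembly trees of the spider `S²ₙ` is
`∑ₖ C(n,k) (2n-k)! / 2^(n-k)`. -/
theorem assemblyTreeCount_spider (n : ℕ) :
    (assemblyTreeCount (spiderGraph n) : ℚ) =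
      ∑ k ∈ Finset.range (n + 1),
        (n.choose k : ℚ) * (2 * n - k).factorial / 2 ^ (n - k) :=
  assemblyTreeCount_spider' n
end

section
/- The number of assembly trees of the path $P_n$ on $n$ vertices (using the edge gluing rule) is the Catalan number $\frac{1}{n}\binom{2n-2}{n-1}$. -/
/-- The interval `[a, b)` as a finset of `Fin n`. -/
def iv (n a b : ℕ) : Finset (Fin n) := Finset.univ.filter fun i => a ≤ i.val ∧ i.val < b

@[simp] lemma mem_iv {n a b : ℕ} {x : Fin n} : x ∈ iv n a b ↔ a ≤ x.val ∧ x.val < b := by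
  simp [iv]

lemma iv_nonempty {n a b : ℕ} (h : a < b) (hb : b ≤ n) : (iv n a b).Nonempty :=
  ⟨⟨a, lt_of_lt_of_le h hb⟩, by simp [h]⟩

lemma iv_subset {n a b a' b' : ℕ} (h1 : a' ≤ a) (h2 : b ≤ b') : iv n a b ⊆ iv n a' b' := by
  intro x; simp only [mem_iv]; omega

lemma iv_disjoint {n a b a' b' : ℕ} (h : b ≤ a') : Disjoint (iv n a b) (iv n a' b') := by
  rw [Finset.disjoint_left]; intro x; simp only [mem_iv]; omega

lemma iv_union {n a k b : ℕ} (h1 : a ≤ k) (h2 : k ≤ b) : iv n a k ∪ iv n k b = iv n a b := by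
  ext x; simp only [Finset.mem_union, mem_iv]; omega

lemma card_iv {n a b : ℕ} (hb : b ≤ n) : (iv n a b).card = b - a := by
  classical
  have : (iv n a b).image Fin.val = Finset.Ico a b := by
    ext x
    simp only [Finset.mem_image, Finset.mem_Ico, mem_iv]
    constructor
    · rintro ⟨i, hi, rfl⟩; exact hi
    · rintro ⟨h1, h2⟩; exact ⟨⟨x, lt_of_lt_of_le h2 hb⟩, ⟨h1, h2⟩, rfl⟩
  have h2 := Finset.card_image_of_injective (iv n a b) (Fin.val_injective)
  rw [this] at h2
  rw [← h2, Nat.card_Ico]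

lemma iv_inj {n a b a' b' : ℕ} (h1 : a < b) (h2 : b ≤ n) (h3 : a' < b') (h4 : b' ≤ n)
    (h : iv n a b = iv n a' b') : a = a' ∧ b = b' := by
  have m1 : (⟨a, by omega⟩ : Fin n) ∈ iv n a b := by simp; omega
  have m2 : (⟨a', by omega⟩ : Fin n) ∈ iv n a' b' := by simp; omega
  have m3 : (⟨b - 1, by omega⟩ : Fin n) ∈ iv n a b := by simp; omega
  have m4 : (⟨b' - 1, by omega⟩ : Fin n) ∈ iv n a' b' := by simp; omega
  rw [h] at m1 m3; rw [← h] at m2 m4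
  simp only [mem_iv] at m1 m2 m3 m4
  omega

lemma singleton_eq_iv {n : ℕ} (v : Fin n) : ({v} : Finset (Fin n)) = iv n v.val (v.val + 1) := by
  ext x
  simp only [Finset.mem_singleton, mem_iv, ← Fin.val_inj]
  omega

/-- Disjoint nonempty intervals are ordered. -/
lemma iv_disjoint_cases {n a b a' b' : ℕ} (h1 : a < b) (h2 : b ≤ n) (h3 : a' < b') (h4 : b' ≤ n)
    (h : Disjoint (iv n a b) (iv n a' b')) : b ≤ a' ∨ b' ≤ a := by
  by_contra hc
  push_neg at hc
  have : (⟨max a a', by omega⟩ : Fin n) ∈ iv n a b ∩ iv n a' b' := by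
    simp only [Finset.mem_inter, mem_iv]; omega
  rw [Finset.disjoint_iff_inter_eq_empty.mp h] at this
  simp at this

/-- If two disjoint nonempty intervals partition an interval, they are its two halves. -/
lemma interval_split {n c d c₁ d₁ c₂ d₂ : ℕ} (h1 : c₁ < d₁) (hd1 : d₁ ≤ n)
    (h2 : c₂ < d₂) (hd2 : d₂ ≤ n) (hcd : c < d) (hd : d ≤ n)
    (hdisj : Disjoint (iv n c₁ d₁) (iv n c₂ d₂))
    (hun : iv n c₁ d₁ ∪ iv n c₂ d₂ = iv n c d) :
    (c₁ = c ∧ d₁ = c₂ ∧ d₂ = d) ∨ (c₂ = c ∧ d₂ = c₁ ∧ d₁ = d) := by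
  have H : ∀ x : ℕ, x < n →
      (((c₁ ≤ x ∧ x < d₁) ∨ (c₂ ≤ x ∧ x < d₂)) ↔ (c ≤ x ∧ x < d)) := by
    intro x hx
    have := Finset.ext_iff.mp hun (⟨x, hx⟩ : Fin n)
    simpa using this
  have hord := iv_disjoint_cases h1 hd1 h2 hd2 hdisj
  have i1 := H c₁ (by omega)
  have i2 := H c₂ (by omega)
  have i3 := H (d₁ - 1) (by omega)
  have i4 := H (d₂ - 1) (by omega)
  have i5 := H c (by omega)
  have i6 := H (d - 1) (by omega)
  have i7 : d₁ < n → _ := fun h => H d₁ h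
  have i8 : d₂ < n → _ := fun h => H d₂ h
  rcases hord with hord | hord
  · left
    refine ⟨by omega, ?_, by omega⟩
    rcases Nat.lt_or_ge d₁ n with hn1 | hn1
    · have := i7 hn1; omega
    · omega
  · right
    refine ⟨by omega, ?_, by omega⟩
    rcases Nat.lt_or_ge d₂ n with hn1 | hn1
    · have := i8 hn1; omega
    · omega

/-- The family of interval labels of the binary tree `t` placed at offset `a`. -/
def toFam (n : ℕ) : ℕ → BinaryTree Unit → Finset (Finset (Fin n))
  | a, BinaryTree.nil => {iv n a (a + 1)}
  | a, BinaryTree.node _ l r =>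
      insert (iv n a (a + (l.numLeaves + r.numLeaves)))
        (toFam n a l ∪ toFam n (a + l.numLeaves) r)

@[simp] lemma numLeaves_nil : (BinaryTree.nil : BinaryTree Unit).numLeaves = 1 := rfl
@[simp] lemma numLeaves_node (x : Unit) (l r : BinaryTree Unit) :
    (BinaryTree.node x l r).numLeaves = l.numLeaves + r.numLeaves := rfl

lemma toFam_shape {n : ℕ} : ∀ (t : BinaryTree Unit) (a : ℕ) (U : Finset (Fin n)),
    U ∈ toFam n a t → ∃ c d, a ≤ c ∧ c < d ∧ d ≤ a + t.numLeaves ∧ U = iv n c d := by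
  intro t
  induction t with
  | nil =>
    intro a U hU
    simp only [toFam, Finset.mem_singleton] at hU
    exact ⟨a, a + 1, le_refl _, by omega, by simp, hU⟩
  | node x l r ihl ihr =>
    intro a U hU
    simp only [toFam, Finset.mem_insert, Finset.mem_union] at hU
    rcases hU with rfl | hU | hU
    · exact ⟨a, a + (l.numLeaves + r.numLeaves), le_refl _,
        by have := l.numLeaves_pos; omega, by simp, rfl⟩
    · obtain ⟨c, d, h1, h2, h3, h4⟩ := ihl a U hU
      exact ⟨c, d, h1, h2, by simp; omega, h4⟩
    · obtain ⟨c, d, h1, h2, h3, h4⟩ := ihr (a + l.numLeaves) U hU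
      exact ⟨c, d, by omega, h2, by simp; omega, h4⟩

lemma root_mem_toFam {n : ℕ} (t : BinaryTree Unit) (a : ℕ) :
    iv n a (a + t.numLeaves) ∈ toFam n a t := by
  cases t with
  | nil => simp [toFam]
  | node x l r => simp [toFam]

lemma singleton_mem_toFam {n : ℕ} : ∀ (t : BinaryTree Unit) (a v : ℕ), a ≤ v → v < a + t.numLeaves →
    iv n v (v + 1) ∈ toFam n a t := by
  intro t
  induction t with
  | nil =>
    intro a v h1 h2
    simp only [numLeaves_nil] at h2
    have : v = a := by omega
    simp [toFam, this]
  | node x l r ihl ihr =>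
    intro a v h1 h2
    simp only [toFam, Finset.mem_insert, Finset.mem_union]
    rcases Nat.lt_or_ge v (a + l.numLeaves) with h | h
    · exact Or.inr (Or.inl (ihl a v h1 h))
    · exact Or.inr (Or.inr (ihr (a + l.numLeaves) v h (by simp at h2; omega)))

lemma card_toFam {n : ℕ} : ∀ (t : BinaryTree Unit) (a : ℕ), a + t.numLeaves ≤ n →
    (toFam n a t).card = 2 * t.numLeaves - 1 := by
  intro t
  induction t with
  | nil => intro a _; simp [toFam]
  | node x l r ihl ihr =>
    intro a hn
    simp only [numLeaves_node] at hn
    have hl := l.numLeaves_pos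
    have hr := r.numLeaves_pos
    have hdisj : Disjoint (toFam n a l) (toFam n (a + l.numLeaves) r) := by
      rw [Finset.disjoint_left]
      intro U hU hU'
      obtain ⟨c, d, p1, p2, p3, hp⟩ := toFam_shape l a U hU
      obtain ⟨c', d', q1, q2, q3, hq⟩ := toFam_shape r (a + l.numLeaves) U hU'
      rw [hp] at hq
      have := iv_inj p2 (by omega) q2 (by omega) hq
      omega
    have hroot : iv n a (a + (l.numLeaves + r.numLeaves)) ∉ toFam n a l ∪ toFam n (a + l.numLeaves) r := by
      intro h
      rcases Finset.mem_union.mp h with h | h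
      · obtain ⟨c, d, p1, p2, p3, hq⟩ := toFam_shape l a _ h
        have := iv_inj (show a < a + (l.numLeaves + r.numLeaves) by omega) (by omega) p2 (by omega) hq
        omega
      · obtain ⟨c, d, p1, p2, p3, hq⟩ := toFam_shape r (a + l.numLeaves) _ h
        have := iv_inj (show a < a + (l.numLeaves + r.numLeaves) by omega) (by omega) p2 (by omega) hq
        omega
    simp only [toFam]
    rw [Finset.card_insert_of_notMem hroot, Finset.card_union_of_disjoint hdisj,
      ihl a (by omega), ihr (a + l.numLeaves) (by omega)]
    simp only [numLeaves_node]
    omega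

lemma toFam_subset_root {n : ℕ} (t : BinaryTree Unit) (a : ℕ) {U : Finset (Fin n)}
    (hU : U ∈ toFam n a t) : U ⊆ iv n a (a + t.numLeaves) := by
  obtain ⟨c, d, p1, p2, p3, rfl⟩ := toFam_shape t a U hU
  exact iv_subset p1 p3

lemma toFam_laminar {n : ℕ} : ∀ (t : BinaryTree Unit) (a : ℕ),
    ∀ U₁ ∈ toFam n a t, ∀ U₂ ∈ toFam n a t, U₁ ⊆ U₂ ∨ U₂ ⊆ U₁ ∨ Disjoint U₁ U₂ := by
  intro t
  induction t with
  | nil =>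
    intro a U₁ h₁ U₂ h₂
    simp only [toFam, Finset.mem_singleton] at h₁ h₂
    subst h₁; subst h₂; exact Or.inl (le_refl _)
  | node x l r ihl ihr =>
    intro a U₁ h₁ U₂ h₂
    simp only [toFam, Finset.mem_insert, Finset.mem_union] at h₁ h₂
    rcases h₁ with rfl | h₁ | h₁
    · rcases h₂ with rfl | h₂ | h₂
      · exact Or.inl (le_refl _)
      · exact Or.inr (Or.inl ((toFam_subset_root l a h₂).trans (iv_subset (le_refl _) (by omega))))
      · exact Or.inr (Or.inl ((toFam_subset_root r _ h₂).trans (iv_subset (by omega) (by omega))))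
    · rcases h₂ with rfl | h₂ | h₂
      · exact Or.inl ((toFam_subset_root l a h₁).trans (iv_subset (le_refl _) (by omega)))
      · exact ihl a U₁ h₁ U₂ h₂
      · obtain ⟨c, d, p1, p2, p3, rfl⟩ := toFam_shape l a U₁ h₁
        obtain ⟨c', d', q1, q2, q3, rfl⟩ := toFam_shape r _ U₂ h₂
        exact Or.inr (Or.inr (iv_disjoint (by omega)))
    · rcases h₂ with rfl | h₂ | h₂
      · exact Or.inl ((toFam_subset_root r _ h₁).trans (iv_subset (by omega) (by omega)))
      · obtain ⟨c, d, p1, p2, p3, rfl⟩ := toFam_shape r _ U₁ h₁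
        obtain ⟨c', d', q1, q2, q3, rfl⟩ := toFam_shape l a U₂ h₂
        exact Or.inr (Or.inr (iv_disjoint (by omega)).symm)
      · exact ihr _ U₁ h₁ U₂ h₂

lemma toFam_split {n : ℕ} : ∀ (t : BinaryTree Unit) (a : ℕ), a + t.numLeaves ≤ n →
    ∀ U ∈ toFam n a t, 2 ≤ U.card →
    ∃ U₁ ∈ toFam n a t, ∃ U₂ ∈ toFam n a t, Disjoint U₁ U₂ ∧ U₁ ∪ U₂ = U ∧
      ∃ v₁ ∈ U₁, ∃ v₂ ∈ U₂, (SimpleGraph.pathGraph n).Adj v₁ v₂ := by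
  intro t
  induction t with
  | nil =>
    intro a hn U hU hcard
    simp only [toFam, Finset.mem_singleton] at hU
    subst hU
    rw [card_iv (by simpa using hn)] at hcard
    omega
  | node x l r ihl ihr =>
    intro a hn U hU hcard
    simp only [numLeaves_node] at hn
    have hl := l.numLeaves_pos
    have hr := r.numLeaves_pos
    simp only [toFam, Finset.mem_insert, Finset.mem_union] at hU
    have memL : ∀ W ∈ toFam n a l,
        W ∈ insert (iv n a (a + (l.numLeaves + r.numLeaves)))
          (toFam n a l ∪ toFam n (a + l.numLeaves) r) := fun W hW =>
      Finset.mem_insert_of_mem (Finset.mem_union_left _ hW)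
    have memR : ∀ W ∈ toFam n (a + l.numLeaves) r,
        W ∈ insert (iv n a (a + (l.numLeaves + r.numLeaves)))
          (toFam n a l ∪ toFam n (a + l.numLeaves) r) := fun W hW =>
      Finset.mem_insert_of_mem (Finset.mem_union_right _ hW)
    rcases hU with rfl | hU | hU
    · -- split the root
      refine ⟨iv n a (a + l.numLeaves), ?_, iv n (a + l.numLeaves) (a + (l.numLeaves + r.numLeaves)), ?_,
        iv_disjoint (le_refl _), iv_union (by omega) (by omega), ?_⟩
      · exact memL _ (root_mem_toFam l a)
      · have := root_mem_toFam (n := n) r (a + l.numLeaves)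
        rw [show a + l.numLeaves + r.numLeaves = a + (l.numLeaves + r.numLeaves) by omega] at this
        exact memR _ this
      · refine ⟨⟨a + l.numLeaves - 1, by omega⟩, by simp; omega,
          ⟨a + l.numLeaves, by omega⟩, by simp; omega, ?_⟩
        rw [SimpleGraph.pathGraph_adj]
        left; simp; omega
    · obtain ⟨U₁, m₁, U₂, m₂, hrest⟩ := ihl a (by omega) U hU hcard
      exact ⟨U₁, memL _ m₁, U₂, memL _ m₂, hrest⟩
    · obtain ⟨U₁, m₁, U₂, m₂, hrest⟩ := ihr (a + l.numLeaves) (by omega) U hU hcard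
      exact ⟨U₁, memR _ m₁, U₂, memR _ m₂, hrest⟩

lemma toFam_isAssembly {n : ℕ} (hn : 1 ≤ n) (t : BinaryTree Unit) (ht : t.numLeaves = n) :
    IsAssemblyFamily (SimpleGraph.pathGraph n) (toFam n 0 t) := by
  have huniv : (Finset.univ : Finset (Fin n)) = iv n 0 n := by
    ext x; simp [x.isLt]
  refine ⟨?_, ?_, ?_, ?_, ?_, ?_⟩
  · intro v
    rw [singleton_eq_iv]
    exact singleton_mem_toFam t 0 v.val (Nat.zero_le _) (by rw [ht]; simpa using v.isLt)
  · rw [huniv]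
    have := root_mem_toFam (n := n) t 0
    rw [ht] at this
    simpa using this
  · intro U hU
    obtain ⟨c, d, p1, p2, p3, rfl⟩ := toFam_shape t 0 U hU
    exact iv_nonempty p2 (by omega)
  · exact toFam_laminar t 0
  · exact toFam_split t 0 (by omega)
  · rw [card_toFam t 0 (by omega), ht]
    simp

/-- Every member of an assembly family for the path graph is an interval. -/
lemma assembly_mem_interval {n : ℕ} {F : Finset (Finset (Fin n))}
    (hF : IsAssemblyFamily (SimpleGraph.pathGraph n) F) :
    ∀ U ∈ F, ∃ c d, c < d ∧ d ≤ n ∧ U = iv n c d := by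
  obtain ⟨hsing, huniv, hne, hlam, hsplit, hcard⟩ := hF
  suffices h : ∀ m, ∀ U ∈ F, U.card ≤ m → ∃ c d, c < d ∧ d ≤ n ∧ U = iv n c d by
    intro U hU; exact h U.card U hU (le_refl _)
  intro m
  induction m with
  | zero =>
    intro U hU hc
    have := hne U hU
    rw [← Finset.card_pos] at this
    omega
  | succ m ih =>
    intro U hU hc
    rcases Nat.lt_or_ge U.card 2 with h2 | h2
    · -- singleton
      have h1 : U.card = 1 := by
        have := hne U hU; rw [← Finset.card_pos] at this; omega
      obtain ⟨v, rfl⟩ := Finset.card_eq_one.mp h1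
      exact ⟨v.val, v.val + 1, by omega, by omega, singleton_eq_iv v⟩
    · obtain ⟨U₁, m₁, U₂, m₂, hdisj, hun, v₁, hv₁, v₂, hv₂, hadj⟩ := hsplit U hU h2
      have hne₁ := hne U₁ m₁
      have hne₂ := hne U₂ m₂
      have hsub₁ : U₁ ⊂ U := by
        constructor
        · rw [← hun]; exact Finset.subset_union_left
        · intro hsub
          obtain ⟨x, hx⟩ := hne₂
          exact (Finset.disjoint_right.mp hdisj hx) (hsub (hun ▸ Finset.mem_union_right _ hx))
      have hsub₂ : U₂ ⊂ U := by
        constructor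
        · rw [← hun]; exact Finset.subset_union_right
        · intro hsub
          obtain ⟨x, hx⟩ := hne₁
          exact (Finset.disjoint_left.mp hdisj hx) (hsub (hun ▸ Finset.mem_union_left _ hx))
      obtain ⟨c₁, d₁, p1, p2, rfl⟩ := ih U₁ m₁ (by have := Finset.card_lt_card hsub₁; omega)
      obtain ⟨c₂, d₂, q1, q2, rfl⟩ := ih U₂ m₂ (by have := Finset.card_lt_card hsub₂; omega)
      simp only [mem_iv] at hv₁ hv₂
      rw [SimpleGraph.pathGraph_adj] at hadj
      have hord := iv_disjoint_cases p1 p2 q1 q2 hdisj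
      rcases hadj with hadj | hadj
      · -- v₁ + 1 = v₂
        have hk : d₁ = c₂ := by omega
        exact ⟨c₁, d₂, by omega, q2, by rw [← hun, hk, iv_union (by omega) (by omega)]⟩
      · have hk : d₂ = c₁ := by omega
        refine ⟨c₂, d₁, by omega, p2, ?_⟩
        rw [← hun, Finset.union_comm, hk, iv_union (by omega) (by omega)]

/-- Decoding: every interval in an assembly family carries a subtree. -/
lemma assembly_decode {n : ℕ} {F : Finset (Finset (Fin n))}
    (hF : IsAssemblyFamily (SimpleGraph.pathGraph n) F) :
    ∀ m c d, c < d → d ≤ n → d - c ≤ m → iv n c d ∈ F →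
    ∃ t : BinaryTree Unit, t.numLeaves = d - c ∧ toFam n c t ⊆ F := by
  obtain ⟨hsing, huniv, hne, hlam, hsplit, hcard⟩ := hF
  have hint := assembly_mem_interval ⟨hsing, huniv, hne, hlam, hsplit, hcard⟩
  intro m
  induction m with
  | zero => intro c d h1 h2 h3 h4; omega
  | succ m ih =>
    intro c d h1 h2 h3 hmem
    rcases Nat.lt_or_ge (d - c) 2 with hsmall | hbig
    · have hd : d = c + 1 := by omega
      subst hd
      refine ⟨BinaryTree.nil, by simp, ?_⟩
      simp only [toFam]
      intro U hU
      simp only [Finset.mem_singleton] at hU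
      subst hU; exact hmem
    · have hc2 : 2 ≤ (iv n c d).card := by rw [card_iv h2]; omega
      obtain ⟨U₁, m₁, U₂, m₂, hdisj, hun, _⟩ := hsplit _ hmem hc2
      obtain ⟨c₁, d₁, p1, p2, hU1⟩ := hint U₁ m₁
      obtain ⟨c₂, d₂, q1, q2, hU2⟩ := hint U₂ m₂
      subst hU1; subst hU2
      have := interval_split p1 p2 q1 q2 h1 h2 hdisj hun
      -- extract split point k
      obtain ⟨k, hk1, hk2, e1, e2⟩ :
          ∃ k, c < k ∧ k < d ∧ iv n c k ∈ F ∧ iv n k d ∈ F := by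
        rcases this with ⟨rfl, rfl, rfl⟩ | ⟨rfl, rfl, rfl⟩
        · exact ⟨d₁, p1, q1.trans_le (le_refl _) |>.trans_le (le_refl _) |> fun _ => by omega, m₁, m₂⟩
        · exact ⟨d₂, q1, by omega, m₂, m₁⟩
      obtain ⟨t₁, ht₁, hs₁⟩ := ih c k hk1 (by omega) (by omega) e1
      obtain ⟨t₂, ht₂, hs₂⟩ := ih k d hk2 h2 (by omega) e2
      refine ⟨BinaryTree.node () t₁ t₂, by simp; omega, ?_⟩
      simp only [toFam]
      rw [show c + t₁.numLeaves = k by omega,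
        show c + (t₁.numLeaves + t₂.numLeaves) = d by omega]
      intro U hU
      rcases Finset.mem_insert.mp hU with rfl | hU
      · exact hmem
      · rcases Finset.mem_union.mp hU with h | h
        · exact hs₁ h
        · exact hs₂ h

lemma toFam_subfam_eq {n : ℕ} {l r l' r' : BinaryTree Unit} {a : ℕ}
    (hn : a + (l.numLeaves + r.numLeaves) ≤ n)
    (hL : l.numLeaves = l'.numLeaves) (hR : r.numLeaves = r'.numLeaves)
    (heq : toFam n a (BinaryTree.node () l r) = toFam n a (BinaryTree.node () l' r')) :
    toFam n a l ⊆ toFam n a l' ∧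
      toFam n (a + l.numLeaves) r ⊆ toFam n (a + l.numLeaves) r' := by
  have hl := l.numLeaves_pos
  have hr := r.numLeaves_pos
  simp only [toFam] at heq
  constructor
  · intro U hU
    obtain ⟨c, d, p1, p2, p3, hUeq⟩ := toFam_shape l a U hU
    have hmem : U ∈ insert (iv n a (a + (l'.numLeaves + r'.numLeaves)))
        (toFam n a l' ∪ toFam n (a + l'.numLeaves) r') := by
      rw [← heq]
      exact Finset.mem_insert_of_mem (Finset.mem_union_left _ hU)
    rcases Finset.mem_insert.mp hmem with h | h
    · exfalso
      rw [hUeq] at h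
      have := iv_inj p2 (by omega) (show a < a + (l'.numLeaves + r'.numLeaves) by omega)
        (by omega) h
      omega
    · rcases Finset.mem_union.mp h with h | h
      · exact h
      · exfalso
        obtain ⟨c', d', q1, q2, q3, hUeq'⟩ := toFam_shape r' (a + l'.numLeaves) U h
        rw [hUeq] at hUeq'
        have := iv_inj p2 (by omega) q2 (by omega) hUeq'
        omega
  · intro U hU
    obtain ⟨c, d, p1, p2, p3, hUeq⟩ := toFam_shape r (a + l.numLeaves) U hU
    have hmem : U ∈ insert (iv n a (a + (l'.numLeaves + r'.numLeaves)))
        (toFam n a l' ∪ toFam n (a + l'.numLeaves) r') := by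
      rw [← heq]
      exact Finset.mem_insert_of_mem (Finset.mem_union_right _ hU)
    rcases Finset.mem_insert.mp hmem with h | h
    · exfalso
      rw [hUeq] at h
      have := iv_inj p2 (by omega) (show a < a + (l'.numLeaves + r'.numLeaves) by omega)
        (by omega) h
      omega
    · rcases Finset.mem_union.mp h with h | h
      · exfalso
        obtain ⟨c', d', q1, q2, q3, hUeq'⟩ := toFam_shape l' a U h
        rw [hUeq] at hUeq'
        have := iv_inj p2 (by omega) q2 (by omega) hUeq'
        omega
      · rwa [← hL] at h

lemma toFam_inj {n : ℕ} : ∀ (t t' : BinaryTree Unit) (a : ℕ), a + t.numLeaves ≤ n →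
    t.numLeaves = t'.numLeaves → toFam n a t = toFam n a t' → t = t' := by
  intro t
  induction t with
  | nil =>
    intro t' a hn hL heq
    cases t' with
    | nil => rfl
    | node x l r =>
      exfalso
      have hl := l.numLeaves_pos
      have hr := r.numLeaves_pos
      simp at hL
      omega
  | node x l r ihl ihr =>
    intro t' a hn hL heq
    cases t' with
    | nil =>
      exfalso
      have hl := l.numLeaves_pos
      have hr := r.numLeaves_pos
      simp at hL
      omega
    | node x' l' r' =>
      cases x; cases x'
      have hl := l.numLeaves_pos
      have hr := r.numLeaves_pos
      have hl' := l'.numLeaves_pos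
      have hr' := r'.numLeaves_pos
      simp only [numLeaves_node] at hL hn
      -- first show l.numLeaves = l'.numLeaves
      have hLL : l.numLeaves = l'.numLeaves := by
        by_contra hne
        -- WLOG handled by symmetry: use the root of the smaller left in the other family
        have key : ∀ (l r l' r' : BinaryTree Unit) (a : ℕ), a + (l.numLeaves + r.numLeaves) ≤ n →
            l.numLeaves + r.numLeaves = l'.numLeaves + r'.numLeaves →
            toFam n a (BinaryTree.node () l r) = toFam n a (BinaryTree.node () l' r') →
            l.numLeaves ≤ l'.numLeaves := by
          intro l r l' r' a hn hL heq
          have hl := l.numLeaves_pos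
          have hr := r.numLeaves_pos
          have hl' := l'.numLeaves_pos
          have hr' := r'.numLeaves_pos
          have hmem : iv n a (a + l.numLeaves) ∈ toFam n a (BinaryTree.node () l' r') := by
            rw [← heq]
            simp only [toFam]
            exact Finset.mem_insert_of_mem (Finset.mem_union_left _ (root_mem_toFam l a))
          simp only [toFam, Finset.mem_insert, Finset.mem_union] at hmem
          rcases hmem with h | h | h
          · have := iv_inj (show a < a + l.numLeaves by omega) (by omega)
              (show a < a + (l'.numLeaves + r'.numLeaves) by omega) (by omega) h
            omega
          · obtain ⟨c, d, q1, q2, q3, hUeq⟩ := toFam_shape l' a _ h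
            have := iv_inj (show a < a + l.numLeaves by omega) (by omega) q2 (by omega) hUeq
            omega
          · obtain ⟨c, d, q1, q2, q3, hUeq⟩ := toFam_shape r' (a + l'.numLeaves) _ h
            have := iv_inj (show a < a + l.numLeaves by omega) (by omega) q2 (by omega) hUeq
            omega
        have h1 := key l r l' r' a hn hL heq
        have h2 := key l' r' l r a (by omega) hL.symm heq.symm
        omega
      have hRR : r.numLeaves = r'.numLeaves := by omega
      obtain ⟨s1, s2⟩ := toFam_subfam_eq hn hLL hRR heq
      obtain ⟨s3, s4⟩ := toFam_subfam_eq (by omega) hLL.symm hRR.symm heq.symm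
      rw [← hLL] at s4
      have e1 : toFam n a l = toFam n a l' := Finset.Subset.antisymm s1 s3
      have e2 : toFam n (a + l.numLeaves) r = toFam n (a + l.numLeaves) r' :=
        Finset.Subset.antisymm s2 s4
      rw [ihl l' a (by omega) hLL e1, ihr r' (a + l.numLeaves) (by omega) hRR e2]

/-- The number of assembly trees of the path `Pₙ` is the Catalan number
`(1/n) C(2n-2, n-1)`. -/
theorem assemblyTreeCount_path (n : ℕ) (hn : 1 ≤ n) :
    assemblyTreeCount (SimpleGraph.pathGraph n) = catalan (n - 1) ∧
    n * assemblyTreeCount (SimpleGraph.pathGraph n) = (2 * n - 2).choose (n - 1) := by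
  have hmain : assemblyTreeCount (SimpleGraph.pathGraph n) = catalan (n - 1) := by
    have hbij : Function.Bijective
        (fun t : {t : BinaryTree Unit // t.numLeaves = n} =>
          (⟨toFam n 0 t.val, toFam_isAssembly hn t.val t.prop⟩ :
            {F : Finset (Finset (Fin n)) // IsAssemblyFamily (SimpleGraph.pathGraph n) F})) := by
      constructor
      · rintro ⟨t, ht⟩ ⟨t', ht'⟩ h
        simp only [Subtype.mk.injEq] at h
        exact Subtype.ext (toFam_inj t t' 0 (by omega) (ht.trans ht'.symm) h)
      · rintro ⟨F, hF⟩
        have huniv : iv n 0 n ∈ F := by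
          have := hF.2.1
          have he : (Finset.univ : Finset (Fin n)) = iv n 0 n := by
            ext x; simp [x.isLt]
          rwa [he] at this
        obtain ⟨t, ht, hsub⟩ := assembly_decode hF n 0 n (by omega) (le_refl _) (by omega) huniv
        rw [Nat.sub_zero] at ht
        have hcards : F.card ≤ (toFam n 0 t).card := by
          rw [card_toFam t 0 (by omega), ht, hF.2.2.2.2.2, Fintype.card_fin]
        have : toFam n 0 t = F := Finset.eq_of_subset_of_card_le hsub hcards
        exact ⟨⟨t, ht⟩, Subtype.ext this⟩
    have h1 : Nat.card {t : BinaryTree Unit // t.numLeaves = n}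
        = assemblyTreeCount (SimpleGraph.pathGraph n) := Nat.card_eq_of_bijective _ hbij
    rw [← h1]
    have e : {t : BinaryTree Unit // t.numLeaves = n}
        ≃ {t : BinaryTree Unit // t ∈ BinaryTree.treesOfNumNodesEq (n - 1)} :=
      Equiv.subtypeEquivRight (fun t => by
        rw [BinaryTree.mem_treesOfNumNodesEq, BinaryTree.numLeaves_eq_numNodes_succ]
        omega)
    rw [Nat.card_congr e, Nat.card_eq_finsetCard, BinaryTree.treesOfNumNodesEq_card_eq_catalan]
  refine ⟨hmain, ?_⟩
  rw [hmain]
  obtain ⟨m, rfl⟩ : ∃ m, n = m + 1 := ⟨n - 1, by omega⟩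
  have h := succ_mul_catalan_eq_centralBinom m
  rw [Nat.succ_sub_one, show 2 * (m + 1) - 2 = 2 * m by omega]
  rw [h, Nat.centralBinom]
end

section
/- The number of assembly trees of the cycle $C_n$ on $n$ vertices (using the edge gluing rule) is $\frac{1}{2}\binom{2n-2}{n-1}$. -/
open Finset
open Fin.NatCast Fin.CommRing

namespace AssemblyAux

variable {n : ℕ} [NeZero n]

/-- the arc starting at `s` of length `l` in the cycle `Fin n` -/
def arc (s : Fin n) (l : ℕ) : Finset (Fin n) :=
  (Finset.range l).image fun i : ℕ => s + (i : Fin n)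

lemma mem_arc {s v : Fin n} {l : ℕ} : v ∈ arc s l ↔ ∃ i < l, s + (i : Fin n) = v := by
  simp [arc]

lemma natCast_fin_inj {i j : ℕ} (hi : i < n) (hj : j < n) (h : (i : Fin n) = j) : i = j := by
  have := congrArg Fin.val h
  rwa [Fin.val_natCast, Fin.val_natCast, Nat.mod_eq_of_lt hi, Nat.mod_eq_of_lt hj] at this

lemma add_natCast_inj {s : Fin n} {i j : ℕ} (hi : i < n) (hj : j < n)
    (h : s + (i : Fin n) = s + (j : Fin n)) : i = j :=
  natCast_fin_inj hi hj (by exact add_left_cancel h)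

lemma add_natCast_ne {s : Fin n} {m : ℕ} (h0 : 0 < m) (hm : m < n) : s + (m : Fin n) ≠ s := by
  intro h
  have h' : s + ((m : ℕ) : Fin n) = s + ((0 : ℕ) : Fin n) := by
    rw [Nat.cast_zero, add_zero]; exact h
  have : m = 0 := add_natCast_inj hm (Nat.pos_of_ne_zero (NeZero.ne n)) h'
  omega

lemma card_arc {s : Fin n} {l : ℕ} (hl : l ≤ n) : (arc s l).card = l := by
  rw [arc, Finset.card_image_of_injOn, Finset.card_range]
  intro i hi j hj h
  exact add_natCast_inj (lt_of_lt_of_le (mem_range.mp hi) hl) (lt_of_lt_of_le (mem_range.mp hj) hl) h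

lemma arc_subset {s : Fin n} {j l : ℕ} (hjl : j ≤ l) : arc s j ⊆ arc s l := by
  intro v hv
  obtain ⟨i, hi, rfl⟩ := mem_arc.mp hv
  exact mem_arc.mpr ⟨i, lt_of_lt_of_le hi hjl, rfl⟩

lemma arc_union {s : Fin n} {j l : ℕ} (hjl : j ≤ l) :
    arc s j ∪ arc (s + (j : Fin n)) (l - j) = arc s l := by
  ext v
  simp only [Finset.mem_union, mem_arc]
  constructor
  · rintro (⟨i, hi, rfl⟩ | ⟨i, hi, rfl⟩)
    · exact ⟨i, lt_of_lt_of_le hi hjl, rfl⟩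
    · exact ⟨j + i, by omega, by push_cast; ring⟩
  · rintro ⟨i, hi, rfl⟩
    rcases lt_or_ge i j with h | h
    · exact Or.inl ⟨i, h, rfl⟩
    · exact Or.inr ⟨i - j, by omega, by
        have : ((j : ℕ) : Fin n) + ((i - j : ℕ) : Fin n) = (i : Fin n) := by
          rw [← Nat.cast_add]; congr 1; omega
        rw [add_assoc, this]⟩

lemma arc_disjoint {s : Fin n} {j l : ℕ} (hjl : j ≤ l) (hl : l ≤ n) :
    Disjoint (arc s j) (arc (s + (j : Fin n)) (l - j)) := by
  rw [Finset.disjoint_left]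
  intro v hv hv'
  obtain ⟨i, hi, rfl⟩ := mem_arc.mp hv
  obtain ⟨i', hi', h⟩ := mem_arc.mp hv'
  rw [add_assoc, ← Nat.cast_add] at h
  have := add_natCast_inj (by omega) (by omega) h
  omega

lemma arc_univ {s : Fin n} : arc s n = Finset.univ :=
  Finset.eq_univ_of_card _ (by rw [card_arc le_rfl, Fintype.card_fin])

lemma arc_one {s : Fin n} : arc s 1 = {s} := by
  ext v
  simp only [mem_arc, Nat.lt_one_iff, Finset.mem_singleton]
  constructor
  · rintro ⟨i, rfl, rfl⟩; simp
  · rintro rfl; exact ⟨0, rfl, by simp⟩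

lemma mem_arc_self {s : Fin n} {l : ℕ} (hl : 0 < l) : s ∈ arc s l :=
  mem_arc.mpr ⟨0, hl, by simp⟩

lemma eq_last {s v : Fin n} {l : ℕ} (hl : 0 < l) (hv : v ∈ arc s l) (hv1 : v + 1 ∉ arc s l) :
    v = s + ((l - 1 : ℕ) : Fin n) := by
  obtain ⟨i, hi, rfl⟩ := mem_arc.mp hv
  have : i = l - 1 := by
    by_contra hne
    exact hv1 (mem_arc.mpr ⟨i + 1, by omega, by rw [Nat.cast_add_one, ← add_assoc]⟩)
  rw [this]

lemma eq_first {s v : Fin n} {l : ℕ} (hv : v ∈ arc s l) (hv1 : v - 1 ∉ arc s l) : v = s := by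
  obtain ⟨i, hi, rfl⟩ := mem_arc.mp hv
  have : i = 0 := by
    by_contra hne
    refine hv1 (mem_arc.mpr ⟨i - 1, by omega, ?_⟩)
    have : ((i - 1 : ℕ) : Fin n) + 1 = (i : Fin n) := by
      rw [← Nat.cast_add_one]; congr 1; omega
    rw [← this]; ring
  rw [this]; simp

lemma subarc {s t : Fin n} {a l : ℕ} (hln : l < n) (ha : 0 < a) (hsub : arc t a ⊆ arc s l) :
    ∃ d, d + a ≤ l ∧ t = s + (d : Fin n) := by
  obtain ⟨d, hd, hdt⟩ := mem_arc.mp (hsub (mem_arc_self ha))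
  refine ⟨d, ?_, hdt.symm⟩
  have key : ∀ k, k < a → d + k < l := by
    intro k
    induction k with
    | zero => intro _; omega
    | succ k ih =>
      intro hk
      have hk' : d + k < l := ih (by omega)
      have hmem : t + ((k + 1 : ℕ) : Fin n) ∈ arc s l :=
        hsub (mem_arc.mpr ⟨k + 1, hk, rfl⟩)
      obtain ⟨i, hi, hieq⟩ := mem_arc.mp hmem
      rw [← hdt, add_assoc, ← Nat.cast_add] at hieq
      have := add_natCast_inj (by omega) (by omega) hieq
      omega
  have := key (a - 1) (by omega)
  omega

lemma arc_start_unique {s s' : Fin n} {j : ℕ} (hj : 1 ≤ j) (hjn : j < n)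
    (h : arc s j = arc s' j) : s = s' := by
  have hs' : s' ∈ arc s j := h ▸ mem_arc_self (show 0 < j by omega)
  have hns : s' - 1 ∉ arc s j := by
    rw [h]
    intro hc
    obtain ⟨i, hi, hieq⟩ := mem_arc.mp hc
    have h2 : s' + ((i + 1 : ℕ) : Fin n) = s' := by
      rw [Nat.cast_add_one, ← add_assoc, hieq]; ring
    exact add_natCast_ne (by omega) (by omega) h2
  exact (eq_first hs' hns).symm


/-! ### Splitting families -/

/-- The predicate on `F` of being the label family of a binary splitting tree of the
arc `arc s l`, with splits joined by edges of the cycle graph. -/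
def SplitFam (s : Fin n) (l : ℕ) (F : Finset (Finset (Fin n))) : Prop :=
  (∀ v ∈ arc s l, ({v} : Finset (Fin n)) ∈ F) ∧
  arc s l ∈ F ∧
  (∀ U ∈ F, U.Nonempty) ∧
  (∀ U ∈ F, U ⊆ arc s l) ∧
  (∀ U₁ ∈ F, ∀ U₂ ∈ F, U₁ ⊆ U₂ ∨ U₂ ⊆ U₁ ∨ Disjoint U₁ U₂) ∧
  (∀ U ∈ F, 2 ≤ U.card → ∃ U₁ ∈ F, ∃ U₂ ∈ F, Disjoint U₁ U₂ ∧ U₁ ∪ U₂ = U ∧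
      ∃ v₁ ∈ U₁, ∃ v₂ ∈ U₂, (SimpleGraph.cycleGraph n).Adj v₁ v₂) ∧
  F.card = 2 * l - 1

lemma adj_iff (hn : 3 ≤ n) {u v : Fin n} :
    (SimpleGraph.cycleGraph n).Adj u v ↔ u = v + 1 ∨ v = u + 1 := by
  rw [SimpleGraph.cycleGraph_adj']
  have h1 : ((1 : Fin n) : ℕ) = 1 := by
    have h : ((1 : ℕ) : Fin n).val = 1 % n := Fin.val_natCast ..
    rw [Nat.cast_one] at h
    rw [h, Nat.mod_eq_of_lt (by omega)]
  constructor
  · rintro (h | h)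
    · left
      have : u - v = 1 := Fin.ext (by rw [h, h1])
      rw [sub_eq_iff_eq_add] at this
      rw [this]; ring
    · right
      have : v - u = 1 := Fin.ext (by rw [h, h1])
      rw [sub_eq_iff_eq_add] at this
      rw [this]; ring
  · rintro (rfl | rfl)
    · left
      have e : v + 1 - v = (1 : Fin n) := by ring
      rw [e, h1]
    · right
      have e : u + 1 - u = (1 : Fin n) := by ring
      rw [e, h1]

lemma adj_consec (hn : 3 ≤ n) (v : Fin n) : (SimpleGraph.cycleGraph n).Adj v (v + 1) :=
  (adj_iff hn).mpr (Or.inr rfl)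

/-- every member of a family with the split property is an arc -/
lemma arcness (hn : 3 ≤ n) {F : Finset (Finset (Fin n))}
    (hne : ∀ U ∈ F, U.Nonempty)
    (hsp : ∀ U ∈ F, 2 ≤ U.card → ∃ U₁ ∈ F, ∃ U₂ ∈ F, Disjoint U₁ U₂ ∧ U₁ ∪ U₂ = U ∧
      ∃ v₁ ∈ U₁, ∃ v₂ ∈ U₂, (SimpleGraph.cycleGraph n).Adj v₁ v₂) :
    ∀ U ∈ F, ∃ t, U = arc t U.card := by
  have key : ∀ (U₁ U₂ : Finset (Fin n)) (t₁ t₂ v₁ v₂ : Fin n),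
      U₁ = arc t₁ U₁.card → U₂ = arc t₂ U₂.card → U₁.Nonempty → U₂.Nonempty →
      Disjoint U₁ U₂ → v₁ ∈ U₁ → v₂ ∈ U₂ → v₂ = v₁ + 1 →
      U₁ ∪ U₂ = arc t₁ (U₁ ∪ U₂).card := by
    intro U₁ U₂ t₁ t₂ v₁ v₂ h₁ h₂ hne₁ hne₂ hdisj hv₁ hv₂ hadj
    set a := U₁.card with ha
    set b := U₂.card with hb
    have hapos : 0 < a := Finset.card_pos.mpr hne₁
    have hbpos : 0 < b := Finset.card_pos.mpr hne₂
    have hv1n : v₁ + 1 ∉ U₁ := fun hc => (Finset.disjoint_left.mp hdisj hc) (hadj ▸ hv₂)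
    have hlast : v₁ = t₁ + ((a - 1 : ℕ) : Fin n) :=
      eq_last hapos (h₁ ▸ hv₁) (fun hc => hv1n (h₁ ▸ hc))
    have hv2n : v₂ - 1 ∉ U₂ := by
      rw [hadj]; simpa using fun hc => (Finset.disjoint_left.mp hdisj hv₁) hc
    have hfirst : v₂ = t₂ :=
      eq_first (h₂ ▸ hv₂) (fun hc => hv2n (h₂ ▸ hc))
    have ht₂ : t₂ = t₁ + (a : Fin n) := by
      rw [← hfirst, hadj, hlast, add_assoc]
      congr 1
      rw [← Nat.cast_add_one]
      congr 1
      omega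
    have hcard : (U₁ ∪ U₂).card = a + b := by
      rw [Finset.card_union_of_disjoint hdisj]
    rw [hcard, h₁, h₂, ht₂, ← arc_union (show a ≤ a + b by omega)]
    congr 2
    omega
  suffices h : ∀ c (U : Finset (Fin n)), U ∈ F → U.card = c → ∃ t, U = arc t U.card by
    exact fun U hU => h U.card U hU rfl
  intro c
  induction c using Nat.strong_induction_on with
  | _ c ih =>
    intro U hU hcard
    rcases Nat.lt_or_ge c 2 with hc | hc
    · have : U.card = 1 := by
        have := Finset.card_pos.mpr (hne U hU); omega
      obtain ⟨v, rfl⟩ := Finset.card_eq_one.mp this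
      exact ⟨v, by simp [arc_one]⟩
    · obtain ⟨U₁, hU₁, U₂, hU₂, hdisj, hunion, v₁, hv₁, v₂, hv₂, hadj⟩ :=
        hsp U hU (hcard ▸ hc)
      have hne₁ := hne U₁ hU₁
      have hne₂ := hne U₂ hU₂
      have hcs : U₁.card + U₂.card = c := by
        rw [← hcard, ← hunion, Finset.card_union_of_disjoint hdisj]
      have hc₁ : U₁.card < c := by
        have := Finset.card_pos.mpr hne₂; omega
      have hc₂ : U₂.card < c := by
        have := Finset.card_pos.mpr hne₁; omega
      obtain ⟨t₁, h₁⟩ := ih _ hc₁ U₁ hU₁ rfl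
      obtain ⟨t₂, h₂⟩ := ih _ hc₂ U₂ hU₂ rfl
      have hbnd : ∀ X : Finset (Fin n), X.card ≤ n := fun X => by
        simpa using Finset.card_le_univ X
      rcases (adj_iff hn).mp hadj with h | h
      · refine ⟨t₂, ?_⟩
        rw [← hunion, Finset.union_comm,
          key U₂ U₁ t₂ t₁ v₂ v₁ h₂ h₁ hne₂ hne₁ hdisj.symm hv₂ hv₁ h]
        congr 1
        rw [card_arc (hbnd _)]
      · refine ⟨t₁, ?_⟩
        rw [← hunion, key U₁ U₂ t₁ t₂ v₁ v₂ h₁ h₂ hne₁ hne₂ hdisj hv₁ hv₂ h]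
        congr 1
        rw [card_arc (hbnd _)]


/-- lower bound: a family with singletons, top, and the split property has at least
`2|T| - 1` members -/
lemma LB : ∀ (c : ℕ) (T : Finset (Fin n)) (F : Finset (Finset (Fin n))), T.card ≤ c →
    (∀ v ∈ T, ({v} : Finset (Fin n)) ∈ F) → T ∈ F → (∀ U ∈ F, U.Nonempty) →
    (∀ U ∈ F, U ⊆ T) →
    (∀ U ∈ F, 2 ≤ U.card → ∃ U₁ ∈ F, ∃ U₂ ∈ F, Disjoint U₁ U₂ ∧ U₁ ∪ U₂ = U ∧
      ∃ v₁ ∈ U₁, ∃ v₂ ∈ U₂, (SimpleGraph.cycleGraph n).Adj v₁ v₂) →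
    2 * T.card - 1 ≤ F.card := by
  intro c
  induction c with
  | zero => intro T F hc _ _ _ _ _; omega
  | succ c ih =>
    intro T F hc hsing hT hne hsub hsp
    classical
    rcases Nat.lt_or_ge T.card 2 with h2 | h2
    · have : 1 ≤ F.card := Finset.card_pos.mpr ⟨T, hT⟩
      omega
    · obtain ⟨T₁, hT₁, T₂, hT₂, hdisj, hunion, -⟩ := hsp T hT h2
      have hne₁ := hne T₁ hT₁
      have hne₂ := hne T₂ hT₂
      have hc₁ : 0 < T₁.card := Finset.card_pos.mpr hne₁
      have hc₂ : 0 < T₂.card := Finset.card_pos.mpr hne₂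
      have hcs : T₁.card + T₂.card = T.card := by
        rw [← hunion, Finset.card_union_of_disjoint hdisj]
      have hsub₁ : T₁ ⊆ T := hunion ▸ Finset.subset_union_left
      have hsub₂ : T₂ ⊆ T := hunion ▸ Finset.subset_union_right
      set F₁ := F.filter (fun X => X ⊆ T₁) with hF₁
      set F₂ := F.filter (fun X => X ⊆ T₂) with hF₂
      have key : ∀ (S : Finset (Fin n)), S ∈ F → S ⊆ T →
          2 * S.card - 1 ≤ (F.filter (fun X => X ⊆ S)).card → True := fun _ _ _ _ => trivial
      have ihabs : ∀ (S : Finset (Fin n)), S ∈ F → S.card ≤ c →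
          2 * S.card - 1 ≤ (F.filter (fun X => X ⊆ S)).card := by
        intro S hS hSc
        refine ih S (F.filter (fun X => X ⊆ S)) hSc ?_ ?_ ?_ ?_ ?_
        · intro v hv
          exact Finset.mem_filter.mpr ⟨hsing v (hsub S hS hv),
            Finset.singleton_subset_iff.mpr hv⟩
        · exact Finset.mem_filter.mpr ⟨hS, subset_rfl⟩
        · intro U hU; exact hne U (Finset.mem_filter.mp hU).1
        · intro U hU; exact (Finset.mem_filter.mp hU).2
        · intro U hU h2U
          obtain ⟨U₁, hU₁, U₂, hU₂, hd, hu, he⟩ := hsp U (Finset.mem_filter.mp hU).1 h2U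
          have hUS := (Finset.mem_filter.mp hU).2
          refine ⟨U₁, Finset.mem_filter.mpr ⟨hU₁, ?_⟩, U₂, Finset.mem_filter.mpr ⟨hU₂, ?_⟩,
            hd, hu, he⟩
          · exact (hu ▸ Finset.subset_union_left).trans hUS
          · exact (hu ▸ Finset.subset_union_right).trans hUS
      have hb₁ : 2 * T₁.card - 1 ≤ F₁.card := by
        rw [hF₁]; exact ihabs T₁ hT₁ (by omega)
      have hb₂ : 2 * T₂.card - 1 ≤ F₂.card := by
        rw [hF₂]; exact ihabs T₂ hT₂ (by omega)
      have hTn₁ : T ∉ F₁ := by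
        intro hmem
        have : T ⊆ T₁ := (Finset.mem_filter.mp hmem).2
        have : T₂ ⊆ T₁ := hsub₂.trans this
        have := Finset.disjoint_left.mp hdisj.symm
        obtain ⟨x, hx⟩ := hne₂
        exact this hx (‹T₂ ⊆ T₁› hx)
      have hTn₂ : T ∉ F₂ := by
        intro hmem
        have hh : T ⊆ T₂ := (Finset.mem_filter.mp hmem).2
        obtain ⟨x, hx⟩ := hne₁
        exact Finset.disjoint_left.mp hdisj hx (hh (hsub₁ hx))
      have hdF : Disjoint F₁ F₂ := by
        rw [Finset.disjoint_left]
        intro X hX₁ hX₂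
        obtain ⟨x, hx⟩ := hne X (Finset.mem_filter.mp hX₁).1
        exact Finset.disjoint_left.mp hdisj ((Finset.mem_filter.mp hX₁).2 hx)
          ((Finset.mem_filter.mp hX₂).2 hx)
      have hsubF : insert T (F₁ ∪ F₂) ⊆ F := by
        intro X hX
        rcases Finset.mem_insert.mp hX with rfl | hX
        · exact hT
        · rcases Finset.mem_union.mp hX with h | h
          · exact (Finset.mem_filter.mp h).1
          · exact (Finset.mem_filter.mp h).1
      have hcardins : (insert T (F₁ ∪ F₂)).card = 1 + F₁.card + F₂.card := by
        rw [Finset.card_insert_of_notMem (by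
          intro hc'
          rcases Finset.mem_union.mp hc' with h | h
          · exact hTn₁ h
          · exact hTn₂ h), Finset.card_union_of_disjoint hdF]
        omega
      have := Finset.card_le_card hsubF
      omega

/-- recover a subfamily from the assembled family by filtering -/
lemma filter_recover {T A B : Finset (Fin n)} {F₁ F₂ : Finset (Finset (Fin n))}
    (hT : ¬ T ⊆ A) (h₁ : ∀ X ∈ F₁, X ⊆ A) (h₂n : ∀ X ∈ F₂, X.Nonempty)
    (h₂ : ∀ X ∈ F₂, X ⊆ B) (hAB : Disjoint A B) :
    (insert T (F₁ ∪ F₂)).filter (fun X => X ⊆ A) = F₁ := by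
  classical
  ext X
  simp only [Finset.mem_filter, Finset.mem_insert, Finset.mem_union]
  constructor
  · rintro ⟨(rfl | h | h), hXA⟩
    · exact absurd hXA hT
    · exact h
    · obtain ⟨x, hx⟩ := h₂n X h
      exact absurd (hXA hx) (fun hc => Finset.disjoint_left.mp hAB hc (h₂ X h hx))
  · intro h
    exact ⟨Or.inr (Or.inl h), h₁ X h⟩

/-- gluing two splitting families into one -/
lemma splitfam_insert (hn : 3 ≤ n) {s : Fin n} {j l : ℕ} (hj : 1 ≤ j) (hjl : j < l)
    (hln : l ≤ n) {F₁ F₂ : Finset (Finset (Fin n))}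
    (h₁ : SplitFam s j F₁) (h₂ : SplitFam (s + (j : Fin n)) (l - j) F₂) :
    SplitFam s l (insert (arc s l) (F₁ ∪ F₂)) := by
  classical
  obtain ⟨sing₁, top₁, ne₁, sub₁, lam₁, sp₁, card₁⟩ := h₁
  obtain ⟨sing₂, top₂, ne₂, sub₂, lam₂, sp₂, card₂⟩ := h₂
  have hdarc : Disjoint (arc s j) (arc (s + (j : Fin n)) (l - j)) :=
    arc_disjoint (le_of_lt hjl) hln
  have huarc : arc s j ∪ arc (s + (j : Fin n)) (l - j) = arc s l := arc_union (le_of_lt hjl)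
  have hsubj : arc s j ⊆ arc s l := arc_subset (le_of_lt hjl)
  have hsubj' : arc (s + (j : Fin n)) (l - j) ⊆ arc s l := by
    rw [← huarc]; exact Finset.subset_union_right
  have hmemsub : ∀ X ∈ F₁ ∪ F₂, X ⊆ arc s l := by
    intro X hX
    rcases Finset.mem_union.mp hX with h | h
    · exact (sub₁ X h).trans hsubj
    · exact (sub₂ X h).trans hsubj'
  have htopnot : arc s l ∉ F₁ ∪ F₂ := by
    intro hc
    rcases Finset.mem_union.mp hc with h | h
    · have := Finset.card_le_card (sub₁ _ h)
      rw [card_arc hln, card_arc (by omega)] at this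
      omega
    · have := Finset.card_le_card (sub₂ _ h)
      rw [card_arc hln, card_arc (by omega)] at this
      omega
  have hdF : Disjoint F₁ F₂ := by
    rw [Finset.disjoint_left]
    intro X hX₁ hX₂
    obtain ⟨x, hx⟩ := ne₁ X hX₁
    exact Finset.disjoint_left.mp hdarc (sub₁ X hX₁ hx) (sub₂ X hX₂ hx)
  refine ⟨?_, Finset.mem_insert_self _ _, ?_, ?_, ?_, ?_, ?_⟩
  · intro v hv
    rw [← huarc] at hv
    rcases Finset.mem_union.mp hv with h | h
    · exact Finset.mem_insert_of_mem (Finset.mem_union_left _ (sing₁ v h))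
    · exact Finset.mem_insert_of_mem (Finset.mem_union_right _ (sing₂ v h))
  · intro U hU
    rcases Finset.mem_insert.mp hU with rfl | hU
    · exact ⟨s, mem_arc_self (by omega)⟩
    · rcases Finset.mem_union.mp hU with h | h
      · exact ne₁ U h
      · exact ne₂ U h
  · intro U hU
    rcases Finset.mem_insert.mp hU with rfl | hU
    · exact subset_rfl
    · exact hmemsub U hU
  · intro X hX Y hY
    rcases Finset.mem_insert.mp hX with rfl | hX
    · exact Or.inr (Or.inl (by
        rcases Finset.mem_insert.mp hY with rfl | hY
        · exact subset_rfl
        · exact hmemsub Y hY))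
    · rcases Finset.mem_insert.mp hY with rfl | hY
      · exact Or.inl (hmemsub X hX)
      · rcases Finset.mem_union.mp hX with h | h <;> rcases Finset.mem_union.mp hY with h' | h'
        · exact lam₁ X h Y h'
        · refine Or.inr (Or.inr (Finset.disjoint_left.mpr ?_))
          intro x hx hx'
          exact Finset.disjoint_left.mp hdarc (sub₁ X h hx) (sub₂ Y h' hx')
        · refine Or.inr (Or.inr (Finset.disjoint_left.mpr ?_))
          intro x hx hx'
          exact Finset.disjoint_left.mp hdarc.symm (sub₂ X h hx) (sub₁ Y h' hx')
        · exact lam₂ X h Y h'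
  · intro U hU h2U
    rcases Finset.mem_insert.mp hU with rfl | hU
    · refine ⟨arc s j, Finset.mem_insert_of_mem (Finset.mem_union_left _ top₁),
        arc (s + (j : Fin n)) (l - j), Finset.mem_insert_of_mem (Finset.mem_union_right _ top₂),
        hdarc, huarc, s + ((j - 1 : ℕ) : Fin n), mem_arc.mpr ⟨j - 1, by omega, rfl⟩,
        s + (j : Fin n), mem_arc.mpr ⟨0, by omega, by simp⟩, ?_⟩
      have he : ((j - 1 : ℕ) : Fin n) + 1 = ((j : ℕ) : Fin n) := by
        rw [← Nat.cast_add_one]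
        congr 1
        omega
      have he2 : s + ((j - 1 : ℕ) : Fin n) + 1 = s + (j : Fin n) := by
        rw [add_assoc, he]
      rw [← he2]
      exact adj_consec hn _
    · rcases Finset.mem_union.mp hU with h | h
      · obtain ⟨U₁, hU₁, U₂, hU₂, rest⟩ := sp₁ U h h2U
        exact ⟨U₁, Finset.mem_insert_of_mem (Finset.mem_union_left _ hU₁),
          U₂, Finset.mem_insert_of_mem (Finset.mem_union_left _ hU₂), rest⟩
      · obtain ⟨U₁, hU₁, U₂, hU₂, rest⟩ := sp₂ U h h2U
        exact ⟨U₁, Finset.mem_insert_of_mem (Finset.mem_union_right _ hU₁),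
          U₂, Finset.mem_insert_of_mem (Finset.mem_union_right _ hU₂), rest⟩
  · rw [Finset.card_insert_of_notMem htopnot, Finset.card_union_of_disjoint hdF, card₁, card₂]
    omega


/-- a filtered subfamily is a splitting family, given the cardinality -/
lemma filter_splitfam {s' : Fin n} {m : ℕ} {F : Finset (Finset (Fin n))}
    (hsing : ∀ v ∈ arc s' m, ({v} : Finset (Fin n)) ∈ F) (htop : arc s' m ∈ F)
    (hne : ∀ U ∈ F, U.Nonempty)
    (hlam : ∀ U₁ ∈ F, ∀ U₂ ∈ F, U₁ ⊆ U₂ ∨ U₂ ⊆ U₁ ∨ Disjoint U₁ U₂)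
    (hsp : ∀ U ∈ F, 2 ≤ U.card → ∃ U₁ ∈ F, ∃ U₂ ∈ F, Disjoint U₁ U₂ ∧ U₁ ∪ U₂ = U ∧
      ∃ v₁ ∈ U₁, ∃ v₂ ∈ U₂, (SimpleGraph.cycleGraph n).Adj v₁ v₂)
    (hcard : (F.filter (fun X => X ⊆ arc s' m)).card = 2 * m - 1) :
    SplitFam s' m (F.filter (fun X => X ⊆ arc s' m)) := by
  classical
  refine ⟨?_, ?_, ?_, ?_, ?_, ?_, hcard⟩
  · intro v hv
    exact Finset.mem_filter.mpr ⟨hsing v hv, Finset.singleton_subset_iff.mpr hv⟩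
  · exact Finset.mem_filter.mpr ⟨htop, subset_rfl⟩
  · intro U hU; exact hne U (Finset.mem_filter.mp hU).1
  · intro U hU; exact (Finset.mem_filter.mp hU).2
  · intro X hX Y hY
    exact hlam X (Finset.mem_filter.mp hX).1 Y (Finset.mem_filter.mp hY).1
  · intro U hU h2U
    obtain ⟨U₁, hU₁, U₂, hU₂, hd, hu, he⟩ := hsp U (Finset.mem_filter.mp hU).1 h2U
    have hUS := (Finset.mem_filter.mp hU).2
    exact ⟨U₁, Finset.mem_filter.mpr ⟨hU₁, (hu ▸ Finset.subset_union_left).trans hUS⟩,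
      U₂, Finset.mem_filter.mpr ⟨hU₂, (hu ▸ Finset.subset_union_right).trans hUS⟩,
      hd, hu, he⟩

/-- decomposition of a splitting family on a proper arc -/
lemma decomp (hn : 3 ≤ n) {s : Fin n} {l : ℕ} (hl2 : 2 ≤ l) (hln : l < n)
    {F : Finset (Finset (Fin n))} (hF : SplitFam s l F) :
    ∃ j, 1 ≤ j ∧ j < l ∧
      SplitFam s j (F.filter (fun X => X ⊆ arc s j)) ∧
      SplitFam (s + (j : Fin n)) (l - j) (F.filter (fun X => X ⊆ arc (s + (j : Fin n)) (l - j))) ∧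
      F = insert (arc s l) (F.filter (fun X => X ⊆ arc s j) ∪
        F.filter (fun X => X ⊆ arc (s + (j : Fin n)) (l - j))) := by
  classical
  obtain ⟨sing, top, hne, hsub, lam, hsp, hcard⟩ := hF
  have harc := arcness hn hne hsp
  have prefix_of_mem : ∀ U ∈ F, s ∈ U → U = arc s U.card := by
    intro U hU hsU
    obtain ⟨t, ht⟩ := harc U hU
    have hcpos : 0 < U.card := Finset.card_pos.mpr ⟨s, hsU⟩
    obtain ⟨d, hda, rfl⟩ := subarc hln hcpos (ht ▸ hsub U hU)
    obtain ⟨k, hk, hkeq⟩ := mem_arc.mp (ht ▸ hsU)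
    rw [add_assoc, ← Nat.cast_add] at hkeq
    have h0 : s + ((d + k : ℕ) : Fin n) = s + ((0 : ℕ) : Fin n) := by
      rw [hkeq]; simp
    have : d + k = 0 := add_natCast_inj (by omega) (by omega) h0
    have hd0 : d = 0 := by omega
    have hUn : U.card ≤ n := by simpa using Finset.card_le_univ U
    rw [ht, hd0]
    simp only [Nat.cast_zero, add_zero]
    congr 1
    rw [card_arc hUn]
  have hcardtop : (arc s l).card = l := card_arc (le_of_lt hln)
  obtain ⟨U₁, hU₁, U₂, hU₂, hdisjU, hunionU, -⟩ := hsp (arc s l) top (by omega)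
  have hstop : s ∈ U₁ ∪ U₂ := hunionU.symm ▸ mem_arc_self (show 0 < l by omega)
  obtain ⟨W₁, W₂, hW₁F, hW₂F, hdisjW, hunW, hsW⟩ :
      ∃ W₁ W₂, W₁ ∈ F ∧ W₂ ∈ F ∧ Disjoint W₁ W₂ ∧ W₁ ∪ W₂ = arc s l ∧ s ∈ W₁ := by
    rcases Finset.mem_union.mp hstop with h | h
    · exact ⟨U₁, U₂, hU₁, hU₂, hdisjU, hunionU, h⟩
    · exact ⟨U₂, U₁, hU₂, hU₁, hdisjU.symm, by rw [Finset.union_comm]; exact hunionU, h⟩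
  set a := W₁.card with haa
  have haW : W₁ = arc s a := prefix_of_mem W₁ hW₁F hsW
  have hsumW : a + W₂.card = l := by
    rw [haa, ← hcardtop, ← hunW, Finset.card_union_of_disjoint hdisjW]
  have ha1 : 1 ≤ a := Finset.card_pos.mpr ⟨s, hsW⟩
  have haL : a < l := by
    have := Finset.card_pos.mpr (hne W₂ hW₂F); omega
  have hW₂eq : W₂ = arc (s + (a : Fin n)) (l - a) := by
    have h1 : (W₁ ∪ W₂) \ W₁ = W₂ := Finset.union_sdiff_cancel_left hdisjW
    have h2 : (arc s a ∪ arc (s + (a : Fin n)) (l - a)) \ arc s a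
        = arc (s + (a : Fin n)) (l - a) :=
      Finset.union_sdiff_cancel_left (arc_disjoint (le_of_lt haL) (le_of_lt hln))
    rw [arc_union (le_of_lt haL), ← hunW, ← haW, h1] at h2
    exact h2
  set J := (Finset.Ico 1 l).filter (fun m => arc s m ∈ F) with hJ
  have hJne : J.Nonempty := ⟨a, Finset.mem_filter.mpr ⟨Finset.mem_Ico.mpr ⟨ha1, haL⟩, haW ▸ hW₁F⟩⟩
  set j := J.max' hJne with hjdef
  have hjmem := J.max'_mem hJne
  have hjF : arc s j ∈ F := (Finset.mem_filter.mp hjmem).2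
  have hj1 : 1 ≤ j := (Finset.mem_Ico.mp (Finset.mem_filter.mp hjmem).1).1
  have hjl : j < l := (Finset.mem_Ico.mp (Finset.mem_filter.mp hjmem).1).2
  have hmaxJ : ∀ m ∈ J, m ≤ j := fun m hm => J.le_max' m hm
  -- a = j
  have haj : a = j := by
    have haJ : a ≤ j := hmaxJ a (Finset.mem_filter.mpr
      ⟨Finset.mem_Ico.mpr ⟨ha1, haL⟩, haW ▸ hW₁F⟩)
    rcases lam (arc s j) hjF W₂ hW₂F with h | h | h
    · exfalso
      obtain ⟨i, hi, hieq⟩ := mem_arc.mp (hW₂eq ▸ h (mem_arc_self (show 0 < j by omega)))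
      rw [add_assoc, ← Nat.cast_add] at hieq
      exact add_natCast_ne (by omega) (by omega) hieq
    · exfalso
      have hlast : s + ((l - 1 : ℕ) : Fin n) ∈ W₂ := by
        rw [hW₂eq]
        refine mem_arc.mpr ⟨l - 1 - a, by omega, ?_⟩
        rw [add_assoc, ← Nat.cast_add]
        congr 2
        omega
      obtain ⟨i, hi, hieq⟩ := mem_arc.mp (h hlast)
      have := add_natCast_inj (by omega) (by omega) hieq
      omega
    · have hsubW : arc s j ⊆ W₁ := by
        intro x hx
        have hx' : x ∈ W₁ ∪ W₂ := hunW.symm ▸ (arc_subset (le_of_lt hjl) hx)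
        rcases Finset.mem_union.mp hx' with h' | h'
        · exact h'
        · exact absurd h' (fun hc => Finset.disjoint_left.mp h hx hc)
      have : j ≤ a := by
        have := Finset.card_le_card hsubW
        rwa [card_arc (by omega), ← haa] at this
      omega
  have hBF : arc (s + (j : Fin n)) (l - j) ∈ F := by
    rw [← haj, ← hW₂eq]; exact hW₂F
  -- classification of members
  have hclass : ∀ X ∈ F, X = arc s l ∨ X ⊆ arc s j ∨ X ⊆ arc (s + (j : Fin n)) (l - j) := by
    intro X hX
    by_cases hXtop : X = arc s l
    · exact Or.inl hXtop
    right
    obtain ⟨t, ht⟩ := harc X hX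
    have hb1 : 0 < X.card := Finset.card_pos.mpr (hne X hX)
    obtain ⟨d, hdb, htd⟩ := subarc hln hb1 (ht ▸ hsub X hX)
    rcases lam X hX (arc s j) hjF with h | h | h
    · exact Or.inl h
    · -- arc s j ⊆ X, so s ∈ X, so X is a prefix
      have hsX : s ∈ X := h (mem_arc_self (show 0 < j by omega))
      have hXpre : X = arc s X.card := prefix_of_mem X hX hsX
      have hXle : X.card ≤ l := by
        have := Finset.card_le_card (hsub X hX); rwa [hcardtop] at this
      have hXlt : X.card < l := by
        rcases Nat.lt_or_ge X.card l with h' | h'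
        · exact h'
        · exfalso
          exact hXtop (Finset.eq_of_subset_of_card_le (hsub X hX) (by omega))
      have hXJ : X.card ∈ J := Finset.mem_filter.mpr
        ⟨Finset.mem_Ico.mpr ⟨by omega, hXlt⟩, hXpre ▸ hX⟩
      have := hmaxJ _ hXJ
      exact Or.inl (hXpre ▸ arc_subset this)
    · -- disjoint from the prefix: X lies in the suffix
      have hdj : j ≤ d := by
        by_contra hc
        push_neg at hc
        have htj : t ∈ arc s j := mem_arc.mpr ⟨d, hc, htd.symm ▸ rfl⟩
        exact Finset.disjoint_left.mp h (ht ▸ mem_arc_self hb1) htj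
      refine Or.inr ?_
      intro x hx
      rw [ht] at hx
      obtain ⟨k, hk, hkeq⟩ := mem_arc.mp hx
      refine mem_arc.mpr ⟨d + k - j, by omega, ?_⟩
      rw [add_assoc, ← Nat.cast_add, ← hkeq, htd, add_assoc, ← Nat.cast_add]
      congr 2
      omega
  set F₁ := F.filter (fun X => X ⊆ arc s j) with hF₁
  set F₂ := F.filter (fun X => X ⊆ arc (s + (j : Fin n)) (l - j)) with hF₂
  have hpart : F = insert (arc s l) (F₁ ∪ F₂) := by
    ext X
    constructor
    · intro hX
      rcases hclass X hX with h | h | h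
      · exact Finset.mem_insert.mpr (Or.inl h)
      · exact Finset.mem_insert_of_mem (Finset.mem_union_left _ (Finset.mem_filter.mpr ⟨hX, h⟩))
      · exact Finset.mem_insert_of_mem (Finset.mem_union_right _ (Finset.mem_filter.mpr ⟨hX, h⟩))
    · intro hX
      rcases Finset.mem_insert.mp hX with rfl | hX
      · exact top
      · rcases Finset.mem_union.mp hX with h | h
        · exact (Finset.mem_filter.mp h).1
        · exact (Finset.mem_filter.mp h).1
  -- cardinalities
  have hLB₁ : 2 * j - 1 ≤ F₁.card := by
    rw [hF₁]
    have := LB j (arc s j) (F.filter (fun X => X ⊆ arc s j)) (by rw [card_arc (by omega)])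
      (fun v hv => Finset.mem_filter.mpr ⟨sing v (arc_subset (le_of_lt hjl) hv),
        Finset.singleton_subset_iff.mpr hv⟩)
      (Finset.mem_filter.mpr ⟨hjF, subset_rfl⟩)
      (fun U hU => hne U (Finset.mem_filter.mp hU).1)
      (fun U hU => (Finset.mem_filter.mp hU).2)
      (fun U hU h2U => by
        obtain ⟨V₁, hV₁, V₂, hV₂, hd, hu, he⟩ := hsp U (Finset.mem_filter.mp hU).1 h2U
        exact ⟨V₁, Finset.mem_filter.mpr ⟨hV₁,
            (hu ▸ Finset.subset_union_left).trans (Finset.mem_filter.mp hU).2⟩,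
          V₂, Finset.mem_filter.mpr ⟨hV₂,
            (hu ▸ Finset.subset_union_right).trans (Finset.mem_filter.mp hU).2⟩, hd, hu, he⟩)
    rwa [card_arc (by omega)] at this
  have hLB₂ : 2 * (l - j) - 1 ≤ F₂.card := by
    rw [hF₂]
    have := LB (l - j) (arc (s + (j : Fin n)) (l - j))
      (F.filter (fun X => X ⊆ arc (s + (j : Fin n)) (l - j))) (by rw [card_arc (by omega)])
      (fun v hv => Finset.mem_filter.mpr ⟨sing v (by
          rw [← arc_union (le_of_lt hjl)]
          exact Finset.mem_union_right _ hv),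
        Finset.singleton_subset_iff.mpr hv⟩)
      (Finset.mem_filter.mpr ⟨hBF, subset_rfl⟩)
      (fun U hU => hne U (Finset.mem_filter.mp hU).1)
      (fun U hU => (Finset.mem_filter.mp hU).2)
      (fun U hU h2U => by
        obtain ⟨V₁, hV₁, V₂, hV₂, hd, hu, he⟩ := hsp U (Finset.mem_filter.mp hU).1 h2U
        exact ⟨V₁, Finset.mem_filter.mpr ⟨hV₁,
            (hu ▸ Finset.subset_union_left).trans (Finset.mem_filter.mp hU).2⟩,
          V₂, Finset.mem_filter.mpr ⟨hV₂,
            (hu ▸ Finset.subset_union_right).trans (Finset.mem_filter.mp hU).2⟩, hd, hu, he⟩)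
    rwa [card_arc (by omega)] at this
  have htopnot : arc s l ∉ F₁ ∪ F₂ := by
    intro hc
    rcases Finset.mem_union.mp hc with h | h
    · have := Finset.card_le_card (Finset.mem_filter.mp h).2
      rw [hcardtop, card_arc (by omega)] at this
      omega
    · have := Finset.card_le_card (Finset.mem_filter.mp h).2
      rw [hcardtop, card_arc (by omega)] at this
      omega
  have hdF : Disjoint F₁ F₂ := by
    rw [Finset.disjoint_left]
    intro X hX₁ hX₂
    obtain ⟨x, hx⟩ := hne X (Finset.mem_filter.mp hX₁).1
    exact Finset.disjoint_left.mp (arc_disjoint (le_of_lt hjl) (le_of_lt hln))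
      ((Finset.mem_filter.mp hX₁).2 hx) ((Finset.mem_filter.mp hX₂).2 hx)
  have hcards : F.card = 1 + F₁.card + F₂.card := by
    rw [hpart, Finset.card_insert_of_notMem htopnot, Finset.card_union_of_disjoint hdF]
    omega
  have hc₁ : F₁.card = 2 * j - 1 := by omega
  have hc₂ : F₂.card = 2 * (l - j) - 1 := by omega
  refine ⟨j, hj1, hjl, ?_, ?_, hpart⟩
  · exact filter_splitfam (fun v hv => sing v (arc_subset (le_of_lt hjl) hv)) hjF hne lam hsp
      (hF₁ ▸ hc₁)
  · refine filter_splitfam (fun v hv => sing v (by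
        rw [← arc_union (le_of_lt hjl)]
        exact Finset.mem_union_right _ hv)) hBF hne lam hsp (hF₂ ▸ hc₂)


/-- decomposition of an assembly family at a maximal member -/
lemma decompTop (hn : 3 ≤ n) {F : Finset (Finset (Fin n))} {U : Finset (Fin n)}
    (hF : IsAssemblyFamily (SimpleGraph.cycleGraph n) F) (hU : U ∈ F) (hUne : U ≠ Finset.univ)
    (hmax : ∀ X ∈ F, U ⊆ X → X = U ∨ X = Finset.univ) :
    ∃ (t : Fin n) (a : ℕ), 1 ≤ a ∧ a < n ∧ U = arc t a ∧
      SplitFam t a (F.filter (fun X => X ⊆ arc t a)) ∧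
      SplitFam (t + (a : Fin n)) (n - a) (F.filter (fun X => X ⊆ arc (t + (a : Fin n)) (n - a))) ∧
      F = insert Finset.univ (F.filter (fun X => X ⊆ arc t a) ∪
        F.filter (fun X => X ⊆ arc (t + (a : Fin n)) (n - a))) := by
  classical
  obtain ⟨sing, topU, hne, lam, hsp, hcard⟩ := hF
  rw [Fintype.card_fin] at hcard
  have harc := arcness hn hne hsp
  obtain ⟨t, ht⟩ := harc U hU
  set a := U.card with haa
  have ha1 : 1 ≤ a := Finset.card_pos.mpr (hne U hU)
  have han' : a ≤ n := by simpa using Finset.card_le_univ U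
  have han : a < n := by
    rcases Nat.lt_or_ge a n with h | h
    · exact h
    · exact absurd (Finset.eq_univ_of_card U (by rw [← haa, Fintype.card_fin]; omega)) hUne
  have hcardU : (Finset.univ : Finset (Fin n)).card = n := by
    rw [Finset.card_univ, Fintype.card_fin]
  obtain ⟨W₁, hW₁, W₂, hW₂, hdisjW, hunW, he⟩ := hsp Finset.univ topU (by omega)
  have hne₁ := hne W₁ hW₁
  have hne₂ := hne W₂ hW₂
  have hWuniv : ∀ W W' : Finset (Fin n), Disjoint W W' → W'.Nonempty → W ≠ Finset.univ := by
    intro W W' hd hw' hc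
    obtain ⟨x, hx⟩ := hw'
    exact Finset.disjoint_left.mp hd (hc ▸ Finset.mem_univ x) hx
  have hsubW : ∀ X ∈ F, Disjoint X W₂ → X ⊆ W₁ := by
    intro X _ hd x hx
    have : x ∈ W₁ ∪ W₂ := hunW.symm ▸ Finset.mem_univ x
    exact (Finset.mem_union.mp this).resolve_right (fun hc => Finset.disjoint_left.mp hd hx hc)
  have hsubW' : ∀ X ∈ F, Disjoint X W₁ → X ⊆ W₂ := by
    intro X _ hd x hx
    have : x ∈ W₁ ∪ W₂ := hunW.symm ▸ Finset.mem_univ x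
    exact (Finset.mem_union.mp this).resolve_left (fun hc => Finset.disjoint_left.mp hd hx hc)
  have hUW : U = W₁ ∨ U = W₂ := by
    rcases lam U hU W₁ hW₁ with h | h | h
    · rcases hmax W₁ hW₁ h with h' | h'
      · exact Or.inl h'.symm
      · exact absurd h' (hWuniv W₁ W₂ hdisjW hne₂)
    · rcases lam U hU W₂ hW₂ with h2 | h2 | h2
      · exfalso
        obtain ⟨x, hx⟩ := hne₁
        exact Finset.disjoint_left.mp hdisjW hx (h2 (h hx))
      · exfalso
        refine hUne (Finset.Subset.antisymm (Finset.subset_univ U) ?_)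
        rw [← hunW]
        exact Finset.union_subset h h2
      · exact Or.inl (Finset.Subset.antisymm (hsubW U hU h2) h)
    · rcases hmax W₂ hW₂ (hsubW' U hU h) with h' | h'
      · exact Or.inr h'.symm
      · exact absurd h' (hWuniv W₂ W₁ hdisjW.symm hne₁)
  obtain ⟨W, hWF, hdU, hunU⟩ : ∃ W, W ∈ F ∧ Disjoint U W ∧ U ∪ W = Finset.univ := by
    rcases hUW with rfl | rfl
    · exact ⟨W₂, hW₂, hdisjW, hunW⟩
    · exact ⟨W₁, hW₁, hdisjW.symm, by rw [Finset.union_comm]; exact hunW⟩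
  have harcun : arc t a ∪ arc (t + (a : Fin n)) (n - a) = Finset.univ := by
    rw [arc_union (le_of_lt han), arc_univ]
  have hWeq : W = arc (t + (a : Fin n)) (n - a) := by
    have h1 : (U ∪ W) \ U = W := Finset.union_sdiff_cancel_left hdU
    have h2 : (arc t a ∪ arc (t + (a : Fin n)) (n - a)) \ arc t a
        = arc (t + (a : Fin n)) (n - a) :=
      Finset.union_sdiff_cancel_left (arc_disjoint (le_of_lt han) le_rfl)
    rw [harcun, ← hunU, ← ht, h1] at h2
    exact h2
  have hWF' : arc (t + (a : Fin n)) (n - a) ∈ F := hWeq ▸ hWF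
  have hclass : ∀ X ∈ F, X = Finset.univ ∨ X ⊆ arc t a ∨
      X ⊆ arc (t + (a : Fin n)) (n - a) := by
    intro X hX
    by_cases hXtop : X = Finset.univ
    · exact Or.inl hXtop
    right
    rcases lam X hX U hU with h | h | h
    · exact Or.inl (ht ▸ h)
    · rcases hmax X hX h with h' | h'
      · exact Or.inl (h' ▸ ht ▸ subset_rfl)
      · exact absurd h' hXtop
    · refine Or.inr ?_
      rw [← hWeq]
      intro x hx
      have : x ∈ U ∪ W := hunU.symm ▸ Finset.mem_univ x
      exact (Finset.mem_union.mp this).resolve_left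
        (fun hc => Finset.disjoint_left.mp h hx hc)
  set F₁ := F.filter (fun X => X ⊆ arc t a) with hF₁
  set F₂ := F.filter (fun X => X ⊆ arc (t + (a : Fin n)) (n - a)) with hF₂
  have hUarcF : arc t a ∈ F := ht ▸ hU
  have hpart : F = insert Finset.univ (F₁ ∪ F₂) := by
    ext X
    constructor
    · intro hX
      rcases hclass X hX with h | h | h
      · exact Finset.mem_insert.mpr (Or.inl h)
      · exact Finset.mem_insert_of_mem (Finset.mem_union_left _ (Finset.mem_filter.mpr ⟨hX, h⟩))
      · exact Finset.mem_insert_of_mem (Finset.mem_union_right _ (Finset.mem_filter.mpr ⟨hX, h⟩))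
    · intro hX
      rcases Finset.mem_insert.mp hX with rfl | hX
      · exact topU
      · rcases Finset.mem_union.mp hX with h | h
        · exact (Finset.mem_filter.mp h).1
        · exact (Finset.mem_filter.mp h).1
  have hLB₁ : 2 * a - 1 ≤ F₁.card := by
    rw [hF₁]
    have := LB a (arc t a) (F.filter (fun X => X ⊆ arc t a)) (by rw [card_arc (by omega)])
      (fun v _ => Finset.mem_filter.mpr ⟨sing v, Finset.singleton_subset_iff.mpr (by assumption)⟩)
      (Finset.mem_filter.mpr ⟨hUarcF, subset_rfl⟩)
      (fun X hX => hne X (Finset.mem_filter.mp hX).1)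
      (fun X hX => (Finset.mem_filter.mp hX).2)
      (fun X hX h2X => by
        obtain ⟨V₁, hV₁, V₂, hV₂, hd, hu, heV⟩ := hsp X (Finset.mem_filter.mp hX).1 h2X
        exact ⟨V₁, Finset.mem_filter.mpr ⟨hV₁,
            (hu ▸ Finset.subset_union_left).trans (Finset.mem_filter.mp hX).2⟩,
          V₂, Finset.mem_filter.mpr ⟨hV₂,
            (hu ▸ Finset.subset_union_right).trans (Finset.mem_filter.mp hX).2⟩, hd, hu, heV⟩)
    rwa [card_arc (by omega)] at this
  have hLB₂ : 2 * (n - a) - 1 ≤ F₂.card := by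
    rw [hF₂]
    have := LB (n - a) (arc (t + (a : Fin n)) (n - a))
      (F.filter (fun X => X ⊆ arc (t + (a : Fin n)) (n - a))) (by rw [card_arc (by omega)])
      (fun v _ => Finset.mem_filter.mpr ⟨sing v, Finset.singleton_subset_iff.mpr (by assumption)⟩)
      (Finset.mem_filter.mpr ⟨hWF', subset_rfl⟩)
      (fun X hX => hne X (Finset.mem_filter.mp hX).1)
      (fun X hX => (Finset.mem_filter.mp hX).2)
      (fun X hX h2X => by
        obtain ⟨V₁, hV₁, V₂, hV₂, hd, hu, heV⟩ := hsp X (Finset.mem_filter.mp hX).1 h2X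
        exact ⟨V₁, Finset.mem_filter.mpr ⟨hV₁,
            (hu ▸ Finset.subset_union_left).trans (Finset.mem_filter.mp hX).2⟩,
          V₂, Finset.mem_filter.mpr ⟨hV₂,
            (hu ▸ Finset.subset_union_right).trans (Finset.mem_filter.mp hX).2⟩, hd, hu, heV⟩)
    rwa [card_arc (by omega)] at this
  have htopnot : Finset.univ ∉ F₁ ∪ F₂ := by
    intro hc
    rcases Finset.mem_union.mp hc with h | h
    · have := Finset.card_le_card (Finset.mem_filter.mp h).2
      rw [hcardU, card_arc (by omega)] at this
      omega
    · have := Finset.card_le_card (Finset.mem_filter.mp h).2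
      rw [hcardU, card_arc (by omega)] at this
      omega
  have hdF : Disjoint F₁ F₂ := by
    rw [Finset.disjoint_left]
    intro X hX₁ hX₂
    obtain ⟨x, hx⟩ := hne X (Finset.mem_filter.mp hX₁).1
    exact Finset.disjoint_left.mp (arc_disjoint (le_of_lt han) le_rfl)
      ((Finset.mem_filter.mp hX₁).2 hx) ((Finset.mem_filter.mp hX₂).2 hx)
  have hcards : F.card = 1 + F₁.card + F₂.card := by
    rw [hpart, Finset.card_insert_of_notMem htopnot, Finset.card_union_of_disjoint hdF]
    omega
  have hc₁ : F₁.card = 2 * a - 1 := by omega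
  have hc₂ : F₂.card = 2 * (n - a) - 1 := by omega
  refine ⟨t, a, ha1, han, ht, ?_, ?_, hpart⟩
  · exact filter_splitfam (fun v _ => sing v) hUarcF hne lam hsp (hF₁ ▸ hc₁)
  · exact filter_splitfam (fun v _ => sing v) hWF' hne lam hsp (hF₂ ▸ hc₂)


lemma cat_conv {l : ℕ} (hl : 2 ≤ l) :
    ∑ j ∈ Finset.Ico 1 l, catalan (j - 1) * catalan (l - j - 1) = catalan (l - 1) := by
  obtain ⟨m, rfl⟩ : ∃ m, l = m + 2 := ⟨l - 2, by omega⟩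
  rw [show m + 2 - 1 = m + 1 by omega, catalan_succ]
  rw [Finset.sum_Ico_eq_sum_range]
  rw [Fin.sum_univ_eq_sum_range fun i => catalan i * catalan (m - i)]
  rw [show m + 2 - 1 = m + 1 by omega]
  refine Finset.sum_congr rfl ?_
  intro i _
  congr 1
  · congr 1; omega
  · congr 1; omega

lemma card_splitfam_one (hn : 3 ≤ n) (s : Fin n) :
    Nat.card {F : Finset (Finset (Fin n)) // SplitFam s 1 F} = 1 := by
  have harc1 : (arc s 1).card = 1 := card_arc (by omega)
  rw [Nat.card_eq_one_iff_unique]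
  constructor
  · constructor
    intro ⟨F, hF⟩ ⟨F', hF'⟩
    have key : ∀ G : Finset (Finset (Fin n)), SplitFam s 1 G → G = {arc s 1} := by
      intro G hG
      obtain ⟨-, htop, -, -, -, -, hcard⟩ := hG
      obtain ⟨x, hx⟩ := Finset.card_eq_one.mp (by omega : G.card = 1)
      rw [hx] at htop ⊢
      rw [Finset.mem_singleton.mp htop]
    simp only [Subtype.mk.injEq]
    rw [key F hF, key F' hF']
  · refine ⟨⟨{arc s 1}, ?_, Finset.mem_singleton_self _, ?_, ?_, ?_, ?_, by simp⟩⟩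
    · intro v hv
      rw [arc_one] at hv ⊢
      rw [Finset.mem_singleton.mp hv]
      exact Finset.mem_singleton_self _
    · intro U hU
      rw [Finset.mem_singleton.mp hU]
      exact ⟨s, mem_arc_self (by omega)⟩
    · intro U hU
      rw [Finset.mem_singleton.mp hU]
    · intro X hX Y hY
      rw [Finset.mem_singleton.mp hX, Finset.mem_singleton.mp hY]
      exact Or.inl subset_rfl
    · intro U hU h2
      rw [Finset.mem_singleton.mp hU] at h2
      rw [harc1] at h2
      omega

lemma le_of_insert_eq (hn : 3 ≤ n) {s : Fin n} {j j' l : ℕ}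
    (hj1 : 1 ≤ j) (hjl : j < l) (hj'1 : 1 ≤ j') (hj'l : j' < l) (hln : l < n)
    {F₁ F₂ F₁' F₂' : Finset (Finset (Fin n))}
    (h₁ : SplitFam s j F₁) (h₁' : SplitFam s j' F₁')
    (h₂' : SplitFam (s + (j' : Fin n)) (l - j') F₂')
    (h : insert (arc s l) (F₁ ∪ F₂) = insert (arc s l) (F₁' ∪ F₂')) : j ≤ j' := by
  have hmem : arc s j ∈ insert (arc s l) (F₁' ∪ F₂') :=
    h ▸ Finset.mem_insert_of_mem (Finset.mem_union_left _ h₁.2.1)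
  rcases Finset.mem_insert.mp hmem with he | hmem'
  · have := congrArg Finset.card he
    rw [card_arc (by omega), card_arc (by omega)] at this
    omega
  · rcases Finset.mem_union.mp hmem' with hm | hm
    · have := Finset.card_le_card (h₁'.2.2.2.1 _ hm)
      rwa [card_arc (by omega), card_arc (by omega)] at this
    · exfalso
      have hs : s ∈ arc (s + (j' : Fin n)) (l - j') :=
        h₂'.2.2.2.1 _ hm (mem_arc_self (by omega))
      obtain ⟨i, hi, hieq⟩ := mem_arc.mp hs
      rw [add_assoc, ← Nat.cast_add] at hieq
      exact add_natCast_ne (by omega) (by omega) hieq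

lemma card_splitfam (hn : 3 ≤ n) :
    ∀ l, 1 ≤ l → l < n → ∀ s : Fin n,
      Nat.card {F : Finset (Finset (Fin n)) // SplitFam s l F} = catalan (l - 1) := by
  intro l
  induction l using Nat.strong_induction_on with
  | _ l ih =>
    intro hl1 hln s
    rcases Nat.lt_or_ge l 2 with hl2 | hl2
    · have hl : l = 1 := by omega
      subst hl
      rw [card_splitfam_one hn s]
      simp [catalan_zero]
    · classical
      have hg : ∀ x : (Σ j : {j : ℕ // j ∈ Finset.Ico 1 l},
          {F : Finset (Finset (Fin n)) // SplitFam s j.1 F} ×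
          {F : Finset (Finset (Fin n)) // SplitFam (s + (j.1 : Fin n)) (l - j.1) F}),
          SplitFam s l (insert (arc s l) (x.2.1.1 ∪ x.2.2.1)) := by
        rintro ⟨⟨j, hj⟩, F₁, F₂⟩
        obtain ⟨hj1, hjl⟩ := Finset.mem_Ico.mp hj
        exact splitfam_insert hn hj1 hjl (le_of_lt hln) F₁.2 F₂.2
      set g : (Σ j : {j : ℕ // j ∈ Finset.Ico 1 l},
          {F : Finset (Finset (Fin n)) // SplitFam s j.1 F} ×
          {F : Finset (Finset (Fin n)) // SplitFam (s + (j.1 : Fin n)) (l - j.1) F}) →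
          {F : Finset (Finset (Fin n)) // SplitFam s l F} :=
        fun x => ⟨insert (arc s l) (x.2.1.1 ∪ x.2.2.1), hg x⟩ with hgdef
      have hinj : Function.Injective g := by
        rintro ⟨⟨j, hj⟩, ⟨F₁, hF₁⟩, ⟨F₂, hF₂⟩⟩ ⟨⟨j', hj'⟩, ⟨F₁', hF₁'⟩, ⟨F₂', hF₂'⟩⟩ h
        simp only [hgdef, Subtype.mk.injEq] at h
        obtain ⟨hj1, hjl⟩ := Finset.mem_Ico.mp hj
        obtain ⟨hj'1, hj'l⟩ := Finset.mem_Ico.mp hj'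
        have hjj : j = j' := le_antisymm
          (le_of_insert_eq hn hj1 hjl hj'1 hj'l hln hF₁ hF₁' hF₂' h)
          (le_of_insert_eq hn hj'1 hj'l hj1 hjl hln hF₁' hF₁ hF₂ h.symm)
        subst hjj
        have hTa : ¬ arc s l ⊆ arc s j := by
          intro hc
          have := Finset.card_le_card hc
          rw [card_arc (by omega), card_arc (by omega)] at this
          omega
        have hTb : ¬ arc s l ⊆ arc (s + (j : Fin n)) (l - j) := by
          intro hc
          have := Finset.card_le_card hc
          rw [card_arc (by omega), card_arc (by omega)] at this
          omega
        have hdarc := arc_disjoint (s := s) (le_of_lt hjl) (le_of_lt hln)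
        have e1 : F₁ = F₁' := by
          have r1 := filter_recover hTa hF₁.2.2.2.1 hF₂.2.2.1 hF₂.2.2.2.1 hdarc
          have r2 := filter_recover hTa hF₁'.2.2.2.1 hF₂'.2.2.1 hF₂'.2.2.2.1 hdarc
          rw [← r1, ← r2, h]
        have e2 : F₂ = F₂' := by
          have r1 := filter_recover hTb hF₂.2.2.2.1 hF₁.2.2.1 hF₁.2.2.2.1 hdarc.symm
          have r2 := filter_recover hTb hF₂'.2.2.2.1 hF₁'.2.2.1 hF₁'.2.2.2.1 hdarc.symm
          rw [← r1, ← r2]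
          rw [Finset.union_comm F₂ F₁, Finset.union_comm F₂' F₁', h]
        subst e1
        subst e2
        rfl
      have hsurj : Function.Surjective g := by
        rintro ⟨F, hF⟩
        obtain ⟨j, hj1, hjl, hs₁, hs₂, hpart⟩ := decomp hn hl2 hln hF
        exact ⟨⟨⟨j, Finset.mem_Ico.mpr ⟨hj1, hjl⟩⟩, ⟨_, hs₁⟩, ⟨_, hs₂⟩⟩,
          Subtype.ext hpart.symm⟩
      rw [← Nat.card_eq_of_bijective g ⟨hinj, hsurj⟩]
      rw [Nat.card_eq_fintype_card, Fintype.card_sigma]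
      have hsummand : ∀ j : {j : ℕ // j ∈ Finset.Ico 1 l},
          Fintype.card ({F : Finset (Finset (Fin n)) // SplitFam s j.1 F} ×
            {F : Finset (Finset (Fin n)) // SplitFam (s + (j.1 : Fin n)) (l - j.1) F})
          = catalan (j.1 - 1) * catalan (l - j.1 - 1) := by
        rintro ⟨j, hj⟩
        obtain ⟨hj1, hjl⟩ := Finset.mem_Ico.mp hj
        rw [Fintype.card_prod, ← Nat.card_eq_fintype_card, ← Nat.card_eq_fintype_card,
          ih j hjl hj1 (by omega) s, ih (l - j) (by omega) (by omega) (by omega) _]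
      rw [Finset.sum_congr rfl (fun j _ => hsummand j)]
      rw [Finset.sum_coe_sort (Finset.Ico 1 l) (fun m => catalan (m - 1) * catalan (l - m - 1))]
      exact cat_conv hl2


/-- characterization of the two children of the root -/
lemma children (hn : 3 ≤ n) {F : Finset (Finset (Fin n))}
    (hF : IsAssemblyFamily (SimpleGraph.cycleGraph n) F) :
    ∃ W₁ W₂ : Finset (Fin n), W₁ ∈ F ∧ W₂ ∈ F ∧ Disjoint W₁ W₂ ∧
      W₁ ∪ W₂ = Finset.univ ∧ W₁ ≠ Finset.univ ∧ W₂ ≠ Finset.univ ∧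
      (∀ X ∈ F, W₁ ⊆ X → X = W₁ ∨ X = Finset.univ) ∧
      (∀ X ∈ F, W₂ ⊆ X → X = W₂ ∨ X = Finset.univ) ∧
      (∀ U ∈ F, U ≠ Finset.univ → (∀ X ∈ F, U ⊆ X → X = U ∨ X = Finset.univ) →
        U = W₁ ∨ U = W₂) := by
  obtain ⟨sing, topU, hne, lam, hsp, hcard⟩ := hF
  have hcardU : (Finset.univ : Finset (Fin n)).card = n := by
    rw [Finset.card_univ, Fintype.card_fin]
  obtain ⟨W₁, hW₁, W₂, hW₂, hdisjW, hunW, -⟩ := hsp Finset.univ topU (by omega)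
  have hne₁ := hne W₁ hW₁
  have hne₂ := hne W₂ hW₂
  have hWuniv : ∀ W W' : Finset (Fin n), Disjoint W W' → W'.Nonempty → W ≠ Finset.univ := by
    intro W W' hd hw' hc
    obtain ⟨x, hx⟩ := hw'
    exact Finset.disjoint_left.mp hd (hc ▸ Finset.mem_univ x) hx
  have hsub₁ : ∀ X, Disjoint X W₂ → X ⊆ W₁ := by
    intro X hd x hx
    have : x ∈ W₁ ∪ W₂ := hunW.symm ▸ Finset.mem_univ x
    exact (Finset.mem_union.mp this).resolve_right (fun hc => Finset.disjoint_left.mp hd hx hc)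
  have hsub₂ : ∀ X, Disjoint X W₁ → X ⊆ W₂ := by
    intro X hd x hx
    have : x ∈ W₁ ∪ W₂ := hunW.symm ▸ Finset.mem_univ x
    exact (Finset.mem_union.mp this).resolve_left (fun hc => Finset.disjoint_left.mp hd hx hc)
  have hmax₁ : ∀ X ∈ F, W₁ ⊆ X → X = W₁ ∨ X = Finset.univ := by
    intro X hX hs
    rcases lam X hX W₂ hW₂ with h | h | h
    · exfalso
      obtain ⟨x, hx⟩ := hne₁
      exact Finset.disjoint_left.mp hdisjW hx (h (hs hx))
    · refine Or.inr (Finset.Subset.antisymm (Finset.subset_univ X) ?_)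
      rw [← hunW]
      exact Finset.union_subset hs h
    · exact Or.inl (Finset.Subset.antisymm (hsub₁ X h) hs)
  have hmax₂ : ∀ X ∈ F, W₂ ⊆ X → X = W₂ ∨ X = Finset.univ := by
    intro X hX hs
    rcases lam X hX W₁ hW₁ with h | h | h
    · exfalso
      obtain ⟨x, hx⟩ := hne₂
      exact Finset.disjoint_left.mp hdisjW.symm hx (h (hs hx))
    · refine Or.inr (Finset.Subset.antisymm (Finset.subset_univ X) ?_)
      rw [← hunW]
      exact Finset.union_subset h hs
    · exact Or.inl (Finset.Subset.antisymm (hsub₂ X h) hs)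
  refine ⟨W₁, W₂, hW₁, hW₂, hdisjW, hunW, hWuniv W₁ W₂ hdisjW hne₂,
    hWuniv W₂ W₁ hdisjW.symm hne₁, hmax₁, hmax₂, ?_⟩
  intro U hU hUne hUmax
  rcases lam U hU W₁ hW₁ with h | h | h
  · rcases hUmax W₁ hW₁ h with h' | h'
    · exact Or.inl h'.symm
    · exact absurd h' (hWuniv W₁ W₂ hdisjW hne₂)
  · rcases hmax₁ U hU h with h' | h'
    · exact Or.inl h'
    · exact absurd h' hUne
  · rcases hUmax W₂ hW₂ (hsub₂ U h) with h' | h'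
    · exact Or.inr h'.symm
    · exact absurd h' (hWuniv W₂ W₁ hdisjW.symm hne₁)

lemma card_pairs_eq (hn : 3 ≤ n) :
    Nat.card {p : Finset (Finset (Fin n)) × Finset (Fin n) //
      IsAssemblyFamily (SimpleGraph.cycleGraph n) p.1 ∧ p.2 ∈ p.1 ∧ p.2 ≠ Finset.univ ∧
      (∀ X ∈ p.1, p.2 ⊆ X → X = p.2 ∨ X = Finset.univ)} =
    2 * Nat.card {F : Finset (Finset (Fin n)) //
      IsAssemblyFamily (SimpleGraph.cycleGraph n) F} := by
  classical
  set f : {p : Finset (Finset (Fin n)) × Finset (Fin n) //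
      IsAssemblyFamily (SimpleGraph.cycleGraph n) p.1 ∧ p.2 ∈ p.1 ∧ p.2 ≠ Finset.univ ∧
      (∀ X ∈ p.1, p.2 ⊆ X → X = p.2 ∨ X = Finset.univ)} →
      ({F : Finset (Finset (Fin n)) // IsAssemblyFamily (SimpleGraph.cycleGraph n) F} × Bool) :=
    fun p => (⟨p.1.1, p.2.1⟩, decide ((0 : Fin n) ∈ p.1.2)) with hfdef
  have hbij : Function.Bijective f := by
    constructor
    · rintro ⟨⟨F, U⟩, hF, hU, hUne, hUmax⟩ ⟨⟨F', U'⟩, hF', hU', hUne', hUmax'⟩ h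
      simp only [hfdef, Prod.mk.injEq, Subtype.mk.injEq] at h
      obtain ⟨h1, h2⟩ := h
      subst h1
      obtain ⟨W₁, W₂, hW₁, hW₂, hdisjW, hunW, hWu₁, hWu₂, hm₁, hm₂, hlast⟩ := children hn hF
      have hor := hlast U hU hUne hUmax
      have hor' := hlast U' hU' hUne' hUmax'
      have hiff : ((0 : Fin n) ∈ U) ↔ ((0 : Fin n) ∈ U') := by
        rwa [decide_eq_decide] at h2
      have h0 : (0 : Fin n) ∈ W₁ ∪ W₂ := hunW.symm ▸ Finset.mem_univ 0
      have hUU : U = U' := by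
        rcases hor with rfl | rfl <;> rcases hor' with rfl | rfl
        · rfl
        · exfalso
          rcases Finset.mem_union.mp h0 with h0' | h0'
          · exact Finset.disjoint_left.mp hdisjW h0' (hiff.mp h0')
          · exact Finset.disjoint_left.mp hdisjW (hiff.mpr h0') h0'
        · exfalso
          rcases Finset.mem_union.mp h0 with h0' | h0'
          · exact Finset.disjoint_left.mp hdisjW h0' (hiff.mpr h0')
          · exact Finset.disjoint_left.mp hdisjW (hiff.mp h0') h0'
        · rfl
      subst hUU
      rfl
    · rintro ⟨⟨F, hF⟩, b⟩
      obtain ⟨W₁, W₂, hW₁, hW₂, hdisjW, hunW, hWu₁, hWu₂, hm₁, hm₂, hlast⟩ := children hn hF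
      have h0 : (0 : Fin n) ∈ W₁ ∪ W₂ := hunW.symm ▸ Finset.mem_univ 0
      rcases Finset.mem_union.mp h0 with h0' | h0'
      · cases b
        · refine ⟨⟨(F, W₂), hF, hW₂, hWu₂, hm₂⟩, ?_⟩
          simp only [hfdef]
          refine Prod.ext rfl ?_
          simp only [decide_eq_false_iff_not]
          exact fun hc => Finset.disjoint_left.mp hdisjW h0' hc
        · refine ⟨⟨(F, W₁), hF, hW₁, hWu₁, hm₁⟩, ?_⟩
          simp only [hfdef]
          exact Prod.ext rfl (by simp [h0'])
      · cases b
        · refine ⟨⟨(F, W₁), hF, hW₁, hWu₁, hm₁⟩, ?_⟩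
          simp only [hfdef]
          refine Prod.ext rfl ?_
          simp only [decide_eq_false_iff_not]
          exact fun hc => Finset.disjoint_left.mp hdisjW hc h0'
        · refine ⟨⟨(F, W₂), hF, hW₂, hWu₂, hm₂⟩, ?_⟩
          simp only [hfdef]
          exact Prod.ext rfl (by simp [h0'])
  rw [Nat.card_eq_of_bijective f hbij, Nat.card_prod]
  rw [Nat.card_eq_fintype_card (α := Bool), Fintype.card_bool]
  ring

/-- assembling two splitting families into an assembly family with a marked child -/
lemma top_insert (hn : 3 ≤ n) {s : Fin n} {j : ℕ} (hj1 : 1 ≤ j) (hjn : j < n)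
    {F₁ F₂ : Finset (Finset (Fin n))}
    (h₁ : SplitFam s j F₁) (h₂ : SplitFam (s + (j : Fin n)) (n - j) F₂) :
    IsAssemblyFamily (SimpleGraph.cycleGraph n) (insert Finset.univ (F₁ ∪ F₂)) ∧
    arc s j ∈ insert Finset.univ (F₁ ∪ F₂) ∧ arc s j ≠ Finset.univ ∧
    (∀ X ∈ insert Finset.univ (F₁ ∪ F₂), arc s j ⊆ X →
      X = arc s j ∨ X = Finset.univ) := by
  classical
  have hsf := splitfam_insert hn hj1 hjn le_rfl h₁ h₂
  rw [arc_univ] at hsf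
  obtain ⟨sing, topF, hne, hsub, lam, hsp, hcard⟩ := hsf
  rw [arc_univ] at topF
  have sing' : ∀ v : Fin n, ({v} : Finset (Fin n)) ∈ insert Finset.univ (F₁ ∪ F₂) := by
    intro v
    exact sing v (by rw [arc_univ]; exact Finset.mem_univ v)
  have hasm : IsAssemblyFamily (SimpleGraph.cycleGraph n) (insert Finset.univ (F₁ ∪ F₂)) := by
    refine ⟨sing', topF, hne, lam, hsp, ?_⟩
    rw [hcard, Fintype.card_fin]
  have hmem : arc s j ∈ insert Finset.univ (F₁ ∪ F₂) :=
    Finset.mem_insert_of_mem (Finset.mem_union_left _ h₁.2.1)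
  have hnu : arc s j ≠ Finset.univ := by
    intro hc
    have := congrArg Finset.card hc
    rw [card_arc (by omega), Finset.card_univ, Fintype.card_fin] at this
    omega
  refine ⟨hasm, hmem, hnu, ?_⟩
  intro X hX hsX
  rcases Finset.mem_insert.mp hX with rfl | hX
  · exact Or.inr rfl
  rcases Finset.mem_union.mp hX with h | h
  · exact Or.inl (Finset.Subset.antisymm (h₁.2.2.2.1 X h) hsX)
  · exfalso
    have hs : s ∈ arc (s + (j : Fin n)) (n - j) :=
      h₂.2.2.2.1 X h (hsX (mem_arc_self (by omega)))
    obtain ⟨i, hi, hieq⟩ := mem_arc.mp hs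
    rw [add_assoc, ← Nat.cast_add] at hieq
    exact add_natCast_ne (by omega) (by omega) hieq

lemma card_pairs_val (hn : 3 ≤ n) :
    Nat.card {p : Finset (Finset (Fin n)) × Finset (Fin n) //
      IsAssemblyFamily (SimpleGraph.cycleGraph n) p.1 ∧ p.2 ∈ p.1 ∧ p.2 ≠ Finset.univ ∧
      (∀ X ∈ p.1, p.2 ⊆ X → X = p.2 ∨ X = Finset.univ)} = n * catalan (n - 1) := by
  classical
  set g : (Σ s : Fin n, Σ j : {j : ℕ // j ∈ Finset.Ico 1 n},
      {F : Finset (Finset (Fin n)) // SplitFam s j.1 F} ×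
      {F : Finset (Finset (Fin n)) // SplitFam (s + (j.1 : Fin n)) (n - j.1) F}) →
      {p : Finset (Finset (Fin n)) × Finset (Fin n) //
      IsAssemblyFamily (SimpleGraph.cycleGraph n) p.1 ∧ p.2 ∈ p.1 ∧ p.2 ≠ Finset.univ ∧
      (∀ X ∈ p.1, p.2 ⊆ X → X = p.2 ∨ X = Finset.univ)} :=
    fun x => ⟨(insert Finset.univ (x.2.2.1.1 ∪ x.2.2.2.1), arc x.1 x.2.1.1), by
      obtain ⟨hj1, hjn⟩ := Finset.mem_Ico.mp x.2.1.2
      obtain ⟨hasm, hmem, hnu, hmax⟩ := top_insert hn hj1 hjn x.2.2.1.2 x.2.2.2.2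
      exact ⟨hasm, hmem, hnu, hmax⟩⟩ with hgdef
  have hbij : Function.Bijective g := by
    constructor
    · rintro ⟨s, ⟨j, hj⟩, ⟨F₁, hF₁⟩, ⟨F₂, hF₂⟩⟩ ⟨s', ⟨j', hj'⟩, ⟨F₁', hF₁'⟩, ⟨F₂', hF₂'⟩⟩ h
      simp only [hgdef, Subtype.mk.injEq, Prod.mk.injEq] at h
      obtain ⟨h1, h2⟩ := h
      obtain ⟨hj1, hjn⟩ := Finset.mem_Ico.mp hj
      obtain ⟨hj'1, hj'n⟩ := Finset.mem_Ico.mp hj'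
      have hjj : j = j' := by
        have := congrArg Finset.card h2
        rwa [card_arc (by omega), card_arc (by omega)] at this
      subst hjj
      have hss : s = s' := arc_start_unique hj1 hjn h2
      subst hss
      have hTa : ¬ (Finset.univ : Finset (Fin n)) ⊆ arc s j := by
        intro hc
        have := Finset.card_le_card hc
        rw [Finset.card_univ, Fintype.card_fin, card_arc (by omega)] at this
        omega
      have hTb : ¬ (Finset.univ : Finset (Fin n)) ⊆ arc (s + (j : Fin n)) (n - j) := by
        intro hc
        have := Finset.card_le_card hc
        rw [Finset.card_univ, Fintype.card_fin, card_arc (by omega)] at this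
        omega
      have hdarc := arc_disjoint (s := s) (le_of_lt hjn) le_rfl
      have e1 : F₁ = F₁' := by
        have r1 := filter_recover hTa hF₁.2.2.2.1 hF₂.2.2.1 hF₂.2.2.2.1 hdarc
        have r2 := filter_recover hTa hF₁'.2.2.2.1 hF₂'.2.2.1 hF₂'.2.2.2.1 hdarc
        rw [← r1, ← r2, h1]
      have e2 : F₂ = F₂' := by
        have r1 := filter_recover hTb hF₂.2.2.2.1 hF₁.2.2.1 hF₁.2.2.2.1 hdarc.symm
        have r2 := filter_recover hTb hF₂'.2.2.2.1 hF₁'.2.2.1 hF₁'.2.2.2.1 hdarc.symm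
        rw [← r1, ← r2]
        rw [Finset.union_comm F₂ F₁, Finset.union_comm F₂' F₁', h1]
      subst e1
      subst e2
      rfl
    · rintro ⟨⟨F, U⟩, hF, hU, hUne, hUmax⟩
      obtain ⟨t, a, ha1, han, ht, hs₁, hs₂, hpart⟩ := decompTop hn hF hU hUne hUmax
      refine ⟨⟨t, ⟨a, Finset.mem_Ico.mpr ⟨ha1, han⟩⟩, ⟨_, hs₁⟩, ⟨_, hs₂⟩⟩, ?_⟩
      apply Subtype.ext
      exact Prod.ext hpart.symm ht.symm
  rw [← Nat.card_eq_of_bijective g hbij]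
  rw [Nat.card_eq_fintype_card, Fintype.card_sigma]
  have hterm : ∀ s : Fin n, ∑ j : {j : ℕ // j ∈ Finset.Ico 1 n},
      Fintype.card ({F : Finset (Finset (Fin n)) // SplitFam s j.1 F} ×
        {F : Finset (Finset (Fin n)) // SplitFam (s + (j.1 : Fin n)) (n - j.1) F})
      = catalan (n - 1) := by
    intro s
    have hsummand : ∀ j : {j : ℕ // j ∈ Finset.Ico 1 n},
        Fintype.card ({F : Finset (Finset (Fin n)) // SplitFam s j.1 F} ×
          {F : Finset (Finset (Fin n)) // SplitFam (s + (j.1 : Fin n)) (n - j.1) F})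
        = catalan (j.1 - 1) * catalan (n - j.1 - 1) := by
      rintro ⟨j, hj⟩
      obtain ⟨hj1, hjn⟩ := Finset.mem_Ico.mp hj
      rw [Fintype.card_prod, ← Nat.card_eq_fintype_card, ← Nat.card_eq_fintype_card,
        card_splitfam hn j hj1 hjn s, card_splitfam hn (n - j) (by omega) (by omega) _]
    rw [Finset.sum_congr rfl (fun j _ => hsummand j)]
    rw [Finset.sum_coe_sort (Finset.Ico 1 n) (fun m => catalan (m - 1) * catalan (n - m - 1))]
    exact cat_conv (by omega)
  calc ∑ s : Fin n, Fintype.card (Σ j : {j : ℕ // j ∈ Finset.Ico 1 n},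
        {F : Finset (Finset (Fin n)) // SplitFam s j.1 F} ×
        {F : Finset (Finset (Fin n)) // SplitFam (s + (j.1 : Fin n)) (n - j.1) F})
      = ∑ s : Fin n, catalan (n - 1) := by
        refine Finset.sum_congr rfl ?_
        intro s _
        rw [Fintype.card_sigma]
        exact hterm s
    _ = n * catalan (n - 1) := by
        rw [Finset.sum_const, Finset.card_univ, Fintype.card_fin, smul_eq_mul]

end AssemblyAux

/-- The number of assembly trees of the cycle `Cₙ` is `(1/2) C(2n-2, n-1)`. -/
theorem assemblyTreeCount_cycle (n : ℕ) (hn : 3 ≤ n) :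
    2 * assemblyTreeCount (SimpleGraph.cycleGraph n) = (2 * n - 2).choose (n - 1) := by
  haveI : NeZero n := ⟨by omega⟩
  have h1 := AssemblyAux.card_pairs_eq (n := n) hn
  have h2 := AssemblyAux.card_pairs_val (n := n) hn
  have h3 : 2 * assemblyTreeCount (SimpleGraph.cycleGraph n) = n * catalan (n - 1) := by
    unfold assemblyTreeCount
    omega
  rw [h3]
  have h4 : n * catalan (n - 1) = Nat.centralBinom (n - 1) := by
    have := succ_mul_catalan_eq_centralBinom (n - 1)
    rwa [show n - 1 + 1 = n by omega] at this
  rw [h4, Nat.centralBinom_eq_two_mul_choose]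
  congr 1
  omega
end
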